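/- arXiv:2508.02457 — 8 statements merged into one kernel-verified Lean document; each statement's English description precedes it below -/
import Mathlib

section
/- Let k, n be natural numbers, let e : Fin k → ℤ, and let β : Fin n → ℝ with β j > 0 for every j. Then ∏_{i : Fin k} ( ∑_{j : Fin n} (β j)^(e i) ) = ∑_p ∑_φ ∏_{q ∈ p.parts} (β (φ q))^(∑_{i ∈ q} e i), where the outer sum runs over all finpartitions p of the full finset of Fin k, the inner sum runs over all injective functions φ from the set of parts of p to Fin n, and all powers are integer powers (zpow). -/
open Finset

private lemma zpow_finsum {ι : Type*} {a : ℝ} (ha : a ≠ 0) (s : Finset ι) (f : ι → ℤ) :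
    a ^ (∑ i ∈ s, f i) = ∏ i ∈ s, a ^ f i := by
  induction s using Finset.cons_induction with
  | empty => simp
  | cons i s hi ih => rw [Finset.sum_cons, Finset.prod_cons, zpow_add₀ ha, ih]

private lemma parts_eq_image_part {α : Type*} [DecidableEq α] [Fintype α]
    (P : Finpartition (univ : Finset α)) : P.parts = univ.image P.part := by
  ext q
  simp only [mem_image, mem_univ, true_and]
  constructor
  · intro hq
    obtain ⟨x, -, hx⟩ := P.part_surjOn hq
    exact ⟨x, hx⟩
  · rintro ⟨a, rfl⟩
    exact P.part_mem.2 (mem_univ a)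

theorem product_of_power_sums_eq_sum_over_finpartitions
    (k n : ℕ) (e : Fin k → ℤ) (β : Fin n → ℝ) (hβ : ∀ j, 0 < β j) :
    ∏ i : Fin k, (∑ j : Fin n, β j ^ e i) =
      ∑ p : Finpartition (Finset.univ : Finset (Fin k)),
        ∑ φ ∈ Finset.univ.filter (fun φ : ↥p.parts → Fin n => Function.Injective φ),
          ∏ q ∈ p.parts.attach, β (φ q) ^ (∑ i ∈ (q : Finset (Fin k)), e i) := by
  classical
  rw [Finset.prod_univ_sum (fun _ => (univ : Finset (Fin n))) (fun i j => β j ^ e i)]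
  rw [Fintype.piFinset_univ]
  set P : (Fin k → Fin n) → Finpartition (univ : Finset (Fin k)) :=
    fun f => Finpartition.ofSetoid (Setoid.ker f) with hP
  have hmem : ∀ (f : Fin k → Fin n) (a b : Fin k), b ∈ (P f).part a ↔ f a = f b := by
    intro f a b
    exact Finpartition.mem_part_ofSetoid_iff_rel
  rw [← Finset.sum_fiberwise univ P (fun f => ∏ i : Fin k, β (f i) ^ e i)]
  refine Finset.sum_congr rfl fun p _ => ?_
  have repm : ∀ q : ↥p.parts, ((p.nonempty_of_mem_parts q.2).choose) ∈ (q : Finset (Fin k)) :=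
    fun q => (p.nonempty_of_mem_parts q.2).choose_spec
  set rep : ↥p.parts → Fin k := fun q => (p.nonempty_of_mem_parts q.2).choose with hrep
  have const : ∀ f : Fin k → Fin n, P f = p → ∀ q : ↥p.parts, ∀ x ∈ (q : Finset (Fin k)),
      f x = f (rep q) := by
    intro f hf q x hx
    have hq : (q : Finset (Fin k)) ∈ (P f).parts := by rw [hf]; exact q.2
    have hpart : (P f).part x = q := Finpartition.part_eq_of_mem _ hq hx
    have : rep q ∈ (P f).part x := hpart ▸ repm q
    exact (hmem f x (rep q)).1 this
  refine Finset.sum_bij' (i := fun f _ => fun q => f (rep q))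
    (j := fun φ _ => fun x => φ ⟨p.part x, p.part_mem.2 (mem_univ x)⟩) ?_ ?_ ?_ ?_ ?_
  · -- i maps into injective functions
    intro f hf
    simp only [mem_filter, mem_univ, true_and] at hf ⊢
    intro q q' h
    have hq : (q : Finset (Fin k)) ∈ (P f).parts := by rw [hf]; exact q.2
    have hq' : ((q' : Finset (Fin k))) ∈ (P f).parts := by rw [hf]; exact q'.2
    have h1 : (P f).part (rep q) = q := Finpartition.part_eq_of_mem _ hq (repm q)
    have h2 : rep q' ∈ (P f).part (rep q) := (hmem f _ _).2 h
    have h3 : rep q' ∈ (q : Finset (Fin k)) := h1 ▸ h2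
    exact Subtype.ext ((P f).eq_of_mem_parts hq hq' h3 (repm q'))
  · -- j maps into the fiber over p
    intro φ hφ
    simp only [mem_filter, mem_univ, true_and] at hφ ⊢
    set f : Fin k → Fin n := fun x => φ ⟨p.part x, p.part_mem.2 (mem_univ x)⟩ with hfdef
    have hparts : ∀ a : Fin k, (P f).part a = p.part a := by
      intro a
      ext b
      rw [hmem f a b]
      constructor
      · intro h
        have h2 : p.part a = p.part b := congrArg Subtype.val (hφ h)
        exact (p.mem_part_iff_part_eq_part (mem_univ b) (mem_univ a)).2 h2.symm
      · intro hb
        have h2 : p.part b = p.part a :=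
          (p.mem_part_iff_part_eq_part (mem_univ b) (mem_univ a)).1 hb
        show φ ⟨p.part a, _⟩ = φ ⟨p.part b, _⟩
        congr 1
        exact Subtype.ext h2.symm
    apply Finpartition.ext
    rw [parts_eq_image_part (P f), parts_eq_image_part p]
    exact Finset.image_congr fun a _ => hparts a
  · -- left inverse
    intro f hf
    simp only [mem_filter, mem_univ, true_and] at hf
    funext x
    exact (const f hf ⟨p.part x, p.part_mem.2 (mem_univ x)⟩ x (p.mem_part (mem_univ x))).symm
  · -- right inverse
    intro φ _
    funext q
    show φ ⟨p.part (rep q), _⟩ = φ q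
    congr 1
    exact Subtype.ext (p.part_eq_of_mem q.2 (repm q))
  · -- summands agree
    intro f hf
    simp only [mem_filter, mem_univ, true_and] at hf
    calc ∏ i : Fin k, β (f i) ^ e i
        = ∏ x ∈ p.parts.biUnion id, β (f x) ^ e x := by rw [p.biUnion_parts]
      _ = ∏ t ∈ p.parts, ∏ x ∈ t, β (f x) ^ e x :=
          Finset.prod_biUnion p.supIndep.pairwiseDisjoint
      _ = ∏ q ∈ p.parts.attach, ∏ x ∈ (q : Finset (Fin k)), β (f x) ^ e x :=
          (Finset.prod_attach _ _).symm
      _ = ∏ q ∈ p.parts.attach, β (f (rep q)) ^ (∑ i ∈ (q : Finset (Fin k)), e i) := by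
          refine Finset.prod_congr rfl fun q _ => ?_
          rw [zpow_finsum (ne_of_gt (hβ _))]
          exact Finset.prod_congr rfl fun x hx => by rw [const f hf q x hx]
end

section
/- Let (Ω, P) be a probability space, let N : Ω → ℕ be measurable, and let Θ : ℕ → Ω → ℝ be a sequence of measurable functions with Θ j ω > 0 for all j and ω. Assume exchangeability: for every n ∈ ℕ and every permutation σ of Fin n, the pushforward of the restriction of P to the event {N = n} under ω ↦ (Θ (σ i) ω)_{i : Fin n} equals its pushforward under ω ↦ (Θ i ω)_{i : Fin n}. Fix k ∈ ℕ and g : Fin k → ℕ, and assume all integrands below are integrable. Then ∫_Ω ∏_{i : Fin k} ( ∑_{j < N ω} (Θ j ω)^(1 − g i) ) dP(ω) = ∑_p ∫_Ω Nat.descFactorial (N ω) (number of parts of p) · ∏_{q ∈ p.parts} (Θ (ι q) ω)^(∑_{i ∈ q} (1 − g i)) dP(ω), where the sum runs over all finpartitions p of the full finset of Fin k, ι is any fixed injective enumeration of the parts of p by the numbers 0, …, (number of parts of p) − 1, and all powers are integer powers (zpow). -/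
open MeasureTheory Finset

private lemma aux_prod_zpow {α : Type*} (a : ℝ) (ha : a ≠ 0) (s : Finset α) (e : α → ℤ) :
    ∏ i ∈ s, a ^ e i = a ^ (∑ i ∈ s, e i) := by
  classical
  induction s using Finset.cons_induction with
  | empty => simp
  | cons i s hi ih => rw [Finset.prod_cons, Finset.sum_cons, zpow_add₀ ha, ih]

private lemma aux_measurable_zpow (E : ℤ) : Measurable (fun x : ℝ => x ^ E) := by
  cases E with
  | ofNat m => simpa using measurable_id.pow_const m
  | negSucc m =>
      simp only [zpow_negSucc]
      exact ((measurable_id.pow_const (m + 1)) : Measurable fun x : ℝ => x ^ (m + 1)).inv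

private lemma aux_parts_ext {k : ℕ} (P Q : Finpartition (Finset.univ : Finset (Fin k)))
    (hPQ : ∀ i : Fin k, P.part i = Q.part i) : P = Q := by
  have : P.parts = Q.parts := by
    ext t
    constructor
    · intro ht
      obtain ⟨i, hi⟩ := P.nonempty_of_mem_parts ht
      rw [← P.part_eq_of_mem ht hi, hPQ]
      exact Q.part_mem.2 (mem_univ i)
    · intro ht
      obtain ⟨i, hi⟩ := Q.nonempty_of_mem_parts ht
      rw [← Q.part_eq_of_mem ht hi, ← hPQ]
      exact P.part_mem.2 (mem_univ i)
  exact Finpartition.ext this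

private lemma aux_comb (k n : ℕ) (a : ℕ → ℝ) (ha : ∀ j, a j ≠ 0) (e : Fin k → ℤ) :
    ∏ i : Fin k, ∑ j ∈ Finset.range n, a j ^ e i =
      ∑ p : Finpartition (Finset.univ : Finset (Fin k)),
        ∑ h : (↥p.parts ↪ Fin n),
          ∏ q ∈ p.parts.attach, a (h q : ℕ) ^ (∑ i ∈ (q : Finset (Fin k)), e i) := by
  classical
  have h1 : ∀ i : Fin k, ∑ j ∈ Finset.range n, a j ^ e i
      = ∑ j : Fin n, a (j : ℕ) ^ e i := fun i =>
    (Fin.sum_univ_eq_sum_range (fun j => a j ^ e i) n).symm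
  simp_rw [h1]
  rw [Finset.prod_univ_sum]
  rw [Fintype.piFinset_univ]
  set K : (Fin k → Fin n) → Finpartition (Finset.univ : Finset (Fin k)) :=
    fun x => Finpartition.ofSetoid (Setoid.ker x) with hK
  rw [← Finset.sum_fiberwise Finset.univ K (fun x => ∏ i : Fin k, a ((x i : ℕ)) ^ e i)]
  refine Finset.sum_congr rfl (fun p _ => ?_)
  set rep : ↥p.parts → Fin k := fun q => (p.nonempty_of_mem_parts q.2).choose with hrepdef
  have hrep : ∀ q : ↥p.parts, rep q ∈ (q : Finset (Fin k)) :=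
    fun q => (p.nonempty_of_mem_parts q.2).choose_spec
  have hpart : ∀ (x : Fin k → Fin n), K x = p → ∀ i i' : Fin k, (i' ∈ p.part i ↔ x i = x i') := by
    intro x hx i i'
    rw [← hx]
    exact Finpartition.mem_part_ofSetoid_iff_rel
  have hpartq : ∀ (q : ↥p.parts) {i : Fin k}, i ∈ (q : Finset (Fin k)) → p.part i = q :=
    fun q {i} hi => p.part_eq_of_mem q.2 hi
  have hFinj : ∀ (x : Fin k → Fin n), K x = p →
      Function.Injective (fun q : ↥p.parts => x (rep q)) := by
    intro x hx q1 q2 hq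
    have h2 : rep q2 ∈ p.part (rep q1) := (hpart x hx _ _).2 hq
    have e1 : p.part (rep q1) = (q1 : Finset (Fin k)) := hpartq q1 (hrep q1)
    exact Subtype.ext (p.eq_of_mem_parts q1.2 q2.2 (e1 ▸ h2) (hrep q2))
  refine Finset.sum_bij'
    (fun x hx => (⟨fun q => x (rep q), hFinj x (Finset.mem_filter.1 hx).2⟩ : ↥p.parts ↪ Fin n))
    (fun h _ => fun i : Fin k => h ⟨p.part i, p.part_mem.2 (mem_univ i)⟩)
    (fun x hx => Finset.mem_univ _)
    (fun h hh => ?_) (fun x hx => ?_) (fun h hh => ?_) (fun x hx => ?_)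
  · -- membership in fiber
    refine Finset.mem_filter.2 ⟨Finset.mem_univ _, ?_⟩
    apply aux_parts_ext
    intro i
    ext i'
    rw [Finpartition.mem_part_ofSetoid_iff_rel]
    show h ⟨p.part i, _⟩ = h ⟨p.part i', _⟩ ↔ _
    rw [h.injective.eq_iff, Subtype.mk.injEq,
      p.mem_part_iff_part_eq_part (Finset.mem_univ i') (Finset.mem_univ i)]
    exact eq_comm
  · -- left inverse
    have hx' := (Finset.mem_filter.1 hx).2
    funext i
    have hmem : rep ⟨p.part i, p.part_mem.2 (mem_univ i)⟩ ∈ p.part i :=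
      hrep ⟨p.part i, p.part_mem.2 (mem_univ i)⟩
    exact ((hpart x hx' i _).1 hmem).symm
  · -- right inverse
    apply Function.Embedding.ext
    intro q
    show h ⟨p.part (rep q), _⟩ = h q
    exact congrArg h (Subtype.ext (hpartq q (hrep q)))
  · -- values
    have hx' := (Finset.mem_filter.1 hx).2
    have hbu : (Finset.univ : Finset (Fin k)) = p.parts.biUnion id := p.biUnion_parts.symm
    rw [show ∏ i : Fin k, a ((x i : ℕ)) ^ e i
        = ∏ i ∈ p.parts.biUnion id, a ((x i : ℕ)) ^ e i from by rw [← hbu],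
      Finset.prod_biUnion p.supIndep.pairwiseDisjoint]
    simp only [id_eq]
    rw [← Finset.prod_attach p.parts (fun t => ∏ i ∈ t, a ((x i : ℕ)) ^ e i)]
    refine Finset.prod_congr rfl (fun q _ => ?_)
    have hconst : ∀ i ∈ (q : Finset (Fin k)), a ((x i : ℕ)) ^ e i
        = a ((x (rep q) : ℕ)) ^ e i := by
      intro i hi
      have hxeq : x i = x (rep q) := (hpart x hx' i (rep q)).1 (by
        rw [hpartq q hi]; exact hrep q)
      rw [hxeq]
    rw [Finset.prod_congr rfl hconst, aux_prod_zpow _ (ha _)]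
    rfl

private lemma aux_perm_exists {n : ℕ} {β : Type*} [Fintype β] (u v : β ↪ Fin n) :
    ∃ σ : Equiv.Perm (Fin n), ∀ q, σ (v q) = u q := by
  classical
  let eqv : {x : Fin n // x ∈ Set.range ⇑v} ≃ {x : Fin n // x ∈ Set.range ⇑u} :=
    (Equiv.ofInjective ⇑v v.injective).symm.trans (Equiv.ofInjective ⇑u u.injective)
  refine ⟨eqv.extendSubtype, fun q => ?_⟩
  have hmem : v q ∈ Set.range ⇑v := ⟨q, rfl⟩
  rw [Equiv.extendSubtype_apply_of_mem eqv (v q) hmem]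
  show ((Equiv.ofInjective ⇑u u.injective)
    ((Equiv.ofInjective ⇑v v.injective).symm ⟨v q, hmem⟩) : Fin n) = u q
  rw [show (⟨v q, hmem⟩ : {x : Fin n // x ∈ Set.range ⇑v})
      = (Equiv.ofInjective ⇑v v.injective) q from rfl]
  simp

private lemma aux_exchange {Ω : Type*} [MeasurableSpace Ω] {P : Measure Ω}
    {N : Ω → ℕ} {Θ : ℕ → Ω → ℝ} (hΘmeas : ∀ j, Measurable (Θ j))
    (hexch : ∀ (n : ℕ) (σ : Equiv.Perm (Fin n)),
      Measure.map (fun ω => fun i : Fin n => Θ (σ i : ℕ) ω) (P.restrict {ω | N ω = n}) =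
      Measure.map (fun ω => fun i : Fin n => Θ (i : ℕ) ω) (P.restrict {ω | N ω = n}))
    (n : ℕ) {β : Type*} [Fintype β] (u v : β ↪ Fin n) (E : β → ℤ) :
    (∫ ω in {ω | N ω = n}, ∏ q : β, Θ (u q : ℕ) ω ^ E q ∂P =
      ∫ ω in {ω | N ω = n}, ∏ q : β, Θ (v q : ℕ) ω ^ E q ∂P) ∧
    (Integrable (fun ω => ∏ q : β, Θ (v q : ℕ) ω ^ E q) (P.restrict {ω | N ω = n}) →
      Integrable (fun ω => ∏ q : β, Θ (u q : ℕ) ω ^ E q) (P.restrict {ω | N ω = n})) := by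
  classical
  obtain ⟨σ, hσ⟩ := aux_perm_exists u v
  set μ := P.restrict {ω | N ω = n} with hμ
  set G : (Fin n → ℝ) → ℝ := fun w => ∏ q : β, w (v q) ^ E q with hG
  have hGmeas : Measurable G := by
    apply Finset.measurable_prod
    intro q _
    exact (aux_measurable_zpow (E q)).comp (measurable_pi_apply (v q))
  have hV : Measurable (fun ω => fun i : Fin n => Θ (i : ℕ) ω) :=
    measurable_pi_lambda _ (fun i => hΘmeas i)
  have hVσ : Measurable (fun ω => fun i : Fin n => Θ (σ i : ℕ) ω) :=
    measurable_pi_lambda _ (fun i => hΘmeas _)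
  have hGVσ : (fun ω => ∏ q : β, Θ (u q : ℕ) ω ^ E q)
      = G ∘ (fun ω => fun i : Fin n => Θ (σ i : ℕ) ω) := by
    funext ω
    simp only [Function.comp_apply, hG]
    exact Finset.prod_congr rfl (fun q _ => by rw [hσ q])
  have hGV : (fun ω => ∏ q : β, Θ (v q : ℕ) ω ^ E q)
      = G ∘ (fun ω => fun i : Fin n => Θ (i : ℕ) ω) := rfl
  have e1 : ∫ ω, (∏ q : β, Θ (u q : ℕ) ω ^ E q) ∂μ
      = ∫ w, G w ∂(Measure.map (fun ω => fun i : Fin n => Θ (σ i : ℕ) ω) μ) := by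
    rw [hGVσ]
    exact (integral_map hVσ.aemeasurable hGmeas.aestronglyMeasurable).symm
  have e2 : ∫ ω, (∏ q : β, Θ (v q : ℕ) ω ^ E q) ∂μ
      = ∫ w, G w ∂(Measure.map (fun ω => fun i : Fin n => Θ (i : ℕ) ω) μ) := by
    rw [hGV]
    exact (integral_map hV.aemeasurable hGmeas.aestronglyMeasurable).symm
  constructor
  · rw [e1, e2, hμ, hexch n σ]
  · intro hint
    rw [hGVσ]
    rw [hGV] at hint
    have h1 : Integrable G (Measure.map (fun ω => fun i : Fin n => Θ (i : ℕ) ω) μ) :=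
      (integrable_map_measure hGmeas.aestronglyMeasurable hV.aemeasurable).2 hint
    rw [← hexch n σ] at h1
    exact (integrable_map_measure hGmeas.aestronglyMeasurable hVσ.aemeasurable).1 h1

theorem abelian_condition_for_exchangeable_ensemble
    {Ω : Type*} [MeasurableSpace Ω] (P : Measure Ω) [IsProbabilityMeasure P]
    (N : Ω → ℕ) (hN : Measurable N)
    (Θ : ℕ → Ω → ℝ) (hΘmeas : ∀ j, Measurable (Θ j)) (hΘpos : ∀ j ω, 0 < Θ j ω)
    (hexch : ∀ (n : ℕ) (σ : Equiv.Perm (Fin n)),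
      Measure.map (fun ω => fun i : Fin n => Θ (σ i : ℕ) ω) (P.restrict {ω | N ω = n}) =
      Measure.map (fun ω => fun i : Fin n => Θ (i : ℕ) ω) (P.restrict {ω | N ω = n}))
    (k : ℕ) (g : Fin k → ℕ)
    (ι : (p : Finpartition (Finset.univ : Finset (Fin k))) → ↥p.parts → ℕ)
    (hι_inj : ∀ p, Function.Injective (ι p))
    (hι_lt : ∀ p q, ι p q < p.parts.card)
    (hInt₁ : Integrable
      (fun ω => ∏ i : Fin k, ∑ j ∈ Finset.range (N ω), Θ j ω ^ ((1 : ℤ) - (g i : ℤ))) P)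
    (hInt₂ : ∀ p : Finpartition (Finset.univ : Finset (Fin k)),
      Integrable (fun ω => (Nat.descFactorial (N ω) p.parts.card : ℝ) *
        ∏ q ∈ p.parts.attach,
          Θ (ι p q) ω ^ (∑ i ∈ (q : Finset (Fin k)), ((1 : ℤ) - (g i : ℤ)))) P) :
    ∫ ω, (∏ i : Fin k, ∑ j ∈ Finset.range (N ω), Θ j ω ^ ((1 : ℤ) - (g i : ℤ))) ∂P =
      ∑ p : Finpartition (Finset.univ : Finset (Fin k)),
        ∫ ω, (Nat.descFactorial (N ω) p.parts.card : ℝ) *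
          ∏ q ∈ p.parts.attach,
            Θ (ι p q) ω ^ (∑ i ∈ (q : Finset (Fin k)), ((1 : ℤ) - (g i : ℤ))) ∂P := by
  classical
  set e : Fin k → ℤ := fun i => 1 - (g i : ℤ) with he
  set s : ℕ → Set Ω := fun n => {ω | N ω = n} with hs
  have hsm : ∀ n, MeasurableSet (s n) := fun n => hN (MeasurableSet.singleton n)
  have hsd : Pairwise (Function.onFun Disjoint s) := by
    intro m n hmn
    rw [Function.onFun, Set.disjoint_left]
    rintro ω h1 h2
    exact hmn ((show N ω = m from h1).symm.trans (show N ω = n from h2))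
  have hsu : (⋃ n, s n) = Set.univ := by
    ext ω; simp [hs]
  set T : (p : Finpartition (Finset.univ : Finset (Fin k))) → Ω → ℝ :=
    fun p ω => ∏ q ∈ p.parts.attach,
      Θ (ι p q) ω ^ (∑ i ∈ (q : Finset (Fin k)), e i) with hT
  set D : (p : Finpartition (Finset.univ : Finset (Fin k))) → Ω → ℝ :=
    fun p ω => (Nat.descFactorial (N ω) p.parts.card : ℝ) * T p ω with hD
  have hDint : ∀ p, Integrable (D p) P := fun p => hInt₂ p
  have hDcongr : ∀ n p, (D p) =ᵐ[P.restrict (s n)]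
      (fun ω => (Nat.descFactorial n p.parts.card : ℝ) * T p ω) := by
    intro n p
    filter_upwards [self_mem_ae_restrict (hsm n)] with ω hω
    rw [hD]
    simp only
    rw [show N ω = n from hω]
  have hTint : ∀ n p, p.parts.card ≤ n → Integrable (T p) (P.restrict (s n)) := by
    intro n p hmn
    have h1 : Integrable (fun ω => (Nat.descFactorial n p.parts.card : ℝ) * T p ω)
        (P.restrict (s n)) := ((hDint p).integrableOn).congr (hDcongr n p)
    have hC : (Nat.descFactorial n p.parts.card : ℝ) ≠ 0 := by
      simp only [ne_eq, Nat.cast_eq_zero, Nat.descFactorial_eq_zero_iff_lt, not_lt]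
      exact hmn
    have h2 := h1.const_mul ((Nat.descFactorial n p.parts.card : ℝ))⁻¹
    simpa [← mul_assoc, inv_mul_cancel₀ hC] using h2
  -- key per-n identity
  have key : ∀ n, ∫ ω in s n, (∏ i : Fin k, ∑ j ∈ Finset.range (N ω), Θ j ω ^ e i) ∂P
      = ∑ p : Finpartition (Finset.univ : Finset (Fin k)), ∫ ω in s n, D p ω ∂P := by
    intro n
    have hThint : ∀ (p : Finpartition (Finset.univ : Finset (Fin k)))
        (h : ↥p.parts ↪ Fin n),
        Integrable (fun ω => ∏ q ∈ p.parts.attach,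
          Θ ((h q : Fin n) : ℕ) ω ^ (∑ i ∈ (q : Finset (Fin k)), e i))
          (P.restrict (s n)) := by
      intro p h
      have hmn : p.parts.card ≤ n := by
        have := Fintype.card_le_of_embedding h
        simpa [Fintype.card_coe] using this
      let v : ↥p.parts ↪ Fin n := ⟨fun q => ⟨ι p q, lt_of_lt_of_le (hι_lt p q) hmn⟩,
        fun q q' hqq' => hι_inj p (by simpa [Fin.ext_iff] using hqq')⟩
      have hveq : (fun ω => ∏ q : ↥p.parts,
          Θ ((v q : Fin n) : ℕ) ω ^ (∑ i ∈ (q : Finset (Fin k)), e i)) = T p := by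
        funext ω
        rw [hT]
        simp only
        rw [← Finset.univ_eq_attach]
        rfl
      have hint := (aux_exchange hΘmeas hexch n h v
        (fun q : ↥p.parts => ∑ i ∈ (q : Finset (Fin k)), e i)).2
        (by rw [hveq]; exact hTint n p hmn)
      simpa [Finset.univ_eq_attach] using hint
    have step1 : ∫ ω in s n, (∏ i : Fin k, ∑ j ∈ Finset.range (N ω), Θ j ω ^ e i) ∂P
        = ∫ ω in s n, (∑ p : Finpartition (Finset.univ : Finset (Fin k)),
            ∑ h : (↥p.parts ↪ Fin n), ∏ q ∈ p.parts.attach,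
              Θ ((h q : Fin n) : ℕ) ω ^ (∑ i ∈ (q : Finset (Fin k)), e i)) ∂P := by
      refine setIntegral_congr_fun (hsm n) (fun ω hω => ?_)
      rw [show N ω = n from hω]
      exact aux_comb k n (fun j => Θ j ω) (fun j => (hΘpos j ω).ne') e
    have step2 : ∫ ω in s n, (∑ p : Finpartition (Finset.univ : Finset (Fin k)),
          ∑ h : (↥p.parts ↪ Fin n), ∏ q ∈ p.parts.attach,
            Θ ((h q : Fin n) : ℕ) ω ^ (∑ i ∈ (q : Finset (Fin k)), e i)) ∂P
        = ∑ p : Finpartition (Finset.univ : Finset (Fin k)),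
            ∑ h : (↥p.parts ↪ Fin n), ∫ ω in s n, (∏ q ∈ p.parts.attach,
              Θ ((h q : Fin n) : ℕ) ω ^ (∑ i ∈ (q : Finset (Fin k)), e i)) ∂P := by
      rw [integral_finset_sum _ (fun p _ => integrable_finset_sum _ (fun h _ => hThint p h))]
      exact Finset.sum_congr rfl (fun p _ => integral_finset_sum _ (fun h _ => hThint p h))
    have step3 : ∀ (p : Finpartition (Finset.univ : Finset (Fin k)))
        (h : ↥p.parts ↪ Fin n),
        ∫ ω in s n, (∏ q ∈ p.parts.attach,
          Θ ((h q : Fin n) : ℕ) ω ^ (∑ i ∈ (q : Finset (Fin k)), e i)) ∂P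
        = ∫ ω in s n, T p ω ∂P := by
      intro p h
      have hmn : p.parts.card ≤ n := by
        have := Fintype.card_le_of_embedding h
        simpa [Fintype.card_coe] using this
      let v : ↥p.parts ↪ Fin n := ⟨fun q => ⟨ι p q, lt_of_lt_of_le (hι_lt p q) hmn⟩,
        fun q q' hqq' => hι_inj p (by simpa [Fin.ext_iff] using hqq')⟩
      have heq := (aux_exchange hΘmeas hexch n h v
        (fun q : ↥p.parts => ∑ i ∈ (q : Finset (Fin k)), e i)).1
      have hveq : ∀ ω, (∏ q : ↥p.parts,
          Θ ((v q : Fin n) : ℕ) ω ^ (∑ i ∈ (q : Finset (Fin k)), e i)) = T p ω := by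
        intro ω
        rw [hT]
        simp only
        rw [← Finset.univ_eq_attach]
        rfl
      calc ∫ ω in s n, (∏ q ∈ p.parts.attach,
            Θ ((h q : Fin n) : ℕ) ω ^ (∑ i ∈ (q : Finset (Fin k)), e i)) ∂P
          = ∫ ω in s n, (∏ q : ↥p.parts,
            Θ ((h q : Fin n) : ℕ) ω ^ (∑ i ∈ (q : Finset (Fin k)), e i)) ∂P := by
            simp_rw [Finset.univ_eq_attach]
        _ = ∫ ω in s n, (∏ q : ↥p.parts,
            Θ ((v q : Fin n) : ℕ) ω ^ (∑ i ∈ (q : Finset (Fin k)), e i)) ∂P := heq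
        _ = ∫ ω in s n, T p ω ∂P := by simp_rw [hveq]
    have step4 : ∀ p : Finpartition (Finset.univ : Finset (Fin k)),
        (∑ h : (↥p.parts ↪ Fin n), ∫ ω in s n, (∏ q ∈ p.parts.attach,
          Θ ((h q : Fin n) : ℕ) ω ^ (∑ i ∈ (q : Finset (Fin k)), e i)) ∂P)
        = (Nat.descFactorial n p.parts.card : ℝ) * ∫ ω in s n, T p ω ∂P := by
      intro p
      rw [Finset.sum_congr rfl (fun h _ => step3 p h), Finset.sum_const, card_univ,
        Fintype.card_embedding_eq, Fintype.card_coe, Fintype.card_fin, nsmul_eq_mul]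
    have step5 : ∀ p : Finpartition (Finset.univ : Finset (Fin k)),
        ∫ ω in s n, D p ω ∂P
        = (Nat.descFactorial n p.parts.card : ℝ) * ∫ ω in s n, T p ω ∂P := by
      intro p
      have h1 : ∫ ω in s n, D p ω ∂P
          = ∫ ω in s n, ((Nat.descFactorial n p.parts.card : ℝ) * T p ω) ∂P :=
        integral_congr_ae (hDcongr n p)
      rw [h1, integral_const_mul]
    rw [step1, step2, Finset.sum_congr rfl (fun p _ => step4 p),
      ← Finset.sum_congr rfl (fun p _ => step5 p)]
  -- assembly
  have hDsum : ∀ p : Finpartition (Finset.univ : Finset (Fin k)),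
      HasSum (fun n => ∫ ω in s n, D p ω ∂P) (∫ ω, D p ω ∂P) := by
    intro p
    have h1 : IntegrableOn (D p) (⋃ n, s n) P := by
      rw [hsu]
      exact integrableOn_univ.2 (hDint p)
    have h2 := hasSum_integral_iUnion hsm hsd h1
    rwa [hsu, Measure.restrict_univ] at h2
  have hFsum : HasSum
      (fun n => ∫ ω in s n, (∏ i : Fin k, ∑ j ∈ Finset.range (N ω), Θ j ω ^ e i) ∂P)
      (∫ ω, (∏ i : Fin k, ∑ j ∈ Finset.range (N ω), Θ j ω ^ e i) ∂P) := by
    have h1 : IntegrableOn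
        (fun ω => ∏ i : Fin k, ∑ j ∈ Finset.range (N ω), Θ j ω ^ e i) (⋃ n, s n) P := by
      rw [hsu]
      exact integrableOn_univ.2 hInt₁
    have h2 := hasSum_integral_iUnion hsm hsd h1
    rwa [hsu, Measure.restrict_univ] at h2
  calc ∫ ω, (∏ i : Fin k, ∑ j ∈ Finset.range (N ω), Θ j ω ^ e i) ∂P
      = ∑' n, ∫ ω in s n, (∏ i : Fin k, ∑ j ∈ Finset.range (N ω), Θ j ω ^ e i) ∂P :=
        hFsum.tsum_eq.symm
    _ = ∑' n, ∑ p : Finpartition (Finset.univ : Finset (Fin k)), ∫ ω in s n, D p ω ∂P :=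
        tsum_congr key
    _ = ∑ p : Finpartition (Finset.univ : Finset (Fin k)), ∑' n, ∫ ω in s n, D p ω ∂P :=
        Summable.tsum_finsetSum (fun p _ => (hDsum p).summable)
    _ = ∑ p : Finpartition (Finset.univ : Finset (Fin k)), ∫ ω, D p ω ∂P :=
        Finset.sum_congr rfl (fun p _ => (hDsum p).tsum_eq)
end

section
/- Let s be a finset in a type α with decidable equality. There is a bijection between (a) the set of pairs (q, ρ), where q is a finpartition of s and ρ is a finpartition of the finset q.parts (a finset in Finset α), and (b) the set of pairs (p, q), where p and q are finpartitions of s and q refines p. The bijection sends (q, ρ) to (p, q), where the parts of p are exactly the unions ⋃_{b ∈ B} b taken over the parts B of ρ. -/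
open Finset

namespace FusionAux

variable {α : Type*} [DecidableEq α] {s : Finset α}

lemma disjoint_sup_of_disjoint (q : Finpartition s) {B B' : Finset (Finset α)}
    (hB : B ⊆ q.parts) (hB' : B' ⊆ q.parts) (h : Disjoint B B') :
    Disjoint (B.sup id) (B'.sup id) := by
  rw [Finset.disjoint_sup_left]
  intro b hb
  rw [Finset.disjoint_sup_right]
  intro b' hb'
  exact q.disjoint (hB hb) (hB' hb')
    (fun e => Finset.disjoint_left.mp h hb (e ▸ hb'))

/-- Fusing the blocks of `q` along `ρ`. -/
def fuseP (q : Finpartition s) (ρ : Finpartition q.parts) : Finpartition s where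
  parts := ρ.parts.image fun B => B.sup id
  supIndep := by
    rw [Finset.supIndep_iff_pairwiseDisjoint]
    intro a ha b hb hab
    simp only [Finset.mem_coe, Finset.mem_image] at ha hb
    obtain ⟨B, hB, rfl⟩ := ha
    obtain ⟨B', hB', rfl⟩ := hb
    exact disjoint_sup_of_disjoint q (ρ.le hB) (ρ.le hB')
      (ρ.disjoint hB hB' (by rintro rfl; exact hab rfl))
  sup_parts := by
    rw [Finset.sup_image]
    have h1 : ρ.parts.biUnion id = q.parts := by
      rw [← Finset.sup_eq_biUnion, ρ.sup_parts]
    have h2 := Finset.sup_biUnion (f := (id : Finset α → Finset α)) ρ.parts id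
    rw [h1] at h2
    rw [show ((id : Finset α → Finset α) ∘ fun B => B.sup id) =
      (fun x : Finset (Finset α) => (id x).sup id) from rfl, ← h2, q.sup_parts]
  bot_notMem := by
    intro h
    simp only [Finset.bot_eq_empty, Finset.mem_image] at h
    obtain ⟨B, hB, hsup⟩ := h
    obtain ⟨b, hb⟩ := ρ.nonempty_of_mem_parts hB
    have hble : b ≤ B.sup id := Finset.le_sup (f := id) hb
    rw [hsup] at hble
    exact (q.nonempty_of_mem_parts (ρ.le hB hb)).ne_empty (Finset.subset_empty.mp hble)

lemma le_fuseP (q : Finpartition s) (ρ : Finpartition q.parts) : q ≤ fuseP q ρ := by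
  intro b hb
  rw [← ρ.sup_parts, Finset.mem_sup] at hb
  obtain ⟨B, hB, hbB⟩ := hb
  exact ⟨B.sup id, Finset.mem_image_of_mem _ hB, Finset.le_sup (f := id) hbB⟩

lemma eq_part_of_mem (p : Finpartition s) {a a' : Finset α} (ha : a ∈ p.parts)
    (ha' : a' ∈ p.parts) {x : α} (hx : x ∈ a) (hx' : x ∈ a') : a = a' := by
  by_contra hne
  exact Finset.disjoint_left.mp (p.disjoint ha ha' hne) hx hx'

lemma exists_block_subset (p q : Finpartition s) (h : q ≤ p) {a : Finset α}
    (ha : a ∈ p.parts) {x : α} (hx : x ∈ a) : ∃ b ∈ q.parts, x ∈ b ∧ b ⊆ a := by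
  obtain ⟨b, hb, hxb⟩ := q.exists_mem (p.le ha hx)
  obtain ⟨a', ha', hba'⟩ := h hb
  exact ⟨b, hb, hxb, (eq_part_of_mem p ha' ha (hba' hxb) hx) ▸ hba'⟩

lemma filter_sup (p q : Finpartition s) (h : q ≤ p) {a : Finset α} (ha : a ∈ p.parts) :
    (q.parts.filter (· ⊆ a)).sup id = a := by
  apply le_antisymm
  · exact Finset.sup_le fun b hb => (Finset.mem_filter.mp hb).2
  · intro x hx
    obtain ⟨b, hb, hxb, hba⟩ := exists_block_subset p q h ha hx
    exact Finset.mem_sup.mpr ⟨b, Finset.mem_filter.mpr ⟨hb, hba⟩, hxb⟩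

/-- The inverse: recover a partition of `q.parts` from a coarsening `p` of `q`. -/
def unfuseP (p q : Finpartition s) (h : q ≤ p) : Finpartition q.parts where
  parts := p.parts.image fun a => q.parts.filter (· ⊆ a)
  supIndep := by
    rw [Finset.supIndep_iff_pairwiseDisjoint]
    intro A hA A' hA' hne
    simp only [Finset.mem_coe, Finset.mem_image] at hA hA'
    obtain ⟨a, ha, rfl⟩ := hA
    obtain ⟨a', ha', rfl⟩ := hA'
    have hane : a ≠ a' := by rintro rfl; exact hne rfl
    rw [Function.onFun, Finset.disjoint_left]
    intro b hb hb'
    simp only [id, Finset.mem_filter] at hb hb'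
    obtain ⟨x, hx⟩ := q.nonempty_of_mem_parts hb.1
    exact Finset.disjoint_left.mp (p.disjoint ha ha' hane) (hb.2 hx) (hb'.2 hx)
  sup_parts := by
    apply le_antisymm
    · rw [Finset.sup_image]
      exact Finset.sup_le fun a _ => Finset.filter_subset _ _
    · intro b hb
      obtain ⟨a, ha, hba⟩ := h hb
      exact Finset.mem_sup.mpr ⟨q.parts.filter (· ⊆ a),
        Finset.mem_image_of_mem _ ha, Finset.mem_filter.mpr ⟨hb, hba⟩⟩
  bot_notMem := by
    intro hmem
    simp only [Finset.bot_eq_empty, Finset.mem_image] at hmem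
    obtain ⟨a, ha, hfa⟩ := hmem
    obtain ⟨x, hx⟩ := p.nonempty_of_mem_parts ha
    obtain ⟨b, hb, _, hba⟩ := exists_block_subset p q h ha hx
    exact Finset.notMem_empty b (hfa ▸ Finset.mem_filter.mpr ⟨hb, hba⟩)

lemma filter_fuse (q : Finpartition s) (ρ : Finpartition q.parts) {B : Finset (Finset α)}
    (hB : B ∈ ρ.parts) : q.parts.filter (· ⊆ B.sup id) = B := by
  ext b
  simp only [Finset.mem_filter]
  constructor
  · rintro ⟨hb, hbs⟩
    rw [← ρ.sup_parts, Finset.mem_sup] at hb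
    obtain ⟨B', hB', hbB'⟩ := hb
    by_cases hBB : B' = B
    · exact hBB ▸ hbB'
    · exfalso
      have hd := disjoint_sup_of_disjoint q (ρ.le hB') (ρ.le hB) (ρ.disjoint hB' hB hBB)
      obtain ⟨x, hx⟩ := q.nonempty_of_mem_parts (ρ.le hB' hbB')
      exact Finset.disjoint_left.mp hd (Finset.mem_sup.mpr ⟨b, hbB', hx⟩) (hbs hx)
  · intro hbB
    exact ⟨ρ.le hB hbB, Finset.le_sup (f := id) hbB⟩

end FusionAux

theorem fusion_bijection
    {α : Type*} [DecidableEq α] (s : Finset α) :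
    ∃ E : (Σ q : Finpartition s, Finpartition q.parts) ≃
          {pq : Finpartition s × Finpartition s // pq.2 ≤ pq.1},
      ∀ (q : Finpartition s) (ρ : Finpartition q.parts),
        ((E ⟨q, ρ⟩ : {pq : Finpartition s × Finpartition s // pq.2 ≤ pq.1}) : _).1.2 = q ∧
        ((E ⟨q, ρ⟩ : {pq : Finpartition s × Finpartition s // pq.2 ≤ pq.1}) : _).1.1.parts =
          ρ.parts.image (fun B => B.sup id) := by
  classical
  refine ⟨⟨fun x => ⟨(FusionAux.fuseP x.1 x.2, x.1), FusionAux.le_fuseP x.1 x.2⟩,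
    fun y => ⟨y.1.2, FusionAux.unfuseP y.1.1 y.1.2 y.2⟩, ?_, ?_⟩, fun q ρ => ⟨rfl, rfl⟩⟩
  · rintro ⟨q, ρ⟩
    refine Sigma.ext rfl (heq_of_eq (Finpartition.ext ?_))
    show (FusionAux.fuseP q ρ).parts.image _ = ρ.parts
    rw [show (FusionAux.fuseP q ρ).parts = ρ.parts.image (fun B => B.sup id) from rfl,
      Finset.image_image]
    calc ρ.parts.image ((fun a => q.parts.filter (· ⊆ a)) ∘ fun B => B.sup id)
        = ρ.parts.image id := Finset.image_congr fun B hB => FusionAux.filter_fuse q ρ hB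
      _ = ρ.parts := Finset.image_id
  · rintro ⟨⟨p, q⟩, h⟩
    refine Subtype.ext (Prod.ext (Finpartition.ext ?_) rfl)
    show (FusionAux.unfuseP p q h).parts.image (fun B => B.sup id) = p.parts
    rw [show (FusionAux.unfuseP p q h).parts = p.parts.image (fun a => q.parts.filter (· ⊆ a))
      from rfl, Finset.image_image]
    calc p.parts.image ((fun B => B.sup id) ∘ fun a => q.parts.filter (· ⊆ a))
        = p.parts.image id := Finset.image_congr fun a ha => FusionAux.filter_sup p q h ha
      _ = p.parts := Finset.image_id
end

section
/- Let b : ℕ → ℝ with b 0 = 0 and let c be its exponential coefficient sequence, with c′ its extension to ℤ vanishing on negative integers. For k, n ∈ ℕ and m : Fin k → ℕ define f_k(n, m) := (1 / Nat.descFactorial n k) · ∑_p c′(n − ∑_{q ∈ p.parts} v_q) · ∏_{q ∈ p.parts} δ_q · (b v_q) · Nat.descFactorial v_q (q.card), where the sum runs over all finpartitions p of the full finset of Fin k, v_q denotes the value of m at the minimal element of the part q, and δ_q := 1 if m is constant on q and 0 otherwise (the subtraction n − ∑ v_q is taken in ℤ). Then for all k, n ∈ ℕ with n ≥ k + 1 and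 every m : Fin k → ℕ, ∑_{m′ ∈ ℕ} f_{k+1}(n, m⌢m′) = f_k(n, m), where m⌢m′ : Fin (k+1) → ℕ extends m by the value m′ in the last coordinate; only finitely many terms of the sum are nonzero (all terms with m′ > n vanish). -/
open Finset

/-- The proposed joint density `f_k(n, m)` of `(N, θ₁⁻¹, …, θ_k⁻¹)` (up to the overall
normalization `e^{-x₀}`): for a finpartition `p` of `Fin k`, each part `q` contributes
`δ_q · b(v_q) · descFactorial v_q |q|` where `v_q` is the value of `m` at the minimal
element of `q` and `δ_q` is `1` iff `m` is constant on `q`. -/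
noncomputable def partDensity (b : ℕ → ℝ) (c' : ℤ → ℝ) (k n : ℕ) (m : Fin k → ℕ) : ℝ :=
  (1 / (Nat.descFactorial n k : ℝ)) *
    ∑ p : Finpartition (Finset.univ : Finset (Fin k)),
      c' ((n : ℤ) - ∑ q ∈ p.parts.attach,
            (m ((q : Finset (Fin k)).min' (p.nonempty_of_mem_parts q.2)) : ℤ)) *
        ∏ q ∈ p.parts.attach,
          (if ∀ i ∈ (q : Finset (Fin k)), ∀ j ∈ (q : Finset (Fin k)), m i = m j
              then (1 : ℝ) else 0) *
            b (m ((q : Finset (Fin k)).min' (p.nonempty_of_mem_parts q.2))) *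
            (Nat.descFactorial (m ((q : Finset (Fin k)).min' (p.nonempty_of_mem_parts q.2)))
              (q : Finset (Fin k)).card : ℝ)


namespace MCaux
variable {k : ℕ}

/-- value of `m` at the min of `q` (junk `0` if `q = ∅`). -/
def vOf {k : ℕ} (m : Fin k → ℕ) (q : Finset (Fin k)) : ℕ :=
  if h : q.Nonempty then m (q.min' h) else 0

noncomputable def factor (b : ℕ → ℝ) {k : ℕ} (m : Fin k → ℕ) (q : Finset (Fin k)) : ℝ :=
  (if ∀ i ∈ q, ∀ j ∈ q, m i = m j then (1 : ℝ) else 0) * b (vOf m q) *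
    (Nat.descFactorial (vOf m q) q.card : ℝ)

lemma vOf_eq (m : Fin k → ℕ) (q : Finset (Fin k)) (h : q.Nonempty) :
    vOf m q = m (q.min' h) := dif_pos h

lemma partDensity_eq (b : ℕ → ℝ) (c' : ℤ → ℝ) (k n : ℕ) (m : Fin k → ℕ) :
    partDensity b c' k n m = (1 / (Nat.descFactorial n k : ℝ)) *
      ∑ p : Finpartition (Finset.univ : Finset (Fin k)),
        c' ((n : ℤ) - ∑ q ∈ p.parts, (vOf m q : ℤ)) * ∏ q ∈ p.parts, factor b m q := by
  unfold partDensity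
  congr 1
  refine Finset.sum_congr rfl fun p _ => ?_
  have h1 : ∑ q ∈ p.parts.attach,
      (m ((q : Finset (Fin k)).min' (p.nonempty_of_mem_parts q.2)) : ℤ)
      = ∑ q ∈ p.parts, (vOf m q : ℤ) := by
    rw [← Finset.sum_attach p.parts (fun q => (vOf m q : ℤ))]
    refine Finset.sum_congr rfl fun q _ => ?_
    rw [vOf_eq m q (p.nonempty_of_mem_parts q.2)]
  have h2 : (∏ q ∈ p.parts.attach,
      (if ∀ i ∈ (q : Finset (Fin k)), ∀ j ∈ (q : Finset (Fin k)), m i = m j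
          then (1 : ℝ) else 0) *
        b (m ((q : Finset (Fin k)).min' (p.nonempty_of_mem_parts q.2))) *
        (Nat.descFactorial (m ((q : Finset (Fin k)).min' (p.nonempty_of_mem_parts q.2)))
          (q : Finset (Fin k)).card : ℝ))
      = ∏ q ∈ p.parts, factor b m q := by
    rw [← Finset.prod_attach p.parts (fun q => factor b m q)]
    refine Finset.prod_congr rfl fun q _ => ?_
    rw [factor, vOf_eq m q (p.nonempty_of_mem_parts q.2)]
  rw [h1, h2]

end MCaux

namespace MCaux
variable {k : ℕ}

@[simp] lemma castSuccEmb_apply (j : Fin k) : Fin.castSuccEmb j = j.castSucc := rfl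

lemma last_not_mem_map (r : Finset (Fin k)) : Fin.last k ∉ r.map Fin.castSuccEmb := by
  simp only [Finset.mem_map, castSuccEmb_apply]
  rintro ⟨j, -, hj⟩
  exact absurd hj (Fin.castSucc_lt_last j).ne

def upParts (P : Finset (Finset (Fin k))) (t : Finset (Fin k)) : Finset (Finset (Fin (k + 1))) :=
  insert (insert (Fin.last k) (t.map Fin.castSuccEmb))
    ((P.erase t).image fun r => r.map Fin.castSuccEmb)

lemma special_not_mem_image (P : Finset (Finset (Fin k))) (t : Finset (Fin k)) :
    insert (Fin.last k) (t.map Fin.castSuccEmb) ∉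
      (P.erase t).image fun r => r.map Fin.castSuccEmb := by
  simp only [Finset.mem_image]
  rintro ⟨r, -, hr⟩
  exact last_not_mem_map r (hr ▸ Finset.mem_insert_self _ _)

noncomputable def dn (s : Finset (Fin (k + 1))) : Finset (Fin k) :=
  s.preimage Fin.castSucc ((Fin.castSucc_injective k).injOn)

@[simp] lemma mem_dn {j : Fin k} {s : Finset (Fin (k + 1))} : j ∈ dn s ↔ j.castSucc ∈ s :=
  Finset.mem_preimage

@[simp] lemma dn_map (r : Finset (Fin k)) : dn (r.map Fin.castSuccEmb) = r := by
  ext j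
  rw [mem_dn]
  constructor
  · intro h
    obtain ⟨a, ha, hae⟩ := Finset.mem_map.1 h
    rwa [← Fin.castSucc_injective k hae]
  · intro hj
    exact Finset.mem_map_of_mem _ hj

lemma dn_insert_last (t : Finset (Fin k)) :
    dn (insert (Fin.last k) (t.map Fin.castSuccEmb)) = t := by
  have h0 : dn {Fin.last k} = (∅ : Finset (Fin k)) := by
    ext j
    rw [mem_dn, Finset.mem_singleton]
    simp [(Fin.castSucc_lt_last j).ne]
  have : dn (insert (Fin.last k) (t.map Fin.castSuccEmb))
      = dn {Fin.last k} ∪ dn (t.map Fin.castSuccEmb) := by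
    ext j; simp only [mem_dn, Finset.mem_union, Finset.mem_insert, Finset.mem_singleton]
  rw [this, h0, dn_map, Finset.empty_union]

lemma map_dn {s : Finset (Fin (k + 1))} (h : Fin.last k ∉ s) :
    (dn s).map Fin.castSuccEmb = s := by
  ext i
  simp only [Finset.mem_map, mem_dn]
  constructor
  · rintro ⟨j, hj, rfl⟩; exact hj
  · intro hi
    have hne : i ≠ Fin.last k := fun hh => h (hh ▸ hi)
    obtain ⟨j, rfl⟩ := Fin.exists_castSucc_eq.mpr hne
    exact ⟨j, hi, rfl⟩

lemma insert_map_dn {s : Finset (Fin (k + 1))} (h : Fin.last k ∈ s) :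
    insert (Fin.last k) ((dn s).map Fin.castSuccEmb) = s := by
  ext i
  simp only [Finset.mem_insert, Finset.mem_map, mem_dn]
  constructor
  · rintro (rfl | ⟨j, hj, rfl⟩); · exact h
    · exact hj
  · intro hi
    rcases eq_or_ne i (Fin.last k) with rfl | hne
    · exact Or.inl rfl
    · obtain ⟨j, rfl⟩ := Fin.exists_castSucc_eq.mpr hne
      exact Or.inr ⟨j, hi, rfl⟩

lemma dn_nonempty {s : Finset (Fin (k + 1))} (hs : s.Nonempty) (h : Fin.last k ∉ s) :
    (dn s).Nonempty := by
  obtain ⟨i, hi⟩ := hs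
  have hne : i ≠ Fin.last k := fun hh => h (hh ▸ hi)
  obtain ⟨j, rfl⟩ := Fin.exists_castSucc_eq.mpr hne
  exact ⟨j, mem_dn.2 hi⟩

/-- the extension of a finpartition of `Fin k` by putting `Fin.last k` into (the copy of) `t`,
where `t = ∅` encodes a new singleton part. -/
def up (p₀ : Finpartition (Finset.univ : Finset (Fin k))) (t : Finset (Fin k))
    (ht : t ∈ insert ∅ p₀.parts) : Finpartition (Finset.univ : Finset (Fin (k + 1))) where
  parts := upParts p₀.parts t
  supIndep := by
    rw [Finset.supIndep_iff_pairwiseDisjoint]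
    have hdisj : ∀ r ∈ p₀.parts.erase t, Disjoint (t.map Fin.castSuccEmb)
        (r.map Fin.castSuccEmb) := by
      intro r hr
      rw [Finset.disjoint_map]
      rcases Finset.mem_insert.1 ht with rfl | ht'
      · exact Finset.disjoint_empty_left r
      · exact p₀.disjoint ht' (Finset.mem_of_mem_erase hr)
          (Finset.ne_of_mem_erase hr).symm
    intro x hx y hy hxy
    simp only [upParts, Finset.coe_insert, Set.mem_insert_iff, Finset.coe_image,
      Set.mem_image, Finset.mem_coe] at hx hy
    rcases hx with rfl | ⟨r, hr, rfl⟩ <;> rcases hy with rfl | ⟨r', hr', rfl⟩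
    · exact absurd rfl hxy
    · refine Finset.disjoint_insert_left.2 ⟨last_not_mem_map r', hdisj r' hr'⟩
    · exact Finset.disjoint_insert_right.2 ⟨last_not_mem_map r, (hdisj r hr).symm⟩
    · have hrr : r ≠ r' := fun hh => hxy (by rw [hh])
      rw [Function.onFun, id, id, Finset.disjoint_map]
      exact p₀.disjoint (Finset.mem_of_mem_erase hr) (Finset.mem_of_mem_erase hr') hrr
  sup_parts := by
    apply Finset.Subset.antisymm (Finset.subset_univ _)
    intro i _
    rw [Finset.mem_sup]
    rcases eq_or_ne i (Fin.last k) with rfl | hne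
    · exact ⟨_, Finset.mem_insert_self _ _, Finset.mem_insert_self _ _⟩
    · obtain ⟨j, rfl⟩ := Fin.exists_castSucc_eq.mpr hne
      have hj : j ∈ (Finset.univ : Finset (Fin k)) := Finset.mem_univ j
      rw [← p₀.sup_parts, Finset.mem_sup] at hj
      obtain ⟨r, hr, hjr⟩ := hj
      have hjm : j.castSucc ∈ r.map Fin.castSuccEmb := by
        simp only [Finset.mem_map, castSuccEmb_apply]; exact ⟨j, hjr, rfl⟩
      rcases eq_or_ne r t with rfl | hrt
      · exact ⟨_, Finset.mem_insert_self _ _, Finset.mem_insert_of_mem hjm⟩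
      · exact ⟨r.map Fin.castSuccEmb,
          Finset.mem_insert_of_mem (Finset.mem_image_of_mem _ (Finset.mem_erase.2 ⟨hrt, hr⟩)),
          hjm⟩
  bot_notMem := by
    simp only [upParts, Finset.bot_eq_empty, Finset.mem_insert, Finset.mem_image]
    rintro (h | ⟨r, hr, h⟩)
    · exact (Finset.insert_nonempty _ _).ne_empty h.symm
    · have : r.Nonempty := p₀.nonempty_of_mem_parts (Finset.mem_of_mem_erase hr)
      exact (Finset.map_nonempty.2 this).ne_empty h

end MCaux

namespace MCaux
variable {k : ℕ}

/-- restriction of a finpartition of `Fin (k+1)` to `Fin k`. -/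
noncomputable def downP (p : Finpartition (Finset.univ : Finset (Fin (k + 1)))) :
    Finpartition (Finset.univ : Finset (Fin k)) where
  parts := (p.parts.image dn).erase ∅
  supIndep := by
    rw [Finset.supIndep_iff_pairwiseDisjoint]
    intro x hx y hy hxy
    simp only [Finset.coe_erase, Set.mem_diff, Finset.coe_image, Set.mem_image,
      Finset.mem_coe, Set.mem_singleton_iff] at hx hy
    obtain ⟨⟨s, hs, rfl⟩, hxne⟩ := hx
    obtain ⟨⟨s', hs', rfl⟩, hyne⟩ := hy
    have hss : s ≠ s' := fun hh => hxy (by rw [hh])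
    have := p.disjoint hs hs' hss
    rw [Function.onFun, id, id, Finset.disjoint_left]
    intro j hj hj'
    exact (Finset.disjoint_left.1 this) (mem_dn.1 hj) (mem_dn.1 hj')
  sup_parts := by
    apply Finset.Subset.antisymm (Finset.subset_univ _)
    intro j _
    rw [Finset.mem_sup]
    have hj : j.castSucc ∈ (Finset.univ : Finset (Fin (k + 1))) := Finset.mem_univ _
    rw [← p.sup_parts, Finset.mem_sup] at hj
    obtain ⟨s, hs, hjs⟩ := hj
    have hjd : j ∈ dn s := mem_dn.2 hjs
    refine ⟨dn s, Finset.mem_erase.2 ⟨?_, Finset.mem_image_of_mem _ hs⟩, hjd⟩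
    exact fun hh => by simp [hh] at hjd
  bot_notMem := by
    simp [Finset.bot_eq_empty]

lemma part_last_mem (p : Finpartition (Finset.univ : Finset (Fin (k + 1)))) :
    p.part (Fin.last k) ∈ p.parts := p.part_mem.2 (Finset.mem_univ _)

lemma last_mem_part (p : Finpartition (Finset.univ : Finset (Fin (k + 1)))) :
    Fin.last k ∈ p.part (Fin.last k) := p.mem_part (Finset.mem_univ _)

/-- where `Fin.last k` goes. -/
noncomputable def tOf (p : Finpartition (Finset.univ : Finset (Fin (k + 1)))) :
    Finset (Fin k) := dn (p.part (Fin.last k))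

lemma tOf_mem (p : Finpartition (Finset.univ : Finset (Fin (k + 1)))) :
    tOf p ∈ insert ∅ (downP p).parts := by
  rcases eq_or_ne (tOf p) ∅ with h | h
  · rw [h]; exact Finset.mem_insert_self _ _
  · exact Finset.mem_insert_of_mem (Finset.mem_erase.2
      ⟨h, Finset.mem_image_of_mem _ (part_last_mem p)⟩)

lemma last_not_mem_of_ne_part {p : Finpartition (Finset.univ : Finset (Fin (k + 1)))}
    {s : Finset (Fin (k + 1))} (hs : s ∈ p.parts) (hne : s ≠ p.part (Fin.last k)) :
    Fin.last k ∉ s := fun h =>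
  hne (p.eq_of_mem_parts hs (part_last_mem p) h (last_mem_part p))

lemma upParts_downP (p : Finpartition (Finset.univ : Finset (Fin (k + 1)))) :
    upParts (downP p).parts (tOf p) = p.parts := by
  have hspecial : insert (Fin.last k) ((tOf p).map Fin.castSuccEmb) = p.part (Fin.last k) :=
    insert_map_dn (last_mem_part p)
  have himage : ((downP p).parts.erase (tOf p)).image (fun r => r.map Fin.castSuccEmb)
      = p.parts.erase (p.part (Fin.last k)) := by
    ext x
    simp only [Finset.mem_image, Finset.mem_erase, downP]
    constructor
    · rintro ⟨r, ⟨hrt, hrne, s, hs, rfl⟩, rfl⟩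
      have hsne : s ≠ p.part (Fin.last k) := fun hh => hrt (by rw [hh]; rfl)
      have hlast : Fin.last k ∉ s := last_not_mem_of_ne_part hs hsne
      rw [map_dn hlast]
      exact ⟨hsne, hs⟩
    · rintro ⟨hne, hx⟩
      have hlast : Fin.last k ∉ x := last_not_mem_of_ne_part hx hne
      refine ⟨dn x, ⟨?_, ?_, ⟨x, hx, rfl⟩⟩, map_dn hlast⟩
      · intro hh
        have hnem : (dn x).Nonempty := dn_nonempty (p.nonempty_of_mem_parts hx) hlast
        obtain ⟨j, hj⟩ := hnem
        have hj2 : j ∈ tOf p := hh ▸ hj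
        exact hne (p.eq_of_mem_parts hx (part_last_mem p) (mem_dn.1 hj) (mem_dn.1 hj2))
      · intro hh
        exact (dn_nonempty (p.nonempty_of_mem_parts hx) hlast).ne_empty hh
  rw [upParts, hspecial, himage, Finset.insert_erase (part_last_mem p)]

lemma downP_up (p₀ : Finpartition (Finset.univ : Finset (Fin k))) (t : Finset (Fin k))
    (ht : t ∈ insert ∅ p₀.parts) : downP (up p₀ t ht) = p₀ := by
  ext1
  show ((upParts p₀.parts t).image dn).erase ∅ = p₀.parts
  rw [upParts, Finset.image_insert, dn_insert_last, Finset.image_image]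
  have : ((p₀.parts.erase t).image fun r => dn (r.map Fin.castSuccEmb))
      = p₀.parts.erase t := by
    refine Finset.image_congr (fun r _ => dn_map r) |>.trans Finset.image_id
  rw [Function.comp_def, this]
  have hb : (∅ : Finset (Fin k)) ∉ p₀.parts := by
    simpa using p₀.not_bot_mem
  rcases Finset.mem_insert.1 ht with rfl | ht'
  · rw [Finset.erase_eq_self.2 hb, Finset.erase_insert hb]
  · rw [Finset.insert_erase ht', Finset.erase_eq_self.2 hb]

lemma tOf_up (p₀ : Finpartition (Finset.univ : Finset (Fin k))) (t : Finset (Fin k))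
    (ht : t ∈ insert ∅ p₀.parts) : tOf (up p₀ t ht) = t := by
  have hmem : insert (Fin.last k) (t.map Fin.castSuccEmb) ∈ (up p₀ t ht).parts :=
    Finset.mem_insert_self _ _
  have : (up p₀ t ht).part (Fin.last k) = insert (Fin.last k) (t.map Fin.castSuccEmb) :=
    (up p₀ t ht).eq_of_mem_parts (part_last_mem _) hmem (last_mem_part _)
      (Finset.mem_insert_self _ _)
  rw [tOf, this, dn_insert_last]

end MCaux

namespace MCaux
variable {k : ℕ}

lemma partDensity_succ (b : ℕ → ℝ) (c' : ℤ → ℝ) (n : ℕ) (mm : Fin (k + 1) → ℕ) :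
    partDensity b c' (k + 1) n mm = (1 / (Nat.descFactorial n (k + 1) : ℝ)) *
      ∑ p₀ : Finpartition (Finset.univ : Finset (Fin k)), ∑ t ∈ insert ∅ p₀.parts,
        c' ((n : ℤ) - ∑ q ∈ upParts p₀.parts t, (vOf mm q : ℤ)) *
          ∏ q ∈ upParts p₀.parts t, factor b mm q := by
  rw [partDensity_eq]
  congr 1
  rw [← Finset.sum_sigma (Finset.univ : Finset (Finpartition (Finset.univ : Finset (Fin k))))
    (fun p₀ => insert ∅ p₀.parts)
    (fun x => c' ((n : ℤ) - ∑ q ∈ upParts x.1.parts x.2, (vOf mm q : ℤ)) *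
      ∏ q ∈ upParts x.1.parts x.2, factor b mm q)]
  refine Finset.sum_bij' (fun p _ => ⟨downP p, tOf p⟩)
    (fun x hx => up x.1 x.2 ((Finset.mem_sigma.1 hx).2)) ?_ ?_ ?_ ?_ ?_
  · intro p _
    exact Finset.mem_sigma.2 ⟨Finset.mem_univ _, tOf_mem p⟩
  · intro x _
    exact Finset.mem_univ _
  · intro p _
    ext1
    show upParts (downP p).parts (tOf p) = p.parts
    exact upParts_downP p
  · rintro ⟨p₀, t⟩ hx
    have ht := (Finset.mem_sigma.1 hx).2
    have h1 := downP_up p₀ t ht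
    have h2 := tOf_up p₀ t ht
    simp only [h1, h2]
  · intro p _
    rw [upParts_downP p]

variable {m : Fin k → ℕ} {m' : ℕ}

lemma min'_map (r : Finset (Fin k)) (h : r.Nonempty) :
    (r.map Fin.castSuccEmb).min' (Finset.map_nonempty.2 h) = (r.min' h).castSucc := by
  apply le_antisymm
  · exact Finset.min'_le _ _ (Finset.mem_map_of_mem _ (r.min'_mem h))
  · apply Finset.le_min'
    intro y hy
    obtain ⟨a, ha, rfl⟩ := Finset.mem_map.1 hy
    rw [castSuccEmb_apply, Fin.castSucc_le_castSucc_iff]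
    exact Finset.min'_le _ _ ha

lemma vOf_map (r : Finset (Fin k)) :
    vOf (Fin.snoc m m' : Fin (k + 1) → ℕ) (r.map Fin.castSuccEmb) = vOf m r := by
  rcases r.eq_empty_or_nonempty with rfl | h
  · simp [vOf]
  · rw [vOf_eq _ _ (Finset.map_nonempty.2 h), vOf_eq _ _ h, min'_map r h, Fin.snoc_castSucc]

lemma factor_map (b : ℕ → ℝ) (r : Finset (Fin k)) :
    factor b (Fin.snoc m m' : Fin (k + 1) → ℕ) (r.map Fin.castSuccEmb) = factor b m r := by
  rw [factor, factor, vOf_map, Finset.card_map]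
  congr 2
  have : (∀ i ∈ r.map Fin.castSuccEmb, ∀ j ∈ r.map Fin.castSuccEmb,
      (Fin.snoc m m' : Fin (k + 1) → ℕ) i = (Fin.snoc m m' : Fin (k + 1) → ℕ) j) ↔
      ∀ i ∈ r, ∀ j ∈ r, m i = m j := by
    constructor
    · intro h i hi j hj
      have := h _ (Finset.mem_map_of_mem _ hi) _ (Finset.mem_map_of_mem _ hj)
      simp only [castSuccEmb_apply, Fin.snoc_castSucc] at this
      exact this
    · intro h i hi j hj
      obtain ⟨a, ha, rfl⟩ := Finset.mem_map.1 hi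
      obtain ⟨a', ha', rfl⟩ := Finset.mem_map.1 hj
      simp only [castSuccEmb_apply, Fin.snoc_castSucc]
      exact h a ha a' ha'
  simp only [this]

lemma special_empty :
    insert (Fin.last k) ((∅ : Finset (Fin k)).map Fin.castSuccEmb) = {Fin.last k} := by
  simp

lemma vOf_special_empty :
    vOf (Fin.snoc m m' : Fin (k + 1) → ℕ) {Fin.last k} = m' := by
  rw [vOf_eq _ _ (Finset.singleton_nonempty _)]
  simp [Fin.snoc_last]

lemma factor_special_empty (b : ℕ → ℝ) :
    factor b (Fin.snoc m m' : Fin (k + 1) → ℕ) {Fin.last k} = (m' : ℝ) * b m' := by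
  rw [factor, vOf_special_empty]
  rw [if_pos (by simp)]
  rw [Finset.card_singleton, Nat.descFactorial_one]
  ring

lemma min'_special (t : Finset (Fin k)) (h : t.Nonempty) :
    (insert (Fin.last k) (t.map Fin.castSuccEmb)).min'
      (Finset.insert_nonempty _ _) = (t.min' h).castSucc := by
  apply le_antisymm
  · exact Finset.min'_le _ _ (Finset.mem_insert_of_mem (Finset.mem_map_of_mem _ (t.min'_mem h)))
  · apply Finset.le_min'
    intro y hy
    rcases Finset.mem_insert.1 hy with rfl | hy'
    · exact (Fin.castSucc_lt_last _).le
    · obtain ⟨a, ha, rfl⟩ := Finset.mem_map.1 hy'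
      rw [castSuccEmb_apply, Fin.castSucc_le_castSucc_iff]
      exact Finset.min'_le _ _ ha

lemma vOf_special (t : Finset (Fin k)) (h : t.Nonempty) :
    vOf (Fin.snoc m m' : Fin (k + 1) → ℕ)
      (insert (Fin.last k) (t.map Fin.castSuccEmb)) = vOf m t := by
  rw [vOf_eq _ _ (Finset.insert_nonempty _ _), min'_special t h, Fin.snoc_castSucc,
    vOf_eq m t h]

lemma card_special (t : Finset (Fin k)) :
    (insert (Fin.last k) (t.map Fin.castSuccEmb)).card = t.card + 1 := by
  rw [Finset.card_insert_of_notMem (last_not_mem_map t), Finset.card_map]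

lemma const_special (t : Finset (Fin k)) (h : t.Nonempty) :
    (∀ i ∈ insert (Fin.last k) (t.map Fin.castSuccEmb),
      ∀ j ∈ insert (Fin.last k) (t.map Fin.castSuccEmb),
        (Fin.snoc m m' : Fin (k + 1) → ℕ) i = (Fin.snoc m m' : Fin (k + 1) → ℕ) j) ↔
    ((∀ i ∈ t, ∀ j ∈ t, m i = m j) ∧ m' = vOf m t) := by
  constructor
  · intro hc
    constructor
    · intro i hi j hj
      have := hc _ (Finset.mem_insert_of_mem (Finset.mem_map_of_mem _ hi))
        _ (Finset.mem_insert_of_mem (Finset.mem_map_of_mem _ hj))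
      simp only [castSuccEmb_apply, Fin.snoc_castSucc] at this
      exact this
    · have := hc _ (Finset.mem_insert_self _ _)
        _ (Finset.mem_insert_of_mem (Finset.mem_map_of_mem _ (t.min'_mem h)))
      rw [vOf_eq m t h]
      simp only [castSuccEmb_apply, Fin.snoc_last, Fin.snoc_castSucc] at this
      exact this
  · rintro ⟨hconst, hval⟩
    have key : ∀ i ∈ insert (Fin.last k) (t.map Fin.castSuccEmb),
        (Fin.snoc m m' : Fin (k + 1) → ℕ) i = m' := by
      intro i hi
      rcases Finset.mem_insert.1 hi with rfl | hi'
      · simp [Fin.snoc_last]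
      · obtain ⟨a, ha, rfl⟩ := Finset.mem_map.1 hi'
        rw [castSuccEmb_apply, Fin.snoc_castSucc, hval, vOf_eq m t h]
        exact hconst a ha _ (t.min'_mem h)
    intro i hi j hj
    rw [key i hi, key j hj]

lemma factor_special (b : ℕ → ℝ) (t : Finset (Fin k)) (h : t.Nonempty) :
    factor b (Fin.snoc m m' : Fin (k + 1) → ℕ)
      (insert (Fin.last k) (t.map Fin.castSuccEmb)) =
    (if (∀ i ∈ t, ∀ j ∈ t, m i = m j) ∧ m' = vOf m t then (1 : ℝ) else 0) *
      b (vOf m t) * ((vOf m t - t.card : ℕ) * (Nat.descFactorial (vOf m t) t.card : ℕ) : ℝ) := by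
  rw [factor, vOf_special t h, card_special t]
  have hiff := const_special (m := m) (m' := m') t h
  rw [if_congr hiff rfl rfl, Nat.descFactorial_succ]
  push_cast
  ring

lemma sum_upParts (P : Finset (Finset (Fin k))) (t : Finset (Fin k)) (f : Finset (Fin (k+1)) → ℤ) :
    ∑ q ∈ upParts P t, f q =
      f (insert (Fin.last k) (t.map Fin.castSuccEmb)) +
        ∑ r ∈ P.erase t, f (r.map Fin.castSuccEmb) := by
  rw [upParts, Finset.sum_insert (special_not_mem_image P t), Finset.sum_image]
  intro r _ r' _ hrr
  exact Finset.map_injective _ hrr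

lemma prod_upParts (P : Finset (Finset (Fin k))) (t : Finset (Fin k)) (f : Finset (Fin (k+1)) → ℝ) :
    ∏ q ∈ upParts P t, f q =
      f (insert (Fin.last k) (t.map Fin.castSuccEmb)) *
        ∏ r ∈ P.erase t, f (r.map Fin.castSuccEmb) := by
  rw [upParts, Finset.prod_insert (special_not_mem_image P t), Finset.prod_image]
  intro r _ r' _ hrr
  exact Finset.map_injective _ hrr

end MCaux

namespace MCaux

lemma key_sum (b : ℕ → ℝ) (hb0 : b 0 = 0) (c : ℕ → ℝ)
    (hc : ∀ n : ℕ, 1 ≤ n → (n : ℝ) * c n = ∑ m ∈ Finset.Icc 1 n, (m : ℝ) * b m * c (n - m))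
    (c' : ℤ → ℝ) (hc'nat : ∀ n : ℕ, c' n = c n) (hc'neg : ∀ j : ℤ, j < 0 → c' j = 0)
    (n : ℕ) (N : ℤ) (hN : N ≤ n) :
    ∑ m' ∈ Finset.range (n + 1), (m' : ℝ) * b m' * c' (N - m') = (N : ℝ) * c' N := by
  rcases lt_or_ge N 0 with h | h
  · rw [hc'neg N h, mul_zero]
    apply Finset.sum_eq_zero
    intro x _
    rw [hc'neg (N - x) (by omega), mul_zero]
  · obtain ⟨N₀, rfl⟩ := Int.eq_ofNat_of_zero_le h
    have hN₀ : N₀ ≤ n := by exact_mod_cast hN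
    have hstep : ∑ m' ∈ Finset.range (n + 1), (m' : ℝ) * b m' * c' ((N₀ : ℤ) - m')
        = ∑ m' ∈ Finset.Icc 1 N₀, (m' : ℝ) * b m' * c' ((N₀ : ℤ) - m') := by
      symm
      apply Finset.sum_subset
      · intro x hx
        rw [Finset.mem_Icc] at hx
        rw [Finset.mem_range]
        omega
      · intro x hx hxn
        rw [Finset.mem_range] at hx
        rw [Finset.mem_Icc] at hxn
        rcases Nat.eq_zero_or_pos x with rfl | hxp
        · simp
        · have hxN : N₀ < x := by omega
          rw [hc'neg ((N₀ : ℤ) - x) (by omega), mul_zero]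
    rw [hstep]
    have hcongr : ∀ m' ∈ Finset.Icc 1 N₀,
        (m' : ℝ) * b m' * c' ((N₀ : ℤ) - m') = (m' : ℝ) * b m' * c (N₀ - m') := by
      intro m' hm'
      rw [Finset.mem_Icc] at hm'
      have : ((N₀ : ℤ) - m') = ((N₀ - m' : ℕ) : ℤ) := by omega
      rw [this, hc'nat]
    rw [Finset.sum_congr rfl hcongr, hc'nat]
    rcases Nat.eq_zero_or_pos N₀ with rfl | hpos
    · simp
    · rw [← hc N₀ hpos]
      norm_cast

end MCaux

open MCaux in
theorem marginal_consistency_of_partDensity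
    (b : ℕ → ℝ) (hb0 : b 0 = 0)
    (c : ℕ → ℝ) (hc0 : c 0 = 1)
    (hc : ∀ n : ℕ, 1 ≤ n → (n : ℝ) * c n = ∑ m ∈ Finset.Icc 1 n, (m : ℝ) * b m * c (n - m))
    (c' : ℤ → ℝ) (hc'nat : ∀ n : ℕ, c' n = c n) (hc'neg : ∀ j : ℤ, j < 0 → c' j = 0)
    (k n : ℕ) (hn : k + 1 ≤ n) (m : Fin k → ℕ) :
    (∀ m' : ℕ, n < m' → partDensity b c' (k + 1) n (Fin.snoc m m') = 0) ∧
    ∑' m' : ℕ, partDensity b c' (k + 1) n (Fin.snoc m m') = partDensity b c' k n m := by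
  classical
  have hkn : k ≤ n := le_of_lt hn
  -- basic facts
  have hb : ∀ p₀ : Finpartition (Finset.univ : Finset (Fin k)), (∅ : Finset (Fin k)) ∉ p₀.parts :=
    fun p₀ => by simpa using p₀.not_bot_mem
  have hSnn : ∀ (p₀ : Finpartition (Finset.univ : Finset (Fin k))) (s : Finset (Finset (Fin k))),
      0 ≤ ∑ r ∈ s, (vOf m r : ℤ) :=
    fun _ s => Finset.sum_nonneg fun r _ => Int.ofNat_nonneg _
  -- the inner summand after evaluation
  have hinner : ∀ (m' : ℕ) (p₀ : Finpartition (Finset.univ : Finset (Fin k)))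
      (t : Finset (Fin k)), t ∈ insert ∅ p₀.parts →
      c' ((n : ℤ) - ∑ q ∈ upParts p₀.parts t, (vOf (Fin.snoc m m' : Fin (k+1) → ℕ) q : ℤ)) *
        ∏ q ∈ upParts p₀.parts t, factor b (Fin.snoc m m' : Fin (k+1) → ℕ) q
      = if t = ∅ then
          c' ((n : ℤ) - ((m' : ℤ) + ∑ r ∈ p₀.parts, (vOf m r : ℤ))) *
            (((m' : ℝ) * b m') * ∏ r ∈ p₀.parts, factor b m r)
        else
          c' ((n : ℤ) - ∑ r ∈ p₀.parts, (vOf m r : ℤ)) *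
            (((if (∀ i ∈ t, ∀ j ∈ t, m i = m j) ∧ m' = vOf m t then (1:ℝ) else 0) *
                b (vOf m t) *
                ((vOf m t - t.card : ℕ) * (Nat.descFactorial (vOf m t) t.card : ℕ) : ℝ)) *
              ∏ r ∈ p₀.parts.erase t, factor b m r) := by
    intro m' p₀ t ht
    rw [sum_upParts, prod_upParts]
    have hmapsum : ∑ r ∈ p₀.parts.erase t,
        (vOf (Fin.snoc m m' : Fin (k+1) → ℕ) (r.map Fin.castSuccEmb) : ℤ)
        = ∑ r ∈ p₀.parts.erase t, (vOf m r : ℤ) :=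
      Finset.sum_congr rfl fun r _ => by rw [vOf_map]
    have hmapprod : ∏ r ∈ p₀.parts.erase t,
        factor b (Fin.snoc m m' : Fin (k+1) → ℕ) (r.map Fin.castSuccEmb)
        = ∏ r ∈ p₀.parts.erase t, factor b m r :=
      Finset.prod_congr rfl fun r _ => by rw [factor_map]
    rw [hmapsum, hmapprod]
    rcases Finset.mem_insert.1 ht with rfl | ht'
    · rw [if_pos rfl, special_empty, vOf_special_empty, factor_special_empty,
        Finset.erase_eq_self.2 (hb p₀)]
    · have hne : t.Nonempty := p₀.nonempty_of_mem_parts ht'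
      rw [if_neg hne.ne_empty, vOf_special t hne, factor_special b t hne,
        Finset.add_sum_erase p₀.parts (fun r => (vOf m r : ℤ)) ht']
  -- the vanishing of terms with m' > n
  have hzero : ∀ m' : ℕ, n < m' → partDensity b c' (k + 1) n (Fin.snoc m m') = 0 := by
    intro m' hm'
    rw [partDensity_succ]
    apply mul_eq_zero_of_right
    apply Finset.sum_eq_zero; intro p₀ _
    apply Finset.sum_eq_zero; intro t ht
    rw [hinner m' p₀ t ht]
    rcases Finset.mem_insert.1 ht with rfl | ht'
    · rw [if_pos rfl]
      have hS := hSnn p₀ p₀.parts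
      rw [hc'neg _ (by omega), zero_mul]
    · have hne := (p₀.nonempty_of_mem_parts ht').ne_empty
      rw [if_neg hne]
      by_cases hP : (∀ i ∈ t, ∀ j ∈ t, m i = m j) ∧ m' = vOf m t
      · have h1 : (vOf m t : ℤ) ≤ ∑ r ∈ p₀.parts, (vOf m r : ℤ) :=
          Finset.single_le_sum (fun r _ => Int.ofNat_nonneg _) ht'
        have h2 : m' = vOf m t := hP.2
        rw [hc'neg _ (by omega), zero_mul]
      · rw [if_neg hP, zero_mul, zero_mul, zero_mul, mul_zero]
  refine ⟨hzero, ?_⟩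
  rw [tsum_eq_sum (s := Finset.range (n + 1))
    (fun m' hm' => hzero m' (by simpa [Nat.lt_succ_iff] using hm'))]
  -- step 1 : reindex the finite sum
  have step1 : ∑ m' ∈ Finset.range (n + 1), partDensity b c' (k + 1) n (Fin.snoc m m')
      = (1 / (Nat.descFactorial n (k + 1) : ℝ)) *
        ∑ p₀ : Finpartition (Finset.univ : Finset (Fin k)), ∑ t ∈ insert ∅ p₀.parts,
          ∑ m' ∈ Finset.range (n + 1),
            c' ((n : ℤ) - ∑ q ∈ upParts p₀.parts t,
                (vOf (Fin.snoc m m' : Fin (k+1) → ℕ) q : ℤ)) *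
              ∏ q ∈ upParts p₀.parts t, factor b (Fin.snoc m m' : Fin (k+1) → ℕ) q := by
    rw [Finset.sum_congr rfl (fun m' _ => partDensity_succ b c' n (Fin.snoc m m')),
      ← Finset.mul_sum]
    congr 1
    rw [Finset.sum_comm]
    exact Finset.sum_congr rfl fun p₀ _ => Finset.sum_comm
  rw [step1]
  -- step 2 : evaluate the inner sums for each p₀
  have hper : ∀ p₀ : Finpartition (Finset.univ : Finset (Fin k)),
      ∑ t ∈ insert ∅ p₀.parts, ∑ m' ∈ Finset.range (n + 1),
          c' ((n : ℤ) - ∑ q ∈ upParts p₀.parts t,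
              (vOf (Fin.snoc m m' : Fin (k+1) → ℕ) q : ℤ)) *
            ∏ q ∈ upParts p₀.parts t, factor b (Fin.snoc m m' : Fin (k+1) → ℕ) q
      = ((n : ℝ) - k) * (c' ((n : ℤ) - ∑ r ∈ p₀.parts, (vOf m r : ℤ)) *
          ∏ r ∈ p₀.parts, factor b m r) := by
    intro p₀
    rw [Finset.sum_congr rfl fun t ht => Finset.sum_congr rfl fun m' _ => hinner m' p₀ t ht]
    rw [Finset.sum_insert (hb p₀)]
    -- the t = ∅ term
    have hS := hSnn p₀ p₀.parts
    have hA : ∑ m' ∈ Finset.range (n + 1),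
        (if (∅ : Finset (Fin k)) = ∅ then
          c' ((n : ℤ) - ((m' : ℤ) + ∑ r ∈ p₀.parts, (vOf m r : ℤ))) *
            (((m' : ℝ) * b m') * ∏ r ∈ p₀.parts, factor b m r)
        else
          c' ((n : ℤ) - ∑ r ∈ p₀.parts, (vOf m r : ℤ)) *
            (((if (∀ i ∈ (∅ : Finset (Fin k)), ∀ j ∈ (∅ : Finset (Fin k)), m i = m j) ∧
                  m' = vOf m (∅ : Finset (Fin k)) then (1:ℝ) else 0) *
                b (vOf m (∅ : Finset (Fin k))) *
                ((vOf m (∅ : Finset (Fin k)) - (∅ : Finset (Fin k)).card : ℕ) *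
                  (Nat.descFactorial (vOf m (∅ : Finset (Fin k)))
                    (∅ : Finset (Fin k)).card : ℕ) : ℝ)) *
              ∏ r ∈ p₀.parts.erase (∅ : Finset (Fin k)), factor b m r))
        = (((n : ℤ) - ∑ r ∈ p₀.parts, (vOf m r : ℤ) : ℤ) : ℝ) *
            c' ((n : ℤ) - ∑ r ∈ p₀.parts, (vOf m r : ℤ)) *
            ∏ r ∈ p₀.parts, factor b m r := by
      have hk := key_sum b hb0 c hc c' hc'nat hc'neg n
        ((n : ℤ) - ∑ r ∈ p₀.parts, (vOf m r : ℤ)) (by omega)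
      calc _ = (∑ m' ∈ Finset.range (n + 1), (m' : ℝ) * b m' *
              c' (((n : ℤ) - ∑ r ∈ p₀.parts, (vOf m r : ℤ)) - m')) *
            ∏ r ∈ p₀.parts, factor b m r := by
            rw [Finset.sum_mul]
            refine Finset.sum_congr rfl fun m' _ => ?_
            rw [if_pos rfl,
              show (n : ℤ) - ((m' : ℤ) + ∑ r ∈ p₀.parts, (vOf m r : ℤ))
                = ((n : ℤ) - ∑ r ∈ p₀.parts, (vOf m r : ℤ)) - m' by ring]
            ring
        _ = _ := by rw [hk]
    rw [hA]
    -- the t ∈ parts terms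
    have hB : ∀ t ∈ p₀.parts, ∑ m' ∈ Finset.range (n + 1),
        (if t = ∅ then
          c' ((n : ℤ) - ((m' : ℤ) + ∑ r ∈ p₀.parts, (vOf m r : ℤ))) *
            (((m' : ℝ) * b m') * ∏ r ∈ p₀.parts, factor b m r)
        else
          c' ((n : ℤ) - ∑ r ∈ p₀.parts, (vOf m r : ℤ)) *
            (((if (∀ i ∈ t, ∀ j ∈ t, m i = m j) ∧ m' = vOf m t then (1:ℝ) else 0) *
                b (vOf m t) *
                ((vOf m t - t.card : ℕ) * (Nat.descFactorial (vOf m t) t.card : ℕ) : ℝ)) *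
              ∏ r ∈ p₀.parts.erase t, factor b m r))
        = ((vOf m t - t.card : ℕ) : ℝ) *
            (c' ((n : ℤ) - ∑ r ∈ p₀.parts, (vOf m r : ℤ)) * ∏ r ∈ p₀.parts, factor b m r) := by
      intro t ht'
      have hne := (p₀.nonempty_of_mem_parts ht').ne_empty
      rw [Finset.sum_congr rfl fun m' _ => if_neg hne]
      by_cases hP : ∀ i ∈ t, ∀ j ∈ t, m i = m j
      · -- the indicator picks m' = vOf m t
        have hsel : ∀ m' ∈ Finset.range (n + 1),
            c' ((n : ℤ) - ∑ r ∈ p₀.parts, (vOf m r : ℤ)) *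
              (((if (∀ i ∈ t, ∀ j ∈ t, m i = m j) ∧ m' = vOf m t then (1:ℝ) else 0) *
                  b (vOf m t) *
                  ((vOf m t - t.card : ℕ) * (Nat.descFactorial (vOf m t) t.card : ℕ) : ℝ)) *
                ∏ r ∈ p₀.parts.erase t, factor b m r)
            = if m' = vOf m t then
                c' ((n : ℤ) - ∑ r ∈ p₀.parts, (vOf m r : ℤ)) *
                  ((b (vOf m t) *
                    ((vOf m t - t.card : ℕ) * (Nat.descFactorial (vOf m t) t.card : ℕ) : ℝ)) *
                  ∏ r ∈ p₀.parts.erase t, factor b m r)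
              else 0 := by
          intro m' _
          by_cases hm : m' = vOf m t
          · rw [if_pos hm, if_pos ⟨hP, hm⟩]; ring
          · rw [if_neg hm, if_neg (fun hh => hm hh.2), zero_mul, zero_mul, zero_mul, mul_zero]
        rw [Finset.sum_congr rfl hsel, Finset.sum_ite_eq' (Finset.range (n + 1)) (vOf m t)]
        have hfac : factor b m t = b (vOf m t) * (Nat.descFactorial (vOf m t) t.card : ℝ) := by
          rw [factor, if_pos hP, one_mul]
        by_cases hvn : vOf m t ∈ Finset.range (n + 1)
        · rw [if_pos hvn, ← Finset.mul_prod_erase p₀.parts (factor b m) ht', hfac]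
          push_cast
          ring
        · rw [if_neg hvn]
          have hv : n < vOf m t := by simpa [Nat.lt_succ_iff] using hvn
          have h1 : (vOf m t : ℤ) ≤ ∑ r ∈ p₀.parts, (vOf m r : ℤ) :=
            Finset.single_le_sum (fun r _ => Int.ofNat_nonneg _) ht'
          rw [hc'neg _ (by omega), zero_mul, mul_zero]
      · -- m is not constant on t : everything vanishes
        have hfac : factor b m t = 0 := by
          rw [factor, if_neg hP, zero_mul, zero_mul]
        have hprod : ∏ r ∈ p₀.parts, factor b m r = 0 :=
          Finset.prod_eq_zero ht' hfac
        rw [hprod, mul_zero, mul_zero]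
        apply Finset.sum_eq_zero
        intro m' _
        rw [if_neg (fun hh => hP hh.1), zero_mul, zero_mul, zero_mul, mul_zero]
    rw [Finset.sum_congr rfl hB, ← Finset.sum_mul]
    -- combine
    by_cases hPi : ∏ r ∈ p₀.parts, factor b m r = 0
    · rw [hPi]; ring
    · have hle : ∀ t ∈ p₀.parts, t.card ≤ vOf m t := by
        intro t ht'
        by_contra hlt
        have : Nat.descFactorial (vOf m t) t.card = 0 :=
          Nat.descFactorial_eq_zero_iff_lt.2 (by omega)
        exact (Finset.prod_ne_zero_iff.1 hPi t ht')
          (by rw [factor, this, Nat.cast_zero, mul_zero])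
      have hsumcast : ∑ t ∈ p₀.parts, ((vOf m t - t.card : ℕ) : ℝ)
          = ((∑ r ∈ p₀.parts, (vOf m r : ℤ) : ℤ) : ℝ) - k := by
        rw [Finset.sum_congr rfl fun t ht' => Nat.cast_sub (hle t ht')]
        rw [Finset.sum_sub_distrib]
        have h1 : ∑ t ∈ p₀.parts, ((vOf m t : ℕ) : ℝ)
            = ((∑ r ∈ p₀.parts, (vOf m r : ℤ) : ℤ) : ℝ) := by push_cast; rfl
        have h2 : ∑ t ∈ p₀.parts, ((t.card : ℕ) : ℝ) = (k : ℝ) := by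
          rw [← Nat.cast_sum]
          rw [p₀.sum_card_parts, Finset.card_univ, Fintype.card_fin]
        rw [h1, h2]
      rw [hsumcast]
      push_cast
      ring
  rw [Finset.sum_congr rfl fun p₀ _ => hper p₀]
  -- step 3 : final arithmetic
  rw [partDensity_eq b c' k n m, ← Finset.mul_sum]
  have hD : (Nat.descFactorial n (k + 1) : ℝ)
      = ((n : ℝ) - k) * (Nat.descFactorial n k : ℝ) := by
    rw [Nat.descFactorial_succ]
    push_cast [Nat.cast_sub hkn]
    ring
  have hnk : (n : ℝ) - (k : ℝ) ≠ 0 := by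
    have : (k : ℝ) < n := by exact_mod_cast hn
    exact sub_ne_zero.2 (ne_of_gt this)
  have hD0 : (Nat.descFactorial n k : ℝ) ≠ 0 :=
    Nat.cast_ne_zero.2 (by rw [Ne, Nat.descFactorial_eq_zero_iff_lt]; omega)
  rw [hD]
  field_simp
end

section
/- Let b, c : ℕ → ℝ be arbitrary sequences and write c′ for the extension of c to ℤ vanishing on negative integers. Fix k, n ∈ ℕ and g : Fin k → ℕ. For a finpartition p of the full finset of Fin k, a function m from the parts of p to {1, …, n}, a finpartition ρ of the finset p.parts, and a part B of ρ, write Σm := ∑_{q ∈ p.parts} m q, let δ_B := 1 if m is constant on B and 0 otherwise, and in the constant case let w_B be the common value of m on B. Then ∑_p ∑_{m : p.parts → {1,…,n}} c′(n − Σm) · ∏_{q ∈ p.parts} (b (m q)) · (m q)^(∑_{i ∈ q} g i) = ∑_p ∑_{m : p.parts → {1,…,n}} ( ∑_ρ c′(n − ∑_{B ∈ ρ.parts} w_B) · ∏_{B ∈ ρ.parts} δ_B · (b w_B) · Nat.descFactorial w_B (B.card) ) · ∏_{q ∈ p.parts} ((m q : ℝ))^((∑_{i ∈ q} g i : ℤ)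 − q.card), where the outer sums run over all finpartitions p of the full finset of Fin k, ρ runs over all finpartitions of the finset p.parts, and the last product uses integer powers (the exponent may be negative; m q ≥ 1). -/
open Finset

/-- Extend a function `m` defined on the parts of a finpartition `p` of `Fin k`, with values
in `{1, …, n}`, to all finsets of `Fin k` (by `0` off the parts). -/
def mval {k n : ℕ} (p : Finpartition (Finset.univ : Finset (Fin k)))
    (m : {q // q ∈ p.parts} → {v : ℕ // v ∈ Finset.Icc 1 n}) (t : Finset (Fin k)) : ℕ :=
  if h : t ∈ p.parts then (m ⟨t, h⟩ : ℕ) else 0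

namespace FusionAux

variable {α : Type*} [DecidableEq α] {s : Finset α}

/-- Union of a finite set of finsets. -/
def fuse (B : Finset (Finset α)) : Finset α := B.sup id

lemma mem_fuse {x : α} {B : Finset (Finset α)} : x ∈ fuse B ↔ ∃ q ∈ B, x ∈ q := by
  simp [fuse, Finset.mem_sup]

lemma subset_fuse {q : Finset α} {B : Finset (Finset α)} (h : q ∈ B) : q ⊆ fuse B :=
  Finset.le_sup (f := id) h

variable (p : Finpartition s) (ρ : Finpartition p.parts)

lemma fuse_nonempty {B : Finset (Finset α)} (hB : B ∈ ρ.parts) : (fuse B).Nonempty := by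
  obtain ⟨q, hq⟩ := ρ.nonempty_of_mem_parts hB
  obtain ⟨x, hx⟩ := p.nonempty_of_mem_parts (ρ.le hB hq)
  exact ⟨x, mem_fuse.2 ⟨q, hq, hx⟩⟩

lemma fuse_disjoint {B B' : Finset (Finset α)} (hB : B ∈ ρ.parts) (hB' : B' ∈ ρ.parts)
    (hne : B ≠ B') : Disjoint (fuse B) (fuse B') := by
  rw [Finset.disjoint_left]
  intro x hx hx'
  obtain ⟨q, hq, hxq⟩ := mem_fuse.1 hx
  obtain ⟨q', hq', hxq'⟩ := mem_fuse.1 hx'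
  have : q = q' := p.eq_of_mem_parts (ρ.le hB hq) (ρ.le hB' hq') hxq hxq'
  subst this
  exact hne (ρ.eq_of_mem_parts hB hB' hq hq')

lemma fuse_injOn : Set.InjOn fuse (ρ.parts : Set (Finset (Finset α))) := by
  intro B hB B' hB' h
  by_contra hne
  obtain ⟨x, hx⟩ := fuse_nonempty p ρ hB
  exact Finset.disjoint_left.1 (fuse_disjoint p ρ hB hB' hne) hx (h ▸ hx)

/-- The fused (coarser) partition associated to a partition of the parts. -/
def fused : Finpartition s where
  parts := ρ.parts.image fuse
  supIndep := by
    rw [Finset.supIndep_iff_pairwiseDisjoint]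
    intro A hA A' hA' hne
    simp only [coe_image, Set.mem_image, mem_coe] at hA hA'
    obtain ⟨B, hB, rfl⟩ := hA
    obtain ⟨B', hB', rfl⟩ := hA'
    exact fuse_disjoint p ρ hB hB' (fun h => hne (by rw [h]))
  sup_parts := by
    rw [Finset.sup_image]
    apply le_antisymm
    · intro x hx
      rw [Finset.mem_sup] at hx
      obtain ⟨B, hB, hx⟩ := hx
      obtain ⟨q, hq, hx⟩ := mem_fuse.1 hx
      exact p.le (ρ.le hB hq) hx
    · intro x hx
      obtain ⟨q, hq, hxq⟩ := p.exists_mem hx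
      obtain ⟨B, hB, hqB⟩ := ρ.exists_mem hq
      rw [Finset.mem_sup]
      exact ⟨B, hB, mem_fuse.2 ⟨q, hqB, hxq⟩⟩
  bot_notMem := by
    simp only [bot_eq_empty, Finset.mem_image]
    rintro ⟨B, hB, h⟩
    exact (fuse_nonempty p ρ hB).ne_empty (by rw [h])

lemma mem_fused_parts {A : Finset α} :
    A ∈ (fused p ρ).parts ↔ ∃ B ∈ ρ.parts, fuse B = A := by
  simp [fused]

/-- For `q ∈ p.parts` and `B ∈ ρ.parts`, `q ⊆ fuse B ↔ q ∈ B`. -/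
lemma subset_fuse_iff {q : Finset α} {B : Finset (Finset α)} (hq : q ∈ p.parts)
    (hB : B ∈ ρ.parts) : q ⊆ fuse B ↔ q ∈ B := by
  refine ⟨fun h => ?_, fun h => subset_fuse h⟩
  obtain ⟨B', hB', hqB'⟩ := ρ.exists_mem hq
  obtain ⟨x, hx⟩ := p.nonempty_of_mem_parts hq
  have hxB : x ∈ fuse B := h hx
  have hxB' : x ∈ fuse B' := subset_fuse hqB' hx
  have : B = B' := by
    by_contra hne
    exact Finset.disjoint_left.1 (fuse_disjoint p ρ hB hB' hne) hxB hxB'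
  exact this ▸ hqB'

lemma filter_subset_fuse {B : Finset (Finset α)} (hB : B ∈ ρ.parts) :
    p.parts.filter (· ⊆ fuse B) = B := by
  ext q
  simp only [Finset.mem_filter]
  constructor
  · rintro ⟨hq, h⟩
    exact (subset_fuse_iff p ρ hq hB).1 h
  · intro h
    exact ⟨ρ.le hB h, subset_fuse h⟩

/-- Restriction of `p` to a fused part. -/
def restrictPart (A : Finset α) (hA : A ∈ (fused p ρ).parts) : Finpartition A where
  parts := p.parts.filter (· ⊆ A)
  supIndep := p.supIndep.subset (Finset.filter_subset _ _)
  sup_parts := by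
    obtain ⟨B, hB, rfl⟩ := (mem_fused_parts p ρ).1 hA
    rw [filter_subset_fuse p ρ hB]
    rfl
  bot_notMem h := p.bot_notMem (Finset.mem_filter.1 h).1

lemma restrictPart_parts {A : Finset α} (hA : A ∈ (fused p ρ).parts) :
    (restrictPart p ρ A hA).parts = p.parts.filter (· ⊆ A) := rfl

end FusionAux

namespace FusionAux

variable {α : Type*} [DecidableEq α] {s : Finset α}

variable (P : Finpartition s) (σ : ∀ A : {x // x ∈ P.parts}, Finpartition (A.1 : Finset α))

/-- Glue together the partitions of all parts. -/
def pbind : Finpartition s := P.bind (fun A hA => σ ⟨A, hA⟩)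

lemma mem_pbind {q : Finset α} :
    q ∈ (pbind P σ).parts ↔ ∃ A : {x // x ∈ P.parts}, q ∈ (σ A).parts := by
  rw [pbind, Finpartition.mem_bind]
  constructor
  · rintro ⟨A, hA, h⟩; exact ⟨⟨A, hA⟩, h⟩
  · rintro ⟨⟨A, hA⟩, h⟩; exact ⟨A, hA, h⟩

lemma sigma_parts_disjoint {A A' : {x // x ∈ P.parts}} (hne : A ≠ A') :
    Disjoint ((σ A).parts) ((σ A').parts) := by
  rw [Finset.disjoint_left]
  intro q hq hq'
  obtain ⟨x, hx⟩ := (σ A).nonempty_of_mem_parts hq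
  have h1 : x ∈ (A : Finset α) := (σ A).le hq hx
  have h2 : x ∈ (A' : Finset α) := (σ A').le hq' hx
  have : (A : Finset α) = A' := P.eq_of_mem_parts A.2 A'.2 h1 h2
  exact hne (Subtype.ext this)

lemma sigma_parts_injective :
    Function.Injective (fun A : {x // x ∈ P.parts} => (σ A).parts) := by
  intro A A' h
  by_contra hne
  obtain ⟨x, hx⟩ := P.nonempty_of_mem_parts A.2
  obtain ⟨q, hq, hxq⟩ := (σ A).exists_mem hx
  have h' : (σ A).parts = (σ A').parts := h
  exact Finset.disjoint_left.1 (sigma_parts_disjoint P σ hne) hq (h' ▸ hq)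

/-- The partition of `(pbind P σ).parts` into the groups coming from each part of `P`. -/
def blocks : Finpartition (pbind P σ).parts where
  parts := P.parts.attach.image (fun A => (σ A).parts)
  supIndep := by
    rw [Finset.supIndep_iff_pairwiseDisjoint]
    intro B hB B' hB' hne
    simp only [coe_image, Set.mem_image, mem_coe] at hB hB'
    obtain ⟨A, _, rfl⟩ := hB
    obtain ⟨A', _, rfl⟩ := hB'
    exact sigma_parts_disjoint P σ (fun h => hne (by rw [h]))
  sup_parts := by
    rw [Finset.sup_image, Function.id_comp]
    apply le_antisymm
    · intro q hq
      rw [Finset.mem_sup] at hq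
      obtain ⟨A, _, hq⟩ := hq
      exact (mem_pbind P σ).2 ⟨A, hq⟩
    · intro q hq
      obtain ⟨A, hq⟩ := (mem_pbind P σ).1 hq
      rw [Finset.mem_sup]
      exact ⟨A, Finset.mem_attach _ _, hq⟩
  bot_notMem := by
    simp only [bot_eq_empty, Finset.mem_image]
    rintro ⟨A, _, h⟩
    have : (A : Finset α) = ∅ := by
      rw [← Finset.bot_eq_empty, ← Finpartition.parts_eq_empty_iff, h]
    exact (P.nonempty_of_mem_parts A.2).ne_empty this

lemma blocks_parts : (blocks P σ).parts = P.parts.attach.image (fun A => (σ A).parts) := rfl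

/-- HEq helper for second components of partitions of parts. -/
lemma heq_of_parts_eq {p p' : Finpartition s} (h : p = p')
    {ρ : Finpartition p.parts} {ρ' : Finpartition p'.parts}
    (hparts : ρ.parts = ρ'.parts) : HEq ρ ρ' := by
  subst h
  exact heq_of_eq (Finpartition.ext hparts)

lemma heq_of_sigma_eq {P P' : Finpartition s} (h : P = P')
    (σ : ∀ A : {x // x ∈ P.parts}, Finpartition (A.1 : Finset α))
    (σ' : ∀ A : {x // x ∈ P'.parts}, Finpartition (A.1 : Finset α))
    (hpt : ∀ (A : Finset α) (h1 : A ∈ P.parts) (h2 : A ∈ P'.parts),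
      (σ ⟨A, h1⟩).parts = (σ' ⟨A, h2⟩).parts) : HEq σ σ' := by
  subst h
  exact heq_of_eq (funext fun A => Finpartition.ext (hpt A.1 A.2 A.2))

end FusionAux

namespace FusionAux

variable {α : Type*} [DecidableEq α] {s : Finset α}

lemma pbind_fused_parts (p : Finpartition s) (ρ : Finpartition p.parts) :
    (pbind (fused p ρ) (fun A => restrictPart p ρ A.1 A.2)).parts = p.parts := by
  ext q
  rw [mem_pbind]
  constructor
  · rintro ⟨A, hq⟩
    exact (Finset.mem_filter.1 hq).1
  · intro hq
    obtain ⟨B, hB, hqB⟩ := ρ.exists_mem hq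
    refine ⟨⟨fuse B, (mem_fused_parts p ρ).2 ⟨B, hB, rfl⟩⟩, ?_⟩
    exact Finset.mem_filter.2 ⟨hq, subset_fuse hqB⟩

lemma blocks_fused_parts (p : Finpartition s) (ρ : Finpartition p.parts) :
    (blocks (fused p ρ) (fun A => restrictPart p ρ A.1 A.2)).parts = ρ.parts := by
  rw [blocks_parts]
  ext B
  rw [Finset.mem_image]
  constructor
  · rintro ⟨A, -, rfl⟩
    obtain ⟨B', hB', hA⟩ := (mem_fused_parts p ρ).1 A.2
    rw [restrictPart_parts, ← hA, filter_subset_fuse p ρ hB']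
    exact hB'
  · intro hB
    refine ⟨⟨fuse B, (mem_fused_parts p ρ).2 ⟨B, hB, rfl⟩⟩, Finset.mem_attach _ _, ?_⟩
    rw [restrictPart_parts, filter_subset_fuse p ρ hB]

lemma fused_pbind_parts (P : Finpartition s)
    (σ : ∀ A : {x // x ∈ P.parts}, Finpartition (A.1 : Finset α)) :
    (fused (pbind P σ) (blocks P σ)).parts = P.parts := by
  show (blocks P σ).parts.image fuse = P.parts
  rw [blocks_parts, Finset.image_image]
  have : ∀ A : {x // x ∈ P.parts}, fuse ((σ A).parts) = A.1 := fun A => (σ A).sup_parts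
  calc P.parts.attach.image (fun A => fuse ((σ A).parts))
      = P.parts.attach.image (fun A => A.1) := Finset.image_congr (fun A _ => this A)
    _ = P.parts := Finset.attach_image_val


lemma restrict_pbind_parts (P : Finpartition s)
    (σ : ∀ A : {x // x ∈ P.parts}, Finpartition (A.1 : Finset α))
    (A : Finset α) (h1 : A ∈ (fused (pbind P σ) (blocks P σ)).parts) (h2 : A ∈ P.parts) :
    (restrictPart (pbind P σ) (blocks P σ) A h1).parts = (σ ⟨A, h2⟩).parts := by
  rw [restrictPart_parts]
  ext q
  rw [Finset.mem_filter, mem_pbind]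
  constructor
  · rintro ⟨⟨A', hq⟩, hqA⟩
    obtain ⟨x, hx⟩ := (σ A').nonempty_of_mem_parts hq
    have hxA' : x ∈ (A' : Finset α) := (σ A').le hq hx
    have : (A' : Finset α) = A := P.eq_of_mem_parts A'.2 h2 hxA' (hqA hx)
    have hA' : A' = ⟨A, h2⟩ := Subtype.ext this
    exact hA' ▸ hq
  · intro hq
    exact ⟨⟨⟨A, h2⟩, hq⟩, (σ ⟨A, h2⟩).le hq⟩

/-- The fusion equivalence. -/
def fusionEquiv :
    (Σ p : Finpartition s, Finpartition p.parts) ≃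
      (Σ P : Finpartition s, ∀ A : {x // x ∈ P.parts}, Finpartition (A.1 : Finset α)) where
  toFun x := ⟨fused x.1 x.2, fun A => restrictPart x.1 x.2 A.1 A.2⟩
  invFun y := ⟨pbind y.1 y.2, blocks y.1 y.2⟩
  left_inv := by
    rintro ⟨p, ρ⟩
    have h1 : pbind (fused p ρ) (fun A => restrictPart p ρ A.1 A.2) = p :=
      Finpartition.ext (pbind_fused_parts p ρ)
    exact Sigma.ext h1 (heq_of_parts_eq h1 (blocks_fused_parts p ρ))
  right_inv := by
    rintro ⟨P, σ⟩
    have h1 : fused (pbind P σ) (blocks P σ) = P :=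
      Finpartition.ext (fused_pbind_parts P σ)
    refine Sigma.ext h1 (heq_of_sigma_eq h1 _ _ ?_)
    intro A hA h2
    exact restrict_pbind_parts P σ A hA h2

end FusionAux

namespace FusionAux

variable {α : Type*} [DecidableEq α]

section Fiber

variable (A : Finset α) {β : Type*} [DecidableEq β] (f : {a // a ∈ A} → β)

/-- The fiber of `f` through `a`, as a finset of `α`. -/
def cls (a : {a // a ∈ A}) : Finset α :=
  (A.attach.filter (fun b => f b = f a)).image Subtype.val

lemma mem_cls {x : α} {a : {a // a ∈ A}} :
    x ∈ cls A f a ↔ ∃ h : x ∈ A, f ⟨x, h⟩ = f a := by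
  simp only [cls, Finset.mem_image, Finset.mem_filter, Finset.mem_attach, true_and]
  constructor
  · rintro ⟨b, hb, rfl⟩
    exact ⟨b.2, hb⟩
  · rintro ⟨h, hf⟩
    exact ⟨⟨x, h⟩, hf, rfl⟩

lemma self_mem_cls (a : {a // a ∈ A}) : a.1 ∈ cls A f a := (mem_cls A f).2 ⟨a.2, rfl⟩

lemma cls_eq_of_eq {a a' : {a // a ∈ A}} (h : f a = f a') : cls A f a = cls A f a' := by
  ext x
  rw [mem_cls, mem_cls]
  exact exists_congr fun hx => by rw [h]

/-- The partition of `A` into fibers of `f`. -/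
def fiberPartition : Finpartition A where
  parts := A.attach.image (cls A f)
  supIndep := by
    rw [Finset.supIndep_iff_pairwiseDisjoint]
    intro q hq q' hq' hne
    simp only [coe_image, Set.mem_image, mem_coe] at hq hq'
    obtain ⟨a, -, rfl⟩ := hq
    obtain ⟨a', -, rfl⟩ := hq'
    rw [Function.onFun, Finset.disjoint_left]
    intro x hx hx'
    obtain ⟨h, hf⟩ := (mem_cls A f).1 hx
    obtain ⟨h', hf'⟩ := (mem_cls A f).1 hx'
    exact hne (cls_eq_of_eq A f (show f a = f a' by rw [← hf, ← hf']))
  sup_parts := by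
    apply le_antisymm
    · rw [Finset.sup_le_iff]
      intro q hq
      obtain ⟨a, -, rfl⟩ := Finset.mem_image.1 hq
      intro x hx
      exact ((mem_cls A f).1 hx).1
    · intro x hx
      rw [Finset.mem_sup]
      exact ⟨cls A f ⟨x, hx⟩, Finset.mem_image_of_mem _ (Finset.mem_attach _ _),
        self_mem_cls A f ⟨x, hx⟩⟩
  bot_notMem := by
    simp only [bot_eq_empty, Finset.mem_image]
    rintro ⟨a, -, h⟩
    exact Finset.notMem_empty a.1 (h ▸ self_mem_cls A f a)

lemma cls_eq_of_mem {q : Finset α} (hq : q ∈ (fiberPartition A f).parts)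
    {u : {a // a ∈ A}} (hu : u.1 ∈ q) : q = cls A f u := by
  obtain ⟨a, -, rfl⟩ := Finset.mem_image.1 hq
  obtain ⟨h, hf⟩ := (mem_cls A f).1 hu
  have hu' : (⟨u.1, h⟩ : {a // a ∈ A}) = u := Subtype.ext rfl
  exact (cls_eq_of_eq A f (show f u = f a by rw [← hu' ,hf])).symm

lemma fiber_const {q : Finset α} (hq : q ∈ (fiberPartition A f).parts)
    {u v : {a // a ∈ A}} (hu : u.1 ∈ q) (hv : v.1 ∈ q) : f u = f v := by
  rw [cls_eq_of_mem A f hq hu] at hv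
  obtain ⟨h, hf⟩ := (mem_cls A f).1 hv
  have hv' : (⟨v.1, h⟩ : {a // a ∈ A}) = v := Subtype.ext rfl
  rw [← hv', hf]

end Fiber

/-- A canonical representative of a part. -/
noncomputable def rep {A : Finset α} (σ : Finpartition A) (q : {q // q ∈ σ.parts}) :
    {a // a ∈ A} :=
  ⟨(σ.nonempty_of_mem_parts q.2).choose, σ.le q.2 (σ.nonempty_of_mem_parts q.2).choose_spec⟩

lemma rep_mem {A : Finset α} (σ : Finpartition A) (q : {q // q ∈ σ.parts}) :
    (rep σ q).1 ∈ q.1 :=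
  (σ.nonempty_of_mem_parts q.2).choose_spec

lemma emb_heq_helper {A : Finset α} {β : Type*} {σ σ' : Finpartition A} (h : σ = σ')
    (e : {q // q ∈ σ.parts} ↪ β) (e' : {q // q ∈ σ'.parts} ↪ β)
    (hpt : ∀ (q : Finset α) (h1 : q ∈ σ.parts) (h2 : q ∈ σ'.parts), e ⟨q, h1⟩ = e' ⟨q, h2⟩) :
    HEq e e' := by
  subst h
  exact heq_of_eq (Function.Embedding.ext fun q => hpt q.1 q.2 q.2)

/-- Counting equivalence: functions `A → Fin x` correspond to a partition of `A` together
with an injection of its parts into `Fin x`. -/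
noncomputable def stirlingEquiv (A : Finset α) (x : ℕ) :
    ({a // a ∈ A} → Fin x) ≃ Σ σ : Finpartition A, ({q // q ∈ σ.parts} ↪ Fin x) where
  toFun f :=
    ⟨fiberPartition A f,
      ⟨fun q => f (rep _ q), by
        intro q q' h
        have h1 := cls_eq_of_mem A f q.2 (rep_mem _ q)
        have h2 := cls_eq_of_mem A f q'.2 (rep_mem _ q')
        refine Subtype.ext ?_
        rw [h1, h2, cls_eq_of_eq A f h]⟩⟩
  invFun y := fun a => y.2 ⟨y.1.part a.1, y.1.part_mem.2 a.2⟩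
  left_inv f := by
    funext a
    exact fiber_const A f ((fiberPartition A f).part_mem.2 a.2)
      (rep_mem _ _) ((fiberPartition A f).mem_part a.2)
  right_inv := by
    rintro ⟨σ, e⟩
    set f : {a // a ∈ A} → Fin x := fun a => e ⟨σ.part a.1, σ.part_mem.2 a.2⟩ with hf
    have hcls : ∀ a : {a // a ∈ A}, cls A f a = σ.part a.1 := by
      intro a
      ext y
      rw [mem_cls]
      constructor
      · rintro ⟨h, hfy⟩
        have hparts : (⟨σ.part y, σ.part_mem.2 h⟩ : {q // q ∈ σ.parts}) =
            ⟨σ.part a.1, σ.part_mem.2 a.2⟩ := e.injective hfy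
        have : σ.part y = σ.part a.1 := congrArg Subtype.val hparts
        rw [← this]; exact σ.mem_part h
      · intro hy
        have hyA : y ∈ A := σ.le (σ.part_mem.2 a.2) hy
        refine ⟨hyA, ?_⟩
        simp only [hf]
        congr 1
        exact Subtype.ext (σ.part_eq_of_mem (σ.part_mem.2 a.2) hy)
    have h1 : fiberPartition A f = σ := by
      apply Finpartition.ext
      ext q
      simp only [fiberPartition, Finset.mem_image]
      constructor
      · rintro ⟨a, -, rfl⟩
        rw [hcls]
        exact σ.part_mem.2 a.2
      · intro hq
        obtain ⟨y, hyA, hy⟩ := σ.part_surjOn hq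
        exact ⟨⟨y, hyA⟩, Finset.mem_attach _ _, by rw [hcls]; exact hy⟩
    refine Sigma.ext h1 (emb_heq_helper h1 _ _ ?_)
    intro q h1q h2q
    have hr := rep_mem (fiberPartition A f) ⟨q, h1q⟩
    show e ⟨σ.part (rep (fiberPartition A f) ⟨q, h1q⟩).1,
      σ.part_mem.2 (rep (fiberPartition A f) ⟨q, h1q⟩).2⟩ = e ⟨q, h2q⟩
    exact congrArg e (Subtype.ext (σ.part_eq_of_mem h2q hr))

lemma sum_descFactorial (A : Finset α) (x : ℕ) :
    ∑ σ : Finpartition A, Nat.descFactorial x σ.parts.card = x ^ A.card := by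
  have h := Fintype.card_congr (stirlingEquiv A x)
  rw [Fintype.card_fun, Fintype.card_sigma, Fintype.card_coe, Fintype.card_fin] at h
  rw [h]
  apply Finset.sum_congr rfl
  intro σ _
  rw [Fintype.card_embedding_eq, Fintype.card_coe, Fintype.card_fin]

end FusionAux

open Finset FusionAux

namespace MainAux

variable {k n : ℕ} (b : ℕ → ℝ) (c' : ℤ → ℝ) (g : Fin k → ℕ)

lemma mval_eq {k n : ℕ} (p : Finpartition (Finset.univ : Finset (Fin k)))
    (m : {q // q ∈ p.parts} → {v : ℕ // v ∈ Finset.Icc 1 n}) {q : Finset (Fin k)}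
    (h : q ∈ p.parts) : mval p m q = m ⟨q, h⟩ := dif_pos h

lemma vpos {n : ℕ} (v : {v : ℕ // v ∈ Finset.Icc 1 n}) : 1 ≤ (v : ℕ) :=
  (Finset.mem_Icc.1 v.2).1

lemma vne {n : ℕ} (v : {v : ℕ // v ∈ Finset.Icc 1 n}) : ((v : ℕ) : ℝ) ≠ 0 :=
  Nat.cast_ne_zero.2 (by have := vpos v; omega)

lemma prod_zpow_const {ι : Type*} {x : ℝ} (hx : x ≠ 0) (s : Finset ι) (e : ι → ℤ) :
    ∏ i ∈ s, x ^ e i = x ^ (∑ i ∈ s, e i) := by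
  induction s using Finset.cons_induction with
  | empty => simp
  | cons a s ha ih => rw [Finset.prod_cons, Finset.sum_cons, ih, ← zpow_add₀ hx]

lemma pow_split (x : ℕ) (hx : 1 ≤ x) (e c : ℕ) :
    ((x : ℝ)) ^ e = (x : ℝ) ^ ((e : ℤ) - (c : ℤ)) * ((x ^ c : ℕ) : ℝ) := by
  have hx0 : (x : ℝ) ≠ 0 := Nat.cast_ne_zero.2 (by omega)
  rw [Nat.cast_pow, ← zpow_natCast (x : ℝ) e, ← zpow_natCast (x : ℝ) c, ← zpow_add₀ hx0,
    sub_add_cancel]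

/-- The ensemble-side summand, in fused form. -/
noncomputable def T (P : Finpartition (Finset.univ : Finset (Fin k)))
    (σ : ∀ A : {x // x ∈ P.parts}, Finpartition (A.1 : Finset (Fin k)))
    (M : {x // x ∈ P.parts} → {v : ℕ // v ∈ Finset.Icc 1 n}) : ℝ :=
  c' ((n : ℤ) - ∑ A ∈ P.parts.attach, ((M A : ℕ) : ℤ)) *
    ∏ A ∈ P.parts.attach,
      (b (M A) * ((M A : ℕ) : ℝ) ^ ((∑ i ∈ A.1, (g i : ℤ)) - (A.1.card : ℤ)) *
        (Nat.descFactorial (M A) ((σ A).parts.card) : ℝ))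

lemma lhs_expand (P : Finpartition (Finset.univ : Finset (Fin k)))
    (M : {x // x ∈ P.parts} → {v : ℕ // v ∈ Finset.Icc 1 n}) :
    c' ((n : ℤ) - ∑ q ∈ P.parts, (mval P M q : ℤ)) *
      ∏ q ∈ P.parts, (b (mval P M q) * (mval P M q : ℝ) ^ (∑ i ∈ q, g i)) =
    ∑ σ : ∀ A : {x // x ∈ P.parts}, Finpartition (A.1 : Finset (Fin k)), T b c' g P σ M := by
  have hsum : ∑ q ∈ P.parts, (mval P M q : ℤ) = ∑ A ∈ P.parts.attach, ((M A : ℕ) : ℤ) := by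
    rw [← Finset.sum_attach P.parts (fun q => (mval P M q : ℤ))]
    exact Finset.sum_congr rfl fun A _ => by rw [mval_eq P M A.2]
  have hprod : ∏ q ∈ P.parts, (b (mval P M q) * (mval P M q : ℝ) ^ (∑ i ∈ q, g i))
      = ∏ A ∈ P.parts.attach, (b (M A) * ((M A : ℕ) : ℝ) ^ (∑ i ∈ A.1, g i)) := by
    rw [← Finset.prod_attach P.parts (fun q => (b (mval P M q) * (mval P M q : ℝ) ^ (∑ i ∈ q, g i)))]
    exact Finset.prod_congr rfl fun A _ => by rw [mval_eq P M A.2]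
  rw [hsum, hprod]
  have key : ∀ A ∈ P.parts.attach, b (M A) * ((M A : ℕ) : ℝ) ^ (∑ i ∈ A.1, g i)
      = ∑ σA : Finpartition (A.1 : Finset (Fin k)),
          (b (M A) * ((M A : ℕ) : ℝ) ^ ((∑ i ∈ A.1, (g i : ℤ)) - (A.1.card : ℤ)) *
            (Nat.descFactorial (M A) (σA.parts.card) : ℝ)) := by
    intro A _
    rw [pow_split (M A) (vpos (M A)) (∑ i ∈ A.1, g i) A.1.card,
      ← sum_descFactorial A.1 (M A)]
    simp only [Nat.cast_sum]
    rw [Finset.mul_sum, Finset.mul_sum]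
    exact Finset.sum_congr rfl fun σA _ => by ring
  rw [Finset.prod_congr rfl key, ← Finset.univ_eq_attach, Fintype.prod_sum, Finset.mul_sum]
  unfold T
  rw [← Finset.univ_eq_attach]

end MainAux

namespace MainAux

open FusionAux

variable {k n : ℕ}

section Core

variable (p : Finpartition (Finset.univ : Finset (Fin k))) (ρ : Finpartition p.parts)

lemma mem_fused_of_mem {B : Finset (Finset (Fin k))} (hB : B ∈ ρ.parts) :
    fuse B ∈ (fused p ρ).parts := (mem_fused_parts p ρ).2 ⟨B, hB, rfl⟩

/-- From ensemble data to connected data. -/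
def jm (M : {A // A ∈ (fused p ρ).parts} → {v : ℕ // v ∈ Finset.Icc 1 n}) :
    {q // q ∈ p.parts} → {v : ℕ // v ∈ Finset.Icc 1 n} :=
  fun q => M ⟨fuse (ρ.part q.1), mem_fused_of_mem p ρ (ρ.part_mem.2 q.2)⟩

/-- From connected data to ensemble data. -/
def iM (m : {q // q ∈ p.parts} → {v : ℕ // v ∈ Finset.Icc 1 n}) :
    {A // A ∈ (fused p ρ).parts} → {v : ℕ // v ∈ Finset.Icc 1 n} :=
  fun A => m ⟨p.part (A.1.min' ((fused p ρ).nonempty_of_mem_parts A.2)),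
    p.part_mem.2 (Finset.mem_univ _)⟩

/-- `m` is constant on every block of `ρ`. -/
def Cm (m : {q // q ∈ p.parts} → {v : ℕ // v ∈ Finset.Icc 1 n}) : Prop :=
  ∀ B ∈ ρ.parts, ∀ q ∈ B, ∀ q' ∈ B, mval p m q = mval p m q'

instance : DecidablePred (Cm (n := n) p ρ) := fun _ => by unfold Cm; infer_instance

lemma mval_jm (M : {A // A ∈ (fused p ρ).parts} → {v : ℕ // v ∈ Finset.Icc 1 n})
    {q : Finset (Fin k)} (hq : q ∈ p.parts) :
    mval p (jm p ρ M) q = (M ⟨fuse (ρ.part q), mem_fused_of_mem p ρ (ρ.part_mem.2 hq)⟩ : ℕ) := by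
  rw [mval_eq p _ hq]; rfl

lemma fuse_part_part {a : Fin k} {A : Finset (Fin k)} (hA : A ∈ (fused p ρ).parts)
    (ha : a ∈ A) : fuse (ρ.part (p.part a)) = A := by
  have hq : p.part a ∈ p.parts := p.part_mem.2 (Finset.mem_univ a)
  have hB : ρ.part (p.part a) ∈ ρ.parts := ρ.part_mem.2 hq
  have h1 : a ∈ fuse (ρ.part (p.part a)) :=
    mem_fuse.2 ⟨p.part a, ρ.mem_part hq, p.mem_part (Finset.mem_univ a)⟩
  exact (fused p ρ).eq_of_mem_parts (mem_fused_of_mem p ρ hB) hA h1 ha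

lemma jm_const (M : {A // A ∈ (fused p ρ).parts} → {v : ℕ // v ∈ Finset.Icc 1 n}) :
    Cm p ρ (jm p ρ M) := by
  intro B hB q hq q' hq'
  rw [mval_jm p ρ M (ρ.le hB hq), mval_jm p ρ M (ρ.le hB hq')]
  have e1 : ρ.part q = B := ρ.part_eq_of_mem hB hq
  have e2 : ρ.part q' = B := ρ.part_eq_of_mem hB hq'
  have : (⟨fuse (ρ.part q), mem_fused_of_mem p ρ (ρ.part_mem.2 (ρ.le hB hq))⟩ :
      {A // A ∈ (fused p ρ).parts}) =
      ⟨fuse (ρ.part q'), mem_fused_of_mem p ρ (ρ.part_mem.2 (ρ.le hB hq'))⟩ :=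
    Subtype.ext (congrArg fuse (e1.trans e2.symm))
  exact congrArg (fun z => ((M z : ℕ))) this

lemma jm_iM (m : {q // q ∈ p.parts} → {v : ℕ // v ∈ Finset.Icc 1 n}) (hm : Cm p ρ m) :
    jm p ρ (iM p ρ m) = m := by
  funext q
  obtain ⟨q, hq⟩ := q
  set A : Finset (Fin k) := fuse (ρ.part q) with hA
  have hAmem : A ∈ (fused p ρ).parts := mem_fused_of_mem p ρ (ρ.part_mem.2 hq)
  have hAne : A.Nonempty := (fused p ρ).nonempty_of_mem_parts hAmem
  set a := A.min' hAne with ha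
  have haA : a ∈ A := A.min'_mem hAne
  obtain ⟨q', hq'B, haq'⟩ := mem_fuse.1 haA
  have hq'p : q' ∈ p.parts := ρ.le (ρ.part_mem.2 hq) hq'B
  have hpa : p.part a = q' := p.part_eq_of_mem hq'p haq'
  -- `jm (iM m) ⟨q, hq⟩ = m ⟨p.part a, _⟩`
  show iM p ρ m ⟨A, hAmem⟩ = m ⟨q, hq⟩
  have : iM p ρ m ⟨A, hAmem⟩ = m ⟨p.part a, p.part_mem.2 (Finset.mem_univ a)⟩ := rfl
  rw [this]
  have hmv : mval p m (p.part a) = mval p m q := by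
    have h1 : p.part a ∈ ρ.part q := by rw [hpa]; exact hq'B
    exact hm (ρ.part q) (ρ.part_mem.2 hq) _ h1 q (ρ.mem_part hq)
  rw [mval_eq p m (p.part_mem.2 (Finset.mem_univ a)), mval_eq p m hq] at hmv
  exact Subtype.ext hmv

lemma iM_jm (M : {A // A ∈ (fused p ρ).parts} → {v : ℕ // v ∈ Finset.Icc 1 n}) :
    iM p ρ (jm p ρ M) = M := by
  funext A
  have hAne : A.1.Nonempty := (fused p ρ).nonempty_of_mem_parts A.2
  set a := A.1.min' hAne with ha
  have haA : a ∈ A.1 := A.1.min'_mem hAne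
  show M ⟨fuse (ρ.part (p.part a)), _⟩ = M A
  congr 1
  exact Subtype.ext (fuse_part_part p ρ A.2 haA)

lemma sup_jm (M : {A // A ∈ (fused p ρ).parts} → {v : ℕ // v ∈ Finset.Icc 1 n})
    {B : Finset (Finset (Fin k))} (hB : B ∈ ρ.parts) :
    B.sup (mval p (jm p ρ M)) = mval (fused p ρ) M (fuse B) := by
  have hconst : ∀ q ∈ B, mval p (jm p ρ M) q = (M ⟨fuse B, mem_fused_of_mem p ρ hB⟩ : ℕ) := by
    intro q hq
    rw [mval_jm p ρ M (ρ.le hB hq)]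
    have : (⟨fuse (ρ.part q), mem_fused_of_mem p ρ (ρ.part_mem.2 (ρ.le hB hq))⟩ :
        {A // A ∈ (fused p ρ).parts}) = ⟨fuse B, mem_fused_of_mem p ρ hB⟩ :=
      Subtype.ext (congrArg fuse (ρ.part_eq_of_mem hB hq))
    exact congrArg (fun z => ((M z : ℕ))) this
  rw [Finset.sup_congr rfl hconst, Finset.sup_const (ρ.nonempty_of_mem_parts hB),
    mval_eq (fused p ρ) M (mem_fused_of_mem p ρ hB)]

end Core

end MainAux

namespace MainAux

open FusionAux

variable {k n : ℕ} (b : ℕ → ℝ) (c' : ℤ → ℝ) (g : Fin k → ℕ)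
variable (p : Finpartition (Finset.univ : Finset (Fin k))) (ρ : Finpartition p.parts)

lemma sum_sup_eq (M : {A // A ∈ (fused p ρ).parts} → {v : ℕ // v ∈ Finset.Icc 1 n}) :
    ∑ B ∈ ρ.parts, ((B.sup (mval p (jm p ρ M)) : ℕ) : ℤ) =
      ∑ A ∈ (fused p ρ).parts.attach, ((M A : ℕ) : ℤ) := by
  have hinj : ∀ x ∈ ρ.parts, ∀ y ∈ ρ.parts, fuse x = fuse y → x = y :=
    fun x hx y hy h => fuse_injOn p ρ hx hy h
  calc ∑ B ∈ ρ.parts, ((B.sup (mval p (jm p ρ M)) : ℕ) : ℤ)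
      = ∑ B ∈ ρ.parts, (mval (fused p ρ) M (fuse B) : ℤ) :=
        Finset.sum_congr rfl fun B hB => by rw [sup_jm p ρ M hB]
    _ = ∑ A ∈ ρ.parts.image fuse, (mval (fused p ρ) M A : ℤ) :=
        (Finset.sum_image (f := fun A => (mval (fused p ρ) M A : ℤ)) hinj).symm
    _ = ∑ A ∈ (fused p ρ).parts, (mval (fused p ρ) M A : ℤ) := rfl
    _ = ∑ A ∈ (fused p ρ).parts.attach, ((M A : ℕ) : ℤ) := by
        rw [← Finset.sum_attach (fused p ρ).parts (fun A => (mval (fused p ρ) M A : ℤ))]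
        exact Finset.sum_congr rfl fun A _ => by rw [mval_eq _ M A.2]

lemma prod_blocks_eq (M : {A // A ∈ (fused p ρ).parts} → {v : ℕ // v ∈ Finset.Icc 1 n}) :
    ∏ B ∈ ρ.parts,
      ((if ∀ q ∈ B, ∀ q' ∈ B, mval p (jm p ρ M) q = mval p (jm p ρ M) q' then (1 : ℝ) else 0) *
        b (B.sup (mval p (jm p ρ M))) *
        (Nat.descFactorial (B.sup (mval p (jm p ρ M))) B.card : ℝ)) =
    ∏ A ∈ (fused p ρ).parts.attach,
      (b (M A) *
        (Nat.descFactorial (M A) ((restrictPart p ρ A.1 A.2).parts.card) : ℝ)) := by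
  have hinj : ∀ x ∈ ρ.parts, ∀ y ∈ ρ.parts, fuse x = fuse y → x = y :=
    fun x hx y hy h => fuse_injOn p ρ hx hy h
  calc ∏ B ∈ ρ.parts,
      ((if ∀ q ∈ B, ∀ q' ∈ B, mval p (jm p ρ M) q = mval p (jm p ρ M) q' then (1 : ℝ) else 0) *
        b (B.sup (mval p (jm p ρ M))) *
        (Nat.descFactorial (B.sup (mval p (jm p ρ M))) B.card : ℝ))
      = ∏ B ∈ ρ.parts,
        (b (mval (fused p ρ) M (fuse B)) *
          (Nat.descFactorial (mval (fused p ρ) M (fuse B))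
            ((p.parts.filter (· ⊆ fuse B)).card) : ℝ)) := by
        refine Finset.prod_congr rfl fun B hB => ?_
        rw [if_pos (fun q hq q' hq' => jm_const p ρ M B hB q hq q' hq'), one_mul,
          sup_jm p ρ M hB, filter_subset_fuse p ρ hB]
    _ = ∏ A ∈ ρ.parts.image fuse,
        (b (mval (fused p ρ) M A) *
          (Nat.descFactorial (mval (fused p ρ) M A) ((p.parts.filter (· ⊆ A)).card) : ℝ)) :=
        (Finset.prod_image (f := fun A => (b (mval (fused p ρ) M A) *
          (Nat.descFactorial (mval (fused p ρ) M A) ((p.parts.filter (· ⊆ A)).card) : ℝ))) hinj).symm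
    _ = ∏ A ∈ (fused p ρ).parts.attach,
        (b (M A) *
          (Nat.descFactorial (M A) ((restrictPart p ρ A.1 A.2).parts.card) : ℝ)) := by
        rw [show ρ.parts.image fuse = (fused p ρ).parts from rfl,
          ← Finset.prod_attach (fused p ρ).parts
            (fun A => (b (mval (fused p ρ) M A) *
              (Nat.descFactorial (mval (fused p ρ) M A) ((p.parts.filter (· ⊆ A)).card) : ℝ)))]
        exact Finset.prod_congr rfl fun A _ => by rw [mval_eq _ M A.2]; rfl

lemma prod_parts_eq (M : {A // A ∈ (fused p ρ).parts} → {v : ℕ // v ∈ Finset.Icc 1 n}) :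
    ∏ q ∈ p.parts, ((mval p (jm p ρ M) q : ℝ)) ^ ((∑ i ∈ q, (g i : ℤ)) - (q.card : ℤ)) =
    ∏ A ∈ (fused p ρ).parts.attach,
      ((M A : ℕ) : ℝ) ^ ((∑ i ∈ A.1, (g i : ℤ)) - (A.1.card : ℤ)) := by
  have hparts : p.parts =
      (fused p ρ).parts.attach.biUnion (fun A => (restrictPart p ρ A.1 A.2).parts) := by
    rw [← pbind_fused_parts p ρ]; rfl
  have hdisj : (↑(fused p ρ).parts.attach : Set {A // A ∈ (fused p ρ).parts}).PairwiseDisjoint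
      (fun A => (restrictPart p ρ A.1 A.2).parts) := fun A _ A' _ hne =>
    sigma_parts_disjoint (fused p ρ) (fun A => restrictPart p ρ A.1 A.2) hne
  conv_lhs => rw [hparts]
  rw [Finset.prod_biUnion hdisj]
  refine Finset.prod_congr rfl fun A _ => ?_
  have hval : ∀ q ∈ (restrictPart p ρ A.1 A.2).parts,
      (mval p (jm p ρ M) q : ℝ) = ((M A : ℕ) : ℝ) := by
    intro q hq
    rw [restrictPart_parts] at hq
    obtain ⟨hqp, hsub⟩ := Finset.mem_filter.1 hq
    obtain ⟨x, hx⟩ := p.nonempty_of_mem_parts hqp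
    have hxA : x ∈ A.1 := hsub hx
    have hxF : x ∈ fuse (ρ.part q) := subset_fuse (ρ.mem_part hqp) hx
    have hAq : fuse (ρ.part q) = A.1 :=
      (fused p ρ).eq_of_mem_parts (mem_fused_of_mem p ρ (ρ.part_mem.2 hqp)) A.2 hxF hxA
    rw [mval_jm p ρ M hqp]
    exact_mod_cast congrArg (fun z => (((M z : ℕ) : ℝ)))
      (Subtype.ext hAq : (⟨fuse (ρ.part q), mem_fused_of_mem p ρ (ρ.part_mem.2 hqp)⟩ :
        {A // A ∈ (fused p ρ).parts}) = A)
  rw [Finset.prod_congr rfl (fun q hq => by rw [hval q hq]), prod_zpow_const (vne (M A))]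
  congr 1
  rw [Finset.sum_sub_distrib]
  congr 1
  · have hA1 : (restrictPart p ρ A.1 A.2).parts.biUnion id = A.1 :=
      Finpartition.biUnion_parts _
    conv_rhs => rw [← hA1]
    rw [Finset.sum_biUnion ((restrictPart p ρ A.1 A.2).supIndep.pairwiseDisjoint)]
    rfl
  · exact_mod_cast congrArg (Nat.cast : ℕ → ℤ) ((restrictPart p ρ A.1 A.2).sum_card_parts)

lemma core_summand (M : {A // A ∈ (fused p ρ).parts} → {v : ℕ // v ∈ Finset.Icc 1 n}) :
    c' ((n : ℤ) - ∑ B ∈ ρ.parts, ((B.sup (mval p (jm p ρ M)) : ℕ) : ℤ)) *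
      (∏ B ∈ ρ.parts,
        ((if ∀ q ∈ B, ∀ q' ∈ B, mval p (jm p ρ M) q = mval p (jm p ρ M) q'
            then (1 : ℝ) else 0) *
          b (B.sup (mval p (jm p ρ M))) *
          (Nat.descFactorial (B.sup (mval p (jm p ρ M))) B.card : ℝ))) *
      ∏ q ∈ p.parts, ((mval p (jm p ρ M) q : ℝ)) ^ ((∑ i ∈ q, (g i : ℤ)) - (q.card : ℤ)) =
    T b c' g (fused p ρ) (fun A => restrictPart p ρ A.1 A.2) M := by
  rw [sum_sup_eq p ρ M, prod_blocks_eq b p ρ M, prod_parts_eq g p ρ M]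
  unfold T
  rw [mul_assoc, ← Finset.prod_mul_distrib]
  congr 1
  exact Finset.prod_congr rfl fun A _ => by ring

end MainAux

namespace MainAux

open FusionAux

variable {k n : ℕ} (b : ℕ → ℝ) (c' : ℤ → ℝ) (g : Fin k → ℕ)

lemma core (p : Finpartition (Finset.univ : Finset (Fin k))) (ρ : Finpartition p.parts) :
    ∑ m : {q // q ∈ p.parts} → {v : ℕ // v ∈ Finset.Icc 1 n},
      c' ((n : ℤ) - ∑ B ∈ ρ.parts, ((B.sup (mval p m) : ℕ) : ℤ)) *
        (∏ B ∈ ρ.parts,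
          ((if ∀ q ∈ B, ∀ q' ∈ B, mval p m q = mval p m q' then (1 : ℝ) else 0) *
            b (B.sup (mval p m)) * (Nat.descFactorial (B.sup (mval p m)) B.card : ℝ))) *
        ∏ q ∈ p.parts, ((mval p m q : ℝ)) ^ ((∑ i ∈ q, (g i : ℤ)) - (q.card : ℤ)) =
    ∑ M : {A // A ∈ (fused p ρ).parts} → {v : ℕ // v ∈ Finset.Icc 1 n},
      T b c' g (fused p ρ) (fun A => restrictPart p ρ A.1 A.2) M := by
  rw [← Finset.sum_filter_of_ne (p := Cm p ρ) ?h0]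
  case h0 =>
    intro m _ hne
    by_contra hC
    apply hne
    unfold Cm at hC
    push_neg at hC
    obtain ⟨B, hB, q, hq, q', hq', hneq⟩ := hC
    have hnot : ¬(∀ q ∈ B, ∀ q' ∈ B, mval p m q = mval p m q') :=
      fun hall => hneq (hall q hq q' hq')
    have hzero : (∏ B ∈ ρ.parts,
        ((if ∀ q ∈ B, ∀ q' ∈ B, mval p m q = mval p m q' then (1 : ℝ) else 0) *
          b (B.sup (mval p m)) * (Nat.descFactorial (B.sup (mval p m)) B.card : ℝ))) = 0 :=
      Finset.prod_eq_zero hB (by rw [if_neg hnot]; ring)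
    rw [hzero, mul_zero, zero_mul]
  refine Finset.sum_nbij' (iM p ρ) (jm p ρ) ?_ ?_ ?_ ?_ ?_
  · intro m _; exact Finset.mem_univ _
  · intro M _
    exact Finset.mem_filter.2 ⟨Finset.mem_univ _, jm_const p ρ M⟩
  · intro m hm
    exact jm_iM p ρ m (Finset.mem_filter.1 hm).2
  · intro M _
    exact iM_jm p ρ M
  · intro m hm
    have hjm : jm p ρ (iM p ρ m) = m := jm_iM p ρ m (Finset.mem_filter.1 hm).2
    calc _ = c' ((n : ℤ) - ∑ B ∈ ρ.parts, ((B.sup (mval p (jm p ρ (iM p ρ m))) : ℕ) : ℤ)) *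
        (∏ B ∈ ρ.parts,
          ((if ∀ q ∈ B, ∀ q' ∈ B, mval p (jm p ρ (iM p ρ m)) q = mval p (jm p ρ (iM p ρ m)) q'
              then (1 : ℝ) else 0) *
            b (B.sup (mval p (jm p ρ (iM p ρ m)))) *
            (Nat.descFactorial (B.sup (mval p (jm p ρ (iM p ρ m)))) B.card : ℝ))) *
        ∏ q ∈ p.parts,
          ((mval p (jm p ρ (iM p ρ m)) q : ℝ)) ^ ((∑ i ∈ q, (g i : ℤ)) - (q.card : ℤ)) := by
          rw [hjm]
      _ = _ := core_summand b c' g p ρ (iM p ρ m)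

end MainAux

theorem connected_sum_side_eq_ensemble_side
    (b : ℕ → ℝ) (c : ℕ → ℝ)
    (c' : ℤ → ℝ) (hc'nat : ∀ j : ℕ, c' j = c j) (hc'neg : ∀ j : ℤ, j < 0 → c' j = 0)
    (k n : ℕ) (g : Fin k → ℕ) :
    ∑ p : Finpartition (Finset.univ : Finset (Fin k)),
      ∑ m : {q // q ∈ p.parts} → {v : ℕ // v ∈ Finset.Icc 1 n},
        c' ((n : ℤ) - ∑ q ∈ p.parts, (mval p m q : ℤ)) *
          ∏ q ∈ p.parts, (b (mval p m q) * (mval p m q : ℝ) ^ (∑ i ∈ q, g i)) =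
    ∑ p : Finpartition (Finset.univ : Finset (Fin k)),
      ∑ m : {q // q ∈ p.parts} → {v : ℕ // v ∈ Finset.Icc 1 n},
        (∑ ρ : Finpartition p.parts,
            c' ((n : ℤ) - ∑ B ∈ ρ.parts, ((B.sup (mval p m) : ℕ) : ℤ)) *
              ∏ B ∈ ρ.parts,
                ((if ∀ q ∈ B, ∀ q' ∈ B, mval p m q = mval p m q' then (1 : ℝ) else 0) *
                  b (B.sup (mval p m)) *
                  (Nat.descFactorial (B.sup (mval p m)) B.card : ℝ))) *
          ∏ q ∈ p.parts, ((mval p m q : ℝ)) ^ ((∑ i ∈ q, (g i : ℤ)) - (q.card : ℤ)) := by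
  classical
  calc
    ∑ p : Finpartition (Finset.univ : Finset (Fin k)),
      ∑ m : {q // q ∈ p.parts} → {v : ℕ // v ∈ Finset.Icc 1 n},
        c' ((n : ℤ) - ∑ q ∈ p.parts, (mval p m q : ℤ)) *
          ∏ q ∈ p.parts, (b (mval p m q) * (mval p m q : ℝ) ^ (∑ i ∈ q, g i))
      = ∑ P : Finpartition (Finset.univ : Finset (Fin k)),
          ∑ M : {x // x ∈ P.parts} → {v : ℕ // v ∈ Finset.Icc 1 n},
            ∑ σ : ∀ A : {x // x ∈ P.parts}, Finpartition (A.1 : Finset (Fin k)),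
              MainAux.T b c' g P σ M :=
        Finset.sum_congr rfl fun P _ => Finset.sum_congr rfl fun M _ =>
          MainAux.lhs_expand b c' g P M
    _ = ∑ P : Finpartition (Finset.univ : Finset (Fin k)),
          ∑ σ : ∀ A : {x // x ∈ P.parts}, Finpartition (A.1 : Finset (Fin k)),
            ∑ M : {x // x ∈ P.parts} → {v : ℕ // v ∈ Finset.Icc 1 n},
              MainAux.T b c' g P σ M :=
        Finset.sum_congr rfl fun P _ => Finset.sum_comm
    _ = ∑ y : Σ P : Finpartition (Finset.univ : Finset (Fin k)),
          ∀ A : {x // x ∈ P.parts}, Finpartition (A.1 : Finset (Fin k)),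
            ∑ M : {x // x ∈ y.1.parts} → {v : ℕ // v ∈ Finset.Icc 1 n},
              MainAux.T b c' g y.1 y.2 M := by
        rw [← Finset.univ_sigma_univ, Finset.sum_sigma]
    _ = ∑ x : Σ p : Finpartition (Finset.univ : Finset (Fin k)), Finpartition p.parts,
          ∑ m : {q // q ∈ x.1.parts} → {v : ℕ // v ∈ Finset.Icc 1 n},
            c' ((n : ℤ) - ∑ B ∈ x.2.parts, ((B.sup (mval x.1 m) : ℕ) : ℤ)) *
              (∏ B ∈ x.2.parts,
                ((if ∀ q ∈ B, ∀ q' ∈ B, mval x.1 m q = mval x.1 m q' then (1 : ℝ) else 0) *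
                  b (B.sup (mval x.1 m)) *
                  (Nat.descFactorial (B.sup (mval x.1 m)) B.card : ℝ))) *
              ∏ q ∈ x.1.parts,
                ((mval x.1 m q : ℝ)) ^ ((∑ i ∈ q, (g i : ℤ)) - (q.card : ℤ)) :=
        (Fintype.sum_equiv FusionAux.fusionEquiv _ _
          (fun x => MainAux.core b c' g x.1 x.2)).symm
    _ = ∑ p : Finpartition (Finset.univ : Finset (Fin k)),
          ∑ ρ : Finpartition p.parts,
            ∑ m : {q // q ∈ p.parts} → {v : ℕ // v ∈ Finset.Icc 1 n},
              c' ((n : ℤ) - ∑ B ∈ ρ.parts, ((B.sup (mval p m) : ℕ) : ℤ)) *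
                (∏ B ∈ ρ.parts,
                  ((if ∀ q ∈ B, ∀ q' ∈ B, mval p m q = mval p m q' then (1 : ℝ) else 0) *
                    b (B.sup (mval p m)) *
                    (Nat.descFactorial (B.sup (mval p m)) B.card : ℝ))) *
                ∏ q ∈ p.parts,
                  ((mval p m q : ℝ)) ^ ((∑ i ∈ q, (g i : ℤ)) - (q.card : ℤ)) := by
        rw [← Finset.univ_sigma_univ, Finset.sum_sigma]
    _ = ∑ p : Finpartition (Finset.univ : Finset (Fin k)),
          ∑ m : {q // q ∈ p.parts} → {v : ℕ // v ∈ Finset.Icc 1 n},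
            ∑ ρ : Finpartition p.parts,
              c' ((n : ℤ) - ∑ B ∈ ρ.parts, ((B.sup (mval p m) : ℕ) : ℤ)) *
                (∏ B ∈ ρ.parts,
                  ((if ∀ q ∈ B, ∀ q' ∈ B, mval p m q = mval p m q' then (1 : ℝ) else 0) *
                    b (B.sup (mval p m)) *
                    (Nat.descFactorial (B.sup (mval p m)) B.card : ℝ))) *
                ∏ q ∈ p.parts,
                  ((mval p m q : ℝ)) ^ ((∑ i ∈ q, (g i : ℤ)) - (q.card : ℤ)) :=
        Finset.sum_congr rfl fun p _ => Finset.sum_comm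
    _ = _ := by
        refine Finset.sum_congr rfl fun p _ => Finset.sum_congr rfl fun m _ => ?_
        rw [Finset.sum_mul]
end

section
/- Let b : ℕ → ℝ satisfy b 0 = 0 and b n ≥ 0 for all n, let k ∈ ℕ, and assume the series ∑_m (b m)·m^k is summable. Let c be the exponential coefficient sequence of b. Then c n ≥ 0 for all n, the series ∑_n (c n)·n^k is summable, ∑_n c n = Real.exp(∑_m b m), and ∑_n (c n)·n^k = Real.exp(∑_m b m) · ∑_p ∏_{q ∈ p.parts} ( ∑_m (b m)·m^(q.card) ), where the last sum runs over all finpartitions p of the full finset of Fin k. -/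
open Finset
open scoped ENNReal


open Finset

namespace MomExp

/-- `T b ℓ n = ∑_{v ∈ antidiagonalTuple ℓ n} ∏ i, b (v i)`. -/
noncomputable def T (b : ℕ → ℝ) (ℓ n : ℕ) : ℝ :=
  ∑ v ∈ Finset.Nat.antidiagonalTuple ℓ n, ∏ i, b (v i)

/-- The explicit exponential coefficient sequence. -/
noncomputable def cE (b : ℕ → ℝ) (n : ℕ) : ℝ :=
  ∑ ℓ ∈ range (n + 1), ((Nat.factorial ℓ : ℝ))⁻¹ * T b ℓ n

lemma exists_zero_coord {ℓ n : ℕ} (h : n < ℓ) {v : Fin ℓ → ℕ}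
    (hv : v ∈ Finset.Nat.antidiagonalTuple ℓ n) : ∃ i, v i = 0 := by
  rw [Finset.Nat.mem_antidiagonalTuple] at hv
  by_contra hz
  push_neg at hz
  have : ∀ i, 1 ≤ v i := fun i => Nat.one_le_iff_ne_zero.2 (hz i)
  have h1 : (ℓ : ℕ) ≤ ∑ i, v i := by
    calc ℓ = ∑ _i : Fin ℓ, 1 := by simp
    _ ≤ ∑ i, v i := Finset.sum_le_sum fun i _ => this i
  omega

lemma T_eq_zero (b : ℕ → ℝ) (hb0 : b 0 = 0) {ℓ n : ℕ} (h : n < ℓ) : T b ℓ n = 0 := by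
  refine Finset.sum_eq_zero fun v hv => ?_
  obtain ⟨i, hi⟩ := exists_zero_coord h hv
  exact Finset.prod_eq_zero (mem_univ i) (by rw [hi, hb0])

lemma cE_zero (b : ℕ → ℝ) : cE b 0 = 1 := by
  simp [cE, T, Finset.Nat.antidiagonalTuple_zero_zero]

end MomExp
namespace MomExp

lemma sum_adT_succ {M : Type*} [AddCommMonoid M] (ℓ n : ℕ) (f : (Fin (ℓ+1) → ℕ) → M) :
    ∑ v ∈ Finset.Nat.antidiagonalTuple (ℓ+1) n, f v
      = ∑ p ∈ Finset.HasAntidiagonal.antidiagonal n,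
          ∑ w ∈ Finset.Nat.antidiagonalTuple ℓ p.2, f (Fin.cons p.1 w) := by
  rw [Finset.sum_sigma']
  refine (Finset.sum_bij' (fun v _ => (⟨(v 0, n - v 0), Fin.tail v⟩ :
      Σ _p : ℕ × ℕ, Fin ℓ → ℕ)) (fun x _ => Fin.cons x.1.1 x.2) ?_ ?_ ?_ ?_ ?_)
  · intro v hv
    rw [Finset.Nat.mem_antidiagonalTuple] at hv
    have hs : v 0 + ∑ i, Fin.tail v i = n := by
      rw [← hv, Fin.sum_univ_succ]; rfl
    simp only [Finset.mem_sigma, Finset.HasAntidiagonal.mem_antidiagonal,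
      Finset.Nat.mem_antidiagonalTuple]
    omega
  · intro x hx
    simp only [Finset.mem_sigma, Finset.HasAntidiagonal.mem_antidiagonal,
      Finset.Nat.mem_antidiagonalTuple] at hx
    rw [Finset.Nat.mem_antidiagonalTuple, Fin.sum_cons, hx.2, hx.1]
  · intro v hv
    simp [Fin.cons_self_tail]
  · intro x hx
    simp only [Finset.mem_sigma, Finset.HasAntidiagonal.mem_antidiagonal,
      Finset.Nat.mem_antidiagonalTuple] at hx
    obtain ⟨⟨m, r⟩, w⟩ := x
    simp only at hx ⊢
    have h3 : r = n - m := by omega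
    subst h3
    simp [Fin.tail_cons]
  · intro v hv
    exact congrArg f (Fin.cons_self_tail v).symm

lemma sum_adT_perm {M : Type*} [AddCommMonoid M] (ℓ n : ℕ) (σ : Equiv.Perm (Fin ℓ))
    (f : (Fin ℓ → ℕ) → M) :
    ∑ v ∈ Finset.Nat.antidiagonalTuple ℓ n, f (v ∘ σ)
      = ∑ v ∈ Finset.Nat.antidiagonalTuple ℓ n, f v := by
  refine Finset.sum_bij' (fun v _ => v ∘ σ) (fun v _ => v ∘ σ.symm) ?_ ?_ ?_ ?_ ?_
  · intro v hv
    rw [Finset.Nat.mem_antidiagonalTuple] at hv ⊢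
    exact (Equiv.sum_comp σ v).trans hv
  · intro v hv
    rw [Finset.Nat.mem_antidiagonalTuple] at hv ⊢
    exact (Equiv.sum_comp σ.symm v).trans hv
  · intro v hv; funext i; simp
  · intro v hv; funext i; simp
  · intro v hv; rfl

end MomExp
namespace MomExp

lemma sum_coord_adT (b : ℕ → ℝ) (ℓ n : ℕ) (i : Fin (ℓ+1)) :
    ∑ v ∈ Finset.Nat.antidiagonalTuple (ℓ+1) n, (v i : ℝ) * ∏ j, b (v j)
      = ∑ p ∈ Finset.HasAntidiagonal.antidiagonal n, (p.1 : ℝ) * b p.1 * T b ℓ p.2 := by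
  have hswap : ∑ v ∈ Finset.Nat.antidiagonalTuple (ℓ+1) n, (v i : ℝ) * ∏ j, b (v j)
      = ∑ v ∈ Finset.Nat.antidiagonalTuple (ℓ+1) n, (v 0 : ℝ) * ∏ j, b (v j) := by
    have h := sum_adT_perm (ℓ+1) n (Equiv.swap 0 i)
      (fun v => (v 0 : ℝ) * ∏ j, b (v j))
    rw [← h]
    refine Finset.sum_congr rfl fun v hv => ?_
    simp only [Function.comp_apply, Function.comp]
    rw [Equiv.swap_apply_left]
    congr 1
    exact (Equiv.prod_comp (Equiv.swap 0 i) fun j => b (v j)).symm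
  rw [hswap, sum_adT_succ ℓ n (fun v => (v 0 : ℝ) * ∏ j, b (v j))]
  refine Finset.sum_congr rfl fun p hp => ?_
  rw [T, Finset.mul_sum]
  refine Finset.sum_congr rfl fun w hw => ?_
  simp [Fin.prod_univ_succ]
  ring

lemma n_mul_T_succ (b : ℕ → ℝ) (ℓ n : ℕ) :
    (n : ℝ) * T b (ℓ+1) n
      = ((ℓ : ℝ) + 1) * ∑ p ∈ Finset.HasAntidiagonal.antidiagonal n, (p.1 : ℝ) * b p.1 * T b ℓ p.2 := by
  rw [T, Finset.mul_sum]
  have h1 : ∀ v ∈ Finset.Nat.antidiagonalTuple (ℓ+1) n,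
      (n : ℝ) * ∏ j, b (v j) = ∑ i : Fin (ℓ+1), (v i : ℝ) * ∏ j, b (v j) := by
    intro v hv
    rw [Finset.Nat.mem_antidiagonalTuple] at hv
    rw [← Finset.sum_mul]
    congr 1
    rw [← hv]
    push_cast
    rfl
  rw [Finset.sum_congr rfl h1, Finset.sum_comm,
    Finset.sum_congr rfl (fun i _ => sum_coord_adT b ℓ n i),
    Finset.sum_const, Finset.card_univ, Fintype.card_fin, nsmul_eq_mul]
  push_cast
  ring

lemma T_zero_pos (b : ℕ → ℝ) {n : ℕ} (hn : 1 ≤ n) : T b 0 n = 0 := by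
  obtain ⟨m, rfl⟩ : ∃ m, n = m + 1 := ⟨n - 1, by omega⟩
  simp [T, Finset.Nat.antidiagonalTuple_zero_succ]

lemma cE_rec (b : ℕ → ℝ) (hb0 : b 0 = 0) {n : ℕ} (hn : 1 ≤ n) :
    (n : ℝ) * cE b n = ∑ m ∈ Finset.Icc 1 n, (m : ℝ) * b m * cE b (n - m) := by
  calc (n:ℝ) * cE b n
      = ∑ ℓ ∈ range (n+1), (Nat.factorial ℓ : ℝ)⁻¹ * ((n:ℝ) * T b ℓ n) := by
        rw [cE, Finset.mul_sum]; exact Finset.sum_congr rfl fun ℓ _ => by ring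
    _ = ∑ ℓ ∈ range n, (Nat.factorial (ℓ+1) : ℝ)⁻¹ * ((n:ℝ) * T b (ℓ+1) n)
          + (Nat.factorial 0 : ℝ)⁻¹ * ((n:ℝ) * T b 0 n) :=
        Finset.sum_range_succ' _ n
    _ = ∑ ℓ ∈ range n, (Nat.factorial ℓ : ℝ)⁻¹
          * ∑ p ∈ Finset.HasAntidiagonal.antidiagonal n, (p.1:ℝ) * b p.1 * T b ℓ p.2 := by
        rw [T_zero_pos b hn]
        simp only [mul_zero, add_zero]
        refine Finset.sum_congr rfl fun ℓ _ => ?_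
        rw [n_mul_T_succ, Nat.factorial_succ]
        have h2 : ((ℓ:ℝ) + 1) ≠ 0 := by positivity
        have h3 : (Nat.factorial ℓ : ℝ) ≠ 0 := by
          exact_mod_cast Nat.factorial_ne_zero ℓ
        push_cast
        field_simp
    _ = ∑ p ∈ Finset.HasAntidiagonal.antidiagonal n, (p.1:ℝ) * b p.1
          * ∑ ℓ ∈ range n, (Nat.factorial ℓ : ℝ)⁻¹ * T b ℓ p.2 := by
        have h4 : ∑ ℓ ∈ range n, (Nat.factorial ℓ : ℝ)⁻¹
              * ∑ p ∈ Finset.HasAntidiagonal.antidiagonal n, (p.1:ℝ) * b p.1 * T b ℓ p.2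
            = ∑ ℓ ∈ range n, ∑ p ∈ Finset.HasAntidiagonal.antidiagonal n,
                (Nat.factorial ℓ : ℝ)⁻¹ * ((p.1:ℝ) * b p.1 * T b ℓ p.2) :=
          Finset.sum_congr rfl fun ℓ _ => Finset.mul_sum _ _ _
        rw [h4, Finset.sum_comm]
        refine Finset.sum_congr rfl fun p _ => ?_
        rw [Finset.mul_sum]
        exact Finset.sum_congr rfl fun ℓ _ => by ring
    _ = ∑ p ∈ Finset.HasAntidiagonal.antidiagonal n, (p.1:ℝ) * b p.1 * cE b p.2 := by
        refine Finset.sum_congr rfl fun p hp => ?_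
        rcases eq_or_ne p.1 0 with h | h
        · simp [h]
        · have hp2 : p.2 < n := by
            rw [Finset.HasAntidiagonal.mem_antidiagonal] at hp; omega
          congr 1
          rw [cE]
          refine (Finset.sum_subset ?_ ?_).symm
          · intro x hx; simp only [Finset.mem_range] at hx ⊢; omega
          · intro x hx hnx
            simp only [Finset.mem_range] at hx hnx
            rw [T_eq_zero b hb0 (by omega), mul_zero]
    _ = ∑ m ∈ range (n+1), (m:ℝ) * b m * cE b (n - m) :=
        Finset.Nat.sum_antidiagonal_eq_sum_range_succ_mk _ n
    _ = ∑ m ∈ Finset.Icc 1 n, (m : ℝ) * b m * cE b (n - m) := by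
        refine (Finset.sum_subset ?_ ?_).symm
        · intro m hm; simp only [Finset.mem_Icc, Finset.mem_range] at hm ⊢; omega
        · intro m hm hnm
          have : m = 0 := by
            simp only [Finset.mem_Icc, Finset.mem_range] at hm hnm; omega
          simp [this]

lemma cE_nonneg (b : ℕ → ℝ) (hbnn : ∀ n, 0 ≤ b n) (n : ℕ) : 0 ≤ cE b n := by
  refine Finset.sum_nonneg fun ℓ _ => mul_nonneg (by positivity) ?_
  exact Finset.sum_nonneg fun v _ => Finset.prod_nonneg fun i _ => hbnn _

lemma c_eq_cE (b : ℕ → ℝ) (hb0 : b 0 = 0) (c : ℕ → ℝ) (hc0 : c 0 = 1)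
    (hc : ∀ n : ℕ, 1 ≤ n → (n : ℝ) * c n = ∑ m ∈ Finset.Icc 1 n, (m : ℝ) * b m * c (n - m)) :
    ∀ n, c n = cE b n := by
  intro n
  induction n using Nat.strong_induction_on with
  | _ n ih =>
    rcases Nat.eq_zero_or_pos n with rfl | hn
    · rw [hc0, cE_zero]
    · have h1 : (n : ℝ) * c n = (n : ℝ) * cE b n := by
        rw [hc n hn, cE_rec b hb0 hn]
        refine Finset.sum_congr rfl fun m hm => ?_
        rw [Finset.mem_Icc] at hm
        rw [ih (n - m) (by omega)]
      have h2 : (n : ℝ) ≠ 0 := by positivity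
      exact mul_left_cancel₀ h2 h1

end MomExp


namespace MomExp

lemma tsum_pi_prod : ∀ (ℓ : ℕ) (G : Fin ℓ → ℕ → ℝ≥0∞),
    ∑' v : Fin ℓ → ℕ, ∏ i, G i (v i) = ∏ i, ∑' m, G i m := by
  intro ℓ
  induction ℓ with
  | zero =>
    intro G
    rw [tsum_eq_single (fun i => i.elim0) ?_]
    · simp
    · intro v hv
      exact absurd (funext fun i => i.elim0) hv
  | succ ℓ ih =>
    intro G
    calc ∑' v : Fin (ℓ+1) → ℕ, ∏ i, G i (v i)
        = ∑' (a : ℕ) (w : Fin ℓ → ℕ), G 0 a * ∏ i : Fin ℓ, G i.succ (w i) := by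
          rw [← (Fin.consEquiv fun _ => ℕ).tsum_eq (fun v => ∏ i, G i (v i)),
            ENNReal.tsum_prod']
          refine tsum_congr fun a => tsum_congr fun w => ?_
          rw [show ((Fin.consEquiv fun _ => ℕ) (a, w) : Fin (ℓ+1) → ℕ)
            = Fin.cons a w from rfl, Fin.prod_univ_succ]
          simp
      _ = (∑' a, G 0 a) * ∑' w : Fin ℓ → ℕ, ∏ i : Fin ℓ, G i.succ (w i) := by
          rw [← ENNReal.tsum_mul_right]
          exact tsum_congr fun a => ENNReal.tsum_mul_left
      _ = (∑' a, G 0 a) * ∏ i : Fin ℓ, ∑' m, G i.succ m := by rw [ih]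
      _ = ∏ i, ∑' m, G i m := (Fin.prod_univ_succ fun i => ∑' m, G i m).symm

lemma tsum_sum_adT (ℓ : ℕ) (F : (Fin ℓ → ℕ) → ℝ≥0∞) :
    ∑' n : ℕ, ∑ v ∈ Finset.Nat.antidiagonalTuple ℓ n, F v = ∑' v : Fin ℓ → ℕ, F v := by
  have h1 : ∀ n : ℕ, ∑ v ∈ Finset.Nat.antidiagonalTuple ℓ n, F v
      = ∑' v : Fin ℓ → ℕ, if ∑ i, v i = n then F v else 0 := by
    intro n
    rw [tsum_eq_sum (s := Finset.Nat.antidiagonalTuple ℓ n)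
      (fun v hv => if_neg (by rwa [Finset.Nat.mem_antidiagonalTuple] at hv))]
    exact Finset.sum_congr rfl fun v hv =>
      (if_pos (Finset.Nat.mem_antidiagonalTuple.1 hv)).symm
  rw [tsum_congr h1, ENNReal.tsum_comm]
  refine tsum_congr fun v => ?_
  rw [show (fun n => if ∑ i, v i = n then F v else 0)
      = fun n => if n = ∑ i, v i then F v else 0
      from funext fun n => if_congr eq_comm rfl rfl]
  exact tsum_ite_eq _ _

end MomExp


namespace MomExp

variable {k ℓ : ℕ}

instance kerDec (g : Fin k → Fin ℓ) : DecidableRel ⇑(Setoid.ker g) :=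
  fun a b => decidable_of_iff (g a = g b) Iff.rfl

/-- The kernel finpartition of a function on `Fin k`. -/
noncomputable def kern (g : Fin k → Fin ℓ) : Finpartition (univ : Finset (Fin k)) :=
  Finpartition.ofSetoid (Setoid.ker g)

lemma kern_part (g : Fin k → Fin ℓ) (a : Fin k) :
    (kern g).part a = univ.filter fun t => g t = g a := by
  classical
  ext t
  rw [kern, Finpartition.mem_part_ofSetoid_iff_rel]
  simp only [Finset.mem_filter, Finset.mem_univ, true_and]
  exact ⟨fun h => h.symm, fun h => h.symm⟩

lemma mem_kern_parts {g : Fin k → Fin ℓ} {q : Finset (Fin k)} :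
    q ∈ (kern g).parts ↔ ∃ a : Fin k, q = univ.filter fun t => g t = g a := by
  constructor
  · intro hq
    obtain ⟨x, hx⟩ := (kern g).nonempty_of_mem_parts hq
    exact ⟨x, by rw [← (kern g).part_eq_of_mem hq hx, kern_part]⟩
  · rintro ⟨a, rfl⟩
    rw [← kern_part]
    exact (kern g).part_mem.2 (mem_univ a)

lemma prod_X_kern (X : ℕ → ℝ≥0∞) (g : Fin k → Fin ℓ) :
    ∏ i : Fin ℓ, X (univ.filter fun t => g t = i).card
      = X 0 ^ (ℓ - (kern g).parts.card) * ∏ q ∈ (kern g).parts, X q.card := by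
  classical
  set s := univ.image g with hs
  have hparts : (kern g).parts = s.image (fun i => univ.filter fun t => g t = i) := by
    ext q
    rw [mem_kern_parts]
    simp only [Finset.mem_image, hs, Finset.mem_univ, true_and]
    constructor
    · rintro ⟨a, rfl⟩; exact ⟨g a, ⟨a, rfl⟩, rfl⟩
    · rintro ⟨i, ⟨a, rfl⟩, rfl⟩; exact ⟨a, rfl⟩
  have hinj : ∀ i ∈ s, ∀ i' ∈ s,
      (univ.filter fun t => g t = i) = (univ.filter fun t => g t = i') → i = i' := by
    intro i hi i' hi' h
    rw [hs, Finset.mem_image] at hi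
    obtain ⟨a, _, rfl⟩ := hi
    have : a ∈ univ.filter fun t => g t = g a := by simp
    rw [h] at this
    exact (Finset.mem_filter.1 this).2
  have hcard : (kern g).parts.card = s.card := by
    rw [hparts, Finset.card_image_of_injOn hinj]
  have h1 : ∏ q ∈ (kern g).parts, X q.card
      = ∏ i ∈ s, X (univ.filter fun t => g t = i).card := by
    rw [hparts, Finset.prod_image hinj]
  have h2 : ∏ i ∈ sᶜ, X (univ.filter fun t => g t = i).card = X 0 ^ (ℓ - s.card) := by
    have hz : ∀ i ∈ sᶜ, X (univ.filter fun t => g t = i).card = X 0 := by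
      intro i hi
      congr 1
      rw [Finset.card_eq_zero, Finset.filter_eq_empty_iff]
      intro t _
      intro h
      exact (Finset.mem_compl.1 hi) (by rw [hs]; exact Finset.mem_image.2 ⟨t, mem_univ t, h⟩)
    rw [Finset.prod_congr rfl hz, Finset.prod_const, Finset.card_compl, Fintype.card_fin]
  rw [← Finset.prod_mul_prod_compl s (fun i => X (univ.filter fun t => g t = i).card),
    h1, h2, hcard, mul_comm]

lemma card_kern_fiber (p : Finpartition (univ : Finset (Fin k))) :
    (univ.filter fun g : Fin k → Fin ℓ => kern g = p).card
      = Nat.descFactorial ℓ p.parts.card := by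
  classical
  have helt : ∀ q : {q // q ∈ p.parts}, (p.nonempty_of_mem_parts q.2).choose ∈ q.1 :=
    fun q => (p.nonempty_of_mem_parts q.2).choose_spec
  -- key fact: parts of p are fibers of g whenever kern g = p
  have partFact : ∀ (g : Fin k → Fin ℓ), kern g = p → ∀ q ∈ p.parts, ∀ x ∈ q,
      q = univ.filter fun t => g t = g x := by
    intro g hg q hq x hx
    rw [← hg] at hq
    obtain ⟨a, rfl⟩ := mem_kern_parts.1 hq
    have hgx : g x = g a := (Finset.mem_filter.1 hx).2
    rw [hgx]
  rw [show Nat.descFactorial ℓ p.parts.card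
      = Fintype.card ({q // q ∈ p.parts} ↪ Fin ℓ) by
    rw [Fintype.card_embedding_eq, Fintype.card_fin, Fintype.card_coe]]
  rw [← Finset.card_univ]
  refine Finset.card_bij' (fun g hg => ?_) (fun e _ => fun t => e ⟨p.part t, p.part_mem.2 (mem_univ t)⟩) ?_ ?_ ?_ ?_
  · -- forward map: g ↦ embedding
    have hg' : kern g = p := (Finset.mem_filter.1 hg).2
    refine ⟨fun q => g ((p.nonempty_of_mem_parts q.2).choose), ?_⟩
    intro q q' h
    dsimp only at h
    have e1 := partFact g hg' q.1 q.2 _ (helt q)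
    have e2 := partFact g hg' q'.1 q'.2 _ (helt q')
    apply Subtype.ext
    rw [e1, e2, h]
  · intro g hg
    exact mem_univ _
  · -- backward map lands in the filter
    intro e _
    rw [Finset.mem_filter]
    refine ⟨mem_univ _, ?_⟩
    apply Finpartition.ext
    ext q
    rw [mem_kern_parts]
    constructor
    · rintro ⟨a, rfl⟩
      have : (univ.filter fun t =>
          e ⟨p.part t, p.part_mem.2 (mem_univ t)⟩ = e ⟨p.part a, p.part_mem.2 (mem_univ a)⟩)
          = p.part a := by
        ext t
        simp only [Finset.mem_filter, Finset.mem_univ, true_and]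
        constructor
        · intro ht
          have h2 := e.injective ht
          rw [Subtype.mk.injEq] at h2
          exact (p.mem_part_iff_part_eq_part (mem_univ t) (mem_univ a)).2 h2
        · intro ht
          exact congrArg e (Subtype.ext
            ((p.mem_part_iff_part_eq_part (mem_univ t) (mem_univ a)).1 ht))
      rw [this]
      exact p.part_mem.2 (mem_univ a)
    · intro hq
      obtain ⟨x, hx⟩ := p.nonempty_of_mem_parts hq
      refine ⟨x, ?_⟩
      have hqx : q = p.part x := (p.part_eq_of_mem hq hx).symm
      rw [hqx]
      ext t
      simp only [Finset.mem_filter, Finset.mem_univ, true_and]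
      constructor
      · intro ht
        congr 1
        exact Subtype.ext ((p.mem_part_iff_part_eq_part (mem_univ t) (mem_univ x)).1 ht)
      · intro ht
        have := e.injective ht
        rw [Subtype.mk.injEq] at this
        exact (p.mem_part_iff_part_eq_part (mem_univ t) (mem_univ x)).2 this
  · -- left inverse
    intro g hg
    have hg' : kern g = p := (Finset.mem_filter.1 hg).2
    funext t
    have hq := p.part_mem.2 (mem_univ t)
    have hfib := partFact g hg' (p.part t) hq _ (p.mem_part (mem_univ t))
    have key : ∀ x ∈ p.part t, g x = g t := by
      intro x hx
      rw [hfib] at hx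
      exact (Finset.mem_filter.1 hx).2
    exact key _ (p.nonempty_of_mem_parts hq).choose_spec
  · -- right inverse
    intro e _
    refine DFunLike.ext _ _ fun q => ?_
    exact congrArg e (Subtype.ext (p.part_eq_of_mem q.2 (helt q)))

end MomExp
namespace MomExp

noncomputable def XE (b : ℕ → ℝ) (d : ℕ) : ℝ≥0∞ :=
  ∑' m : ℕ, ENNReal.ofReal (b m) * (m : ℝ≥0∞) ^ d

lemma T_nonneg (b : ℕ → ℝ) (hbnn : ∀ n, 0 ≤ b n) (ℓ n : ℕ) : 0 ≤ T b ℓ n :=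
  Finset.sum_nonneg fun v _ => Finset.prod_nonneg fun i _ => hbnn _

lemma ofReal_cE (b : ℕ → ℝ) (hbnn : ∀ n, 0 ≤ b n) (n : ℕ) :
    ENNReal.ofReal (cE b n)
      = ∑ ℓ ∈ range (n+1), ((Nat.factorial ℓ : ℝ≥0∞))⁻¹
          * ∑ v ∈ Finset.Nat.antidiagonalTuple ℓ n, ∏ i, ENNReal.ofReal (b (v i)) := by
  rw [cE, ENNReal.ofReal_sum_of_nonneg (fun ℓ _ => mul_nonneg (by positivity)
    (T_nonneg b hbnn ℓ n))]
  refine Finset.sum_congr rfl fun ℓ _ => ?_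
  rw [ENNReal.ofReal_mul (by positivity)]
  congr 1
  · rw [ENNReal.ofReal_inv_of_pos (by positivity), ENNReal.ofReal_natCast]
  · rw [T, ENNReal.ofReal_sum_of_nonneg
      (fun v _ => Finset.prod_nonneg fun i _ => hbnn _)]
    exact Finset.sum_congr rfl fun v _ =>
      ENNReal.ofReal_prod_of_nonneg fun i _ => hbnn _

theorem master (b : ℕ → ℝ) (hb0 : b 0 = 0) (hbnn : ∀ n, 0 ≤ b n) (k : ℕ) :
    ∑' n : ℕ, ENNReal.ofReal (cE b n) * (n : ℝ≥0∞) ^ k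
      = (∑' j : ℕ, (XE b 0) ^ j * ((Nat.factorial j : ℝ≥0∞))⁻¹)
        * ∑ p : Finpartition (univ : Finset (Fin k)),
            ∏ q ∈ p.parts, XE b q.card := by
  classical
  set B : ℕ → ℝ≥0∞ := fun m => ENNReal.ofReal (b m) with hB
  have hB0 : B 0 = 0 := by rw [hB]; simp [hb0]
  -- weighted sums
  set W : ℕ → ℕ → ℝ≥0∞ := fun ℓ n =>
    ∑ v ∈ Finset.Nat.antidiagonalTuple ℓ n,
      (∏ i, B (v i)) * (((∑ i, v i : ℕ) : ℝ≥0∞)) ^ k with hWdef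
  have hW : ∀ n : ℕ, ENNReal.ofReal (cE b n) * (n : ℝ≥0∞) ^ k
      = ∑ ℓ ∈ range (n+1), ((Nat.factorial ℓ : ℝ≥0∞))⁻¹ * W ℓ n := by
    intro n
    rw [ofReal_cE b hbnn n, Finset.sum_mul]
    refine Finset.sum_congr rfl fun ℓ _ => ?_
    rw [mul_assoc]
    congr 1
    rw [hWdef, Finset.sum_mul]
    refine Finset.sum_congr rfl fun v hv => ?_
    rw [Finset.Nat.mem_antidiagonalTuple] at hv
    rw [hv]
  have hvan : ∀ ℓ n : ℕ, n < ℓ → W ℓ n = 0 := by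
    intro ℓ n h
    refine Finset.sum_eq_zero fun v hv => ?_
    obtain ⟨i, hi⟩ := exists_zero_coord h hv
    rw [Finset.prod_eq_zero (mem_univ i) (by rw [hi, hB0]), zero_mul]
  -- fiber cardinality function
  have key : ∀ ℓ : ℕ, (∑' n : ℕ, W ℓ n)
      = ∑ g : Fin k → Fin ℓ, ∏ i : Fin ℓ, XE b ((univ.filter fun t => g t = i).card) := by
    intro ℓ
    rw [hWdef, tsum_sum_adT ℓ (fun v => (∏ i, B (v i)) * (((∑ i, v i : ℕ) : ℝ≥0∞)) ^ k)]
    have hpow : ∀ v : Fin ℓ → ℕ, (((∑ i, v i : ℕ) : ℝ≥0∞)) ^ k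
        = ∑ g : Fin k → Fin ℓ, ∏ i : Fin ℓ,
            ((v i : ℕ) : ℝ≥0∞) ^ ((univ.filter fun t => g t = i).card) := by
      intro v
      calc (((∑ i, v i : ℕ) : ℝ≥0∞)) ^ k
          = (∑ i, ((v i : ℕ) : ℝ≥0∞)) ^ k := by push_cast; rfl
        _ = ∏ _t : Fin k, (∑ i, ((v i : ℕ) : ℝ≥0∞)) := by
            rw [Finset.prod_const, Finset.card_univ, Fintype.card_fin]
        _ = ∑ g ∈ Fintype.piFinset (fun _ : Fin k => (univ : Finset (Fin ℓ))),
              ∏ t : Fin k, ((v (g t) : ℕ) : ℝ≥0∞) := Finset.prod_univ_sum _ _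
        _ = ∑ g : Fin k → Fin ℓ, ∏ t : Fin k, ((v (g t) : ℕ) : ℝ≥0∞) := by
            rw [Fintype.piFinset_univ]
        _ = ∑ g : Fin k → Fin ℓ, ∏ i : Fin ℓ,
              ((v i : ℕ) : ℝ≥0∞) ^ ((univ.filter fun t => g t = i).card) := by
            refine Finset.sum_congr rfl fun g _ => ?_
            rw [← Finset.prod_fiberwise_of_maps_to (g := g)
              (fun t (_ : t ∈ (univ : Finset (Fin k))) => mem_univ (g t))
              (fun t => ((v (g t) : ℕ) : ℝ≥0∞))]
            refine Finset.prod_congr rfl fun i _ => ?_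
            rw [Finset.prod_congr rfl
              (fun t ht => by rw [(Finset.mem_filter.1 ht).2]), Finset.prod_const]
    calc ∑' v : Fin ℓ → ℕ, (∏ i, B (v i)) * (((∑ i, v i : ℕ) : ℝ≥0∞)) ^ k
        = ∑' v : Fin ℓ → ℕ, ∑ g : Fin k → Fin ℓ, ∏ i : Fin ℓ,
            (B (v i) * ((v i : ℕ) : ℝ≥0∞) ^ ((univ.filter fun t => g t = i).card)) := by
          refine tsum_congr fun v => ?_
          rw [hpow v, Finset.mul_sum]
          exact Finset.sum_congr rfl fun g _ => (Finset.prod_mul_distrib).symm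
      _ = ∑ g : Fin k → Fin ℓ, ∑' v : Fin ℓ → ℕ, ∏ i : Fin ℓ,
            (B (v i) * ((v i : ℕ) : ℝ≥0∞) ^ ((univ.filter fun t => g t = i).card)) :=
          Summable.tsum_finsetSum fun g _ => ENNReal.summable
      _ = ∑ g : Fin k → Fin ℓ, ∏ i : Fin ℓ, XE b ((univ.filter fun t => g t = i).card) := by
          refine Finset.sum_congr rfl fun g _ => ?_
          exact tsum_pi_prod ℓ fun i m => B m * ((m : ℕ) : ℝ≥0∞) ^ ((univ.filter fun t => g t = i).card)
  -- group by kernel partition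
  have group : ∀ ℓ : ℕ,
      (∑ g : Fin k → Fin ℓ, ∏ i : Fin ℓ, XE b ((univ.filter fun t => g t = i).card))
      = ∑ p : Finpartition (univ : Finset (Fin k)),
          (ℓ.descFactorial p.parts.card : ℝ≥0∞)
            * ((XE b 0) ^ (ℓ - p.parts.card) * ∏ q ∈ p.parts, XE b q.card) := by
    intro ℓ
    rw [← Finset.sum_fiberwise_of_maps_to (g := fun g : Fin k → Fin ℓ => kern g)
      (fun g _ => mem_univ (kern g))
      (fun g => ∏ i : Fin ℓ, XE b ((univ.filter fun t => g t = i).card))]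
    refine Finset.sum_congr rfl fun p _ => ?_
    have hconst : ∀ g ∈ univ.filter fun g : Fin k → Fin ℓ => kern g = p,
        (∏ i : Fin ℓ, XE b ((univ.filter fun t => g t = i).card))
          = (XE b 0) ^ (ℓ - p.parts.card) * ∏ q ∈ p.parts, XE b q.card := by
      intro g hg
      have hg' : kern g = p := (Finset.mem_filter.1 hg).2
      rw [prod_X_kern (XE b) g, hg']
    rw [Finset.sum_congr rfl hconst, Finset.sum_const, card_kern_fiber p, nsmul_eq_mul]
  -- assemble
  calc ∑' n : ℕ, ENNReal.ofReal (cE b n) * (n : ℝ≥0∞) ^ k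
      = ∑' n : ℕ, ∑' ℓ : ℕ, ((Nat.factorial ℓ : ℝ≥0∞))⁻¹ * W ℓ n := by
        refine tsum_congr fun n => ?_
        rw [hW n]
        refine (tsum_eq_sum fun ℓ hℓ => ?_).symm
        rw [Finset.mem_range, not_lt] at hℓ
        rw [hvan ℓ n (by omega), mul_zero]
    _ = ∑' ℓ : ℕ, ((Nat.factorial ℓ : ℝ≥0∞))⁻¹ * ∑' n : ℕ, W ℓ n := by
        rw [ENNReal.tsum_comm]
        exact tsum_congr fun ℓ => ENNReal.tsum_mul_left
    _ = ∑' ℓ : ℕ, ((Nat.factorial ℓ : ℝ≥0∞))⁻¹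
          * ∑ p : Finpartition (univ : Finset (Fin k)),
              (ℓ.descFactorial p.parts.card : ℝ≥0∞)
                * ((XE b 0) ^ (ℓ - p.parts.card) * ∏ q ∈ p.parts, XE b q.card) := by
        refine tsum_congr fun ℓ => ?_
        rw [key ℓ, group ℓ]
    _ = ∑ p : Finpartition (univ : Finset (Fin k)), ∑' ℓ : ℕ,
          ((Nat.factorial ℓ : ℝ≥0∞))⁻¹ * ((ℓ.descFactorial p.parts.card : ℝ≥0∞)
            * ((XE b 0) ^ (ℓ - p.parts.card) * ∏ q ∈ p.parts, XE b q.card)) := by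
        rw [← Summable.tsum_finsetSum fun p _ => ENNReal.summable]
        exact tsum_congr fun ℓ => Finset.mul_sum _ _ _
    _ = ∑ p : Finpartition (univ : Finset (Fin k)),
          (∑' j : ℕ, (XE b 0) ^ j * ((Nat.factorial j : ℝ≥0∞))⁻¹)
            * ∏ q ∈ p.parts, XE b q.card := by
        refine Finset.sum_congr rfl fun p _ => ?_
        set r := p.parts.card
        set P : ℝ≥0∞ := ∏ q ∈ p.parts, XE b q.card with hP
        set f : ℕ → ℝ≥0∞ := fun ℓ => ((Nat.factorial ℓ : ℝ≥0∞))⁻¹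
          * ((ℓ.descFactorial r : ℝ≥0∞) * ((XE b 0) ^ (ℓ - r) * P)) with hf
        have hinj : Function.Injective (fun j : ℕ => j + r) := add_left_injective r
        have hvanish : ∀ ℓ, ℓ ∉ Set.range (fun j : ℕ => j + r) → f ℓ = 0 := by
          intro ℓ hℓ
          have hlt : ℓ < r := by
            by_contra hc
            exact hℓ ⟨ℓ - r, by dsimp only; omega⟩
          rw [hf]
          simp only [Nat.descFactorial_eq_zero_iff_lt.2 hlt, Nat.cast_zero, zero_mul, mul_zero]
        have heq : ∑' ℓ, f ℓ = ∑' j, f (j + r) :=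
          (((Function.Injective.hasSum_iff hinj hvanish).2 ENNReal.summable.hasSum).tsum_eq).symm
        have hterm : ∀ j : ℕ, f (j + r) = (XE b 0) ^ j * ((Nat.factorial j : ℝ≥0∞))⁻¹ * P := by
          intro j
          have hfac : (j + r).descFactorial r * (Nat.factorial j) = Nat.factorial (j + r) := by
            have h := Nat.factorial_mul_descFactorial (Nat.le_add_left r j)
            simpa [Nat.add_sub_cancel, mul_comm] using h
          have hd0 : ((j + r).descFactorial r : ℝ≥0∞) ≠ 0 := by
            rw [Ne, Nat.cast_eq_zero, Nat.descFactorial_eq_zero_iff_lt]; omega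
          have hdt : ((j + r).descFactorial r : ℝ≥0∞) ≠ ⊤ := ENNReal.natCast_ne_top _
          have hmain : ((Nat.factorial (j + r) : ℝ≥0∞))⁻¹ * ((j + r).descFactorial r : ℝ≥0∞)
              = ((Nat.factorial j : ℝ≥0∞))⁻¹ := by
            rw [← hfac]
            push_cast
            rw [ENNReal.mul_inv (Or.inl hd0) (Or.inl hdt), mul_comm
              (((j + r).descFactorial r : ℝ≥0∞))⁻¹, mul_assoc,
              ENNReal.inv_mul_cancel hd0 hdt, mul_one]
          rw [hf]
          simp only [Nat.add_sub_cancel]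
          rw [← mul_assoc, hmain]
          ring
        rw [heq, tsum_congr hterm, ENNReal.tsum_mul_right]
    _ = (∑' j : ℕ, (XE b 0) ^ j * ((Nat.factorial j : ℝ≥0∞))⁻¹)
        * ∑ p : Finpartition (univ : Finset (Fin k)), ∏ q ∈ p.parts, XE b q.card := by
        rw [Finset.mul_sum]

end MomExp
namespace MomExp

set_option maxHeartbeats 1000000 in
theorem final (b : ℕ → ℝ) (hb0 : b 0 = 0) (hbnn : ∀ n, 0 ≤ b n)
    (k : ℕ) (hsum : Summable fun m : ℕ => b m * (m : ℝ) ^ k) :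
    Summable (fun n : ℕ => cE b n * (n : ℝ) ^ k) ∧
    ∑' n : ℕ, cE b n * (n : ℝ) ^ k =
      Real.exp (∑' m : ℕ, b m) *
        ∑ p : Finpartition (univ : Finset (Fin k)),
          ∏ q ∈ p.parts, (∑' m : ℕ, b m * (m : ℝ) ^ q.card) := by
  classical
  have hd : ∀ d, d ≤ k → Summable (fun m : ℕ => b m * (m : ℝ) ^ d) := by
    intro d hdk
    refine Summable.of_nonneg_of_le (fun m => mul_nonneg (hbnn m) (by positivity)) (fun m => ?_) hsum
    rcases Nat.eq_zero_or_pos m with rfl | hm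
    · simp [hb0]
    · refine mul_le_mul_of_nonneg_left ?_ (hbnn m)
      exact pow_le_pow_right₀ (by exact_mod_cast hm) hdk
  have hXE : ∀ d, d ≤ k → XE b d = ENNReal.ofReal (∑' m : ℕ, b m * (m : ℝ) ^ d) := by
    intro d hdk
    rw [XE, ENNReal.ofReal_tsum_of_nonneg (fun m => mul_nonneg (hbnn m) (by positivity)) (hd d hdk)]
    refine tsum_congr fun m => ?_
    rw [ENNReal.ofReal_mul (hbnn m), ENNReal.ofReal_pow (by positivity),
      ENNReal.ofReal_natCast]
  have hsum0 : Summable b := by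
    have := hd 0 (Nat.zero_le k)
    simpa using this
  set x0 : ℝ := ∑' m : ℕ, b m with hx0def
  have hx0 : 0 ≤ x0 := tsum_nonneg hbnn
  have hXE0 : XE b 0 = ENNReal.ofReal x0 := by
    rw [hXE 0 (Nat.zero_le k)]
    congr 1
    exact tsum_congr fun m => by rw [pow_zero, mul_one]
  have hEE : (∑' j : ℕ, (XE b 0) ^ j * ((Nat.factorial j : ℝ≥0∞))⁻¹)
      = ENNReal.ofReal (Real.exp x0) := by
    have hexp : Real.exp x0 = ∑' j : ℕ, x0 ^ j / (Nat.factorial j) := by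
      rw [Real.exp_eq_exp_ℝ, NormedSpace.exp_eq_tsum_div]
    rw [hexp, ENNReal.ofReal_tsum_of_nonneg (fun j => by positivity)
      (Real.summable_pow_div_factorial x0)]
    refine tsum_congr fun j => ?_
    rw [div_eq_mul_inv, ENNReal.ofReal_mul (by positivity), ENNReal.ofReal_pow hx0,
      ENNReal.ofReal_inv_of_pos (by positivity), ENNReal.ofReal_natCast, hXE0]
  set S : ℝ := ∑ p : Finpartition (univ : Finset (Fin k)),
      ∏ q ∈ p.parts, (∑' m : ℕ, b m * (m : ℝ) ^ q.card) with hSdef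
  have hxq : ∀ d : ℕ, 0 ≤ ∑' m : ℕ, b m * (m : ℝ) ^ d :=
    fun d => tsum_nonneg fun m => mul_nonneg (hbnn m) (by positivity)
  have hS : 0 ≤ S := Finset.sum_nonneg fun p _ =>
    Finset.prod_nonneg fun q _ => hxq _
  have hcardle : ∀ (p : Finpartition (univ : Finset (Fin k))), ∀ q ∈ p.parts, q.card ≤ k := by
    intro p q hq
    have : q ⊆ univ := fun x _ => mem_univ x
    calc q.card ≤ (univ : Finset (Fin k)).card := Finset.card_le_card this
    _ = k := by rw [Finset.card_univ, Fintype.card_fin]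
  have hpart : ∀ p : Finpartition (univ : Finset (Fin k)),
      ∏ q ∈ p.parts, XE b q.card
        = ENNReal.ofReal (∏ q ∈ p.parts, (∑' m : ℕ, b m * (m : ℝ) ^ q.card)) := by
    intro p
    rw [ENNReal.ofReal_prod_of_nonneg (fun q _ => hxq _)]
    exact Finset.prod_congr rfl fun q hq => hXE q.card (hcardle p q hq)
  have hRHS : (∑' j : ℕ, (XE b 0) ^ j * ((Nat.factorial j : ℝ≥0∞))⁻¹)
        * ∑ p : Finpartition (univ : Finset (Fin k)), ∏ q ∈ p.parts, XE b q.card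
      = ENNReal.ofReal (Real.exp x0 * S) := by
    rw [hEE, ENNReal.ofReal_mul (Real.exp_nonneg x0)]
    congr 1
    rw [hSdef, ENNReal.ofReal_sum_of_nonneg
      (fun p _ => Finset.prod_nonneg fun q _ => hxq _)]
    exact Finset.sum_congr rfl fun p _ => hpart p
  have hterm : ∀ n : ℕ, ENNReal.ofReal (cE b n * (n : ℝ) ^ k)
      = ENNReal.ofReal (cE b n) * (n : ℝ≥0∞) ^ k := by
    intro n
    rw [ENNReal.ofReal_mul (cE_nonneg b hbnn n), ENNReal.ofReal_pow (by positivity),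
      ENNReal.ofReal_natCast]
  have hENN : ∑' n : ℕ, ENNReal.ofReal (cE b n * (n : ℝ) ^ k)
      = ENNReal.ofReal (Real.exp x0 * S) := by
    rw [tsum_congr hterm, master b hb0 hbnn k, hRHS]
  have hnn : ∀ n : ℕ, 0 ≤ cE b n * (n : ℝ) ^ k :=
    fun n => mul_nonneg (cE_nonneg b hbnn n) (by positivity)
  have hsummable : Summable (fun n : ℕ => cE b n * (n : ℝ) ^ k) := by
    have h1 : Summable (fun n : ℕ => (ENNReal.ofReal (cE b n * (n : ℝ) ^ k)).toReal) :=
      ENNReal.summable_toReal (by rw [hENN]; exact ENNReal.ofReal_ne_top)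
    refine h1.congr fun n => ?_
    rw [ENNReal.toReal_ofReal (hnn n)]
  refine ⟨hsummable, ?_⟩
  have h2 : ∑' n : ℕ, cE b n * (n : ℝ) ^ k
      = (∑' n : ℕ, ENNReal.ofReal (cE b n * (n : ℝ) ^ k)).toReal := by
    rw [ENNReal.tsum_toReal_eq fun n => ENNReal.ofReal_ne_top]
    exact tsum_congr fun n => (ENNReal.toReal_ofReal (hnn n)).symm
  rw [h2, hENN, ENNReal.toReal_ofReal (mul_nonneg (Real.exp_nonneg x0) hS)]

end MomExp
theorem moments_of_exponential_coefficient_distribution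
    (b : ℕ → ℝ) (hb0 : b 0 = 0) (hbnn : ∀ n, 0 ≤ b n)
    (k : ℕ) (hsum : Summable (fun m : ℕ => b m * (m : ℝ) ^ k))
    (c : ℕ → ℝ) (hc0 : c 0 = 1)
    (hc : ∀ n : ℕ, 1 ≤ n → (n : ℝ) * c n = ∑ m ∈ Finset.Icc 1 n, (m : ℝ) * b m * c (n - m)) :
    (∀ n, 0 ≤ c n) ∧
    Summable (fun n : ℕ => c n * (n : ℝ) ^ k) ∧
    ∑' n : ℕ, c n = Real.exp (∑' m : ℕ, b m) ∧
    ∑' n : ℕ, c n * (n : ℝ) ^ k =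
      Real.exp (∑' m : ℕ, b m) *
        ∑ p : Finpartition (Finset.univ : Finset (Fin k)),
          ∏ q ∈ p.parts, (∑' m : ℕ, b m * (m : ℝ) ^ q.card) := by
  have hcE := MomExp.c_eq_cE b hb0 c hc0 hc
  have hnn : ∀ n, 0 ≤ c n := fun n => (hcE n) ▸ MomExp.cE_nonneg b hbnn n
  have hfin := MomExp.final b hb0 hbnn k hsum
  have hsum0 : Summable (fun m : ℕ => b m * (m : ℝ) ^ 0) := by
    refine Summable.of_nonneg_of_le
      (fun m => mul_nonneg (hbnn m) (by positivity)) (fun m => ?_) hsum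
    rcases Nat.eq_zero_or_pos m with rfl | hm
    · simp [hb0]
    · refine mul_le_mul_of_nonneg_left ?_ (hbnn m)
      exact pow_le_pow_right₀ (by exact_mod_cast hm) (Nat.zero_le k)
  have hfin0 := MomExp.final b hb0 hbnn 0 hsum0
  refine ⟨hnn, ?_, ?_, ?_⟩
  · have heq : (fun n : ℕ => c n * (n : ℝ) ^ k)
        = fun n : ℕ => MomExp.cE b n * (n : ℝ) ^ k :=
      funext fun n => by rw [hcE n]
    rw [heq]
    exact hfin.1
  · have hparts0 : ∀ p : Finpartition (Finset.univ : Finset (Fin 0)), p.parts = ∅ := by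
      intro p
      rw [Finset.eq_empty_iff_forall_notMem]
      intro q hq
      obtain ⟨x, _⟩ := p.nonempty_of_mem_parts hq
      exact x.elim0
    have hcard1 : Fintype.card (Finpartition (Finset.univ : Finset (Fin 0))) = 1 := by
      haveI hss : Subsingleton (Finpartition (Finset.univ : Finset (Fin 0))) :=
        ⟨fun p1 p2 => Finpartition.ext (by rw [hparts0 p1, hparts0 p2])⟩
      haveI hne : Nonempty (Finpartition (Finset.univ : Finset (Fin 0))) :=
        ⟨(⊥ : Finpartition (Finset.univ : Finset (Fin 0)))⟩
      have h1 := Fintype.card_le_one_iff_subsingleton.2 hss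
      have h2 := Fintype.card_pos (α := Finpartition (Finset.univ : Finset (Fin 0)))
      omega
    have hcard : ∑ p : Finpartition (Finset.univ : Finset (Fin 0)),
        ∏ q ∈ p.parts, (∑' m : ℕ, b m * (m : ℝ) ^ q.card) = 1 := by
      rw [Finset.sum_congr rfl (fun p _ => by rw [hparts0 p, Finset.prod_empty]),
        Finset.sum_const, Finset.card_univ, hcard1, one_smul]
    calc ∑' n : ℕ, c n
        = ∑' n : ℕ, MomExp.cE b n * (n : ℝ) ^ 0 :=
          tsum_congr fun n => by rw [hcE n, pow_zero, mul_one]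
      _ = Real.exp (∑' m : ℕ, b m) * 1 := by rw [hfin0.2, hcard]
      _ = Real.exp (∑' m : ℕ, b m) := mul_one _
  · calc ∑' n : ℕ, c n * (n : ℝ) ^ k
        = ∑' n : ℕ, MomExp.cE b n * (n : ℝ) ^ k := tsum_congr fun n => by rw [hcE n]
      _ = _ := hfin.2
end

section
/- Let b : ℕ → ℝ with b 0 = 0 and let c be its exponential coefficient sequence (the coefficients of the formal power series exp(∑_{k≥1} (b k)·X^k)). Then for every n ∈ ℕ, c n = ∑_{λ ∈ Nat.Partition n} ∏_{v} (b v)^(a_v(λ)) / (a_v(λ))!, where the product runs over the distinct part sizes v of λ and a_v(λ) denotes the multiplicity of v in λ. -/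
open Finset

noncomputable def EF.pw (b : ℕ → ℝ) {n : ℕ} (p : Nat.Partition n) : ℝ :=
  ∏ v ∈ p.parts.toFinset,
    (b v) ^ (p.parts.count v) / (Nat.factorial (p.parts.count v) : ℝ)

noncomputable def EF.S (b : ℕ → ℝ) (n : ℕ) : ℝ := ∑ p : Nat.Partition n, EF.pw b p

namespace EF

variable (b : ℕ → ℝ)

lemma S_zero : S b 0 = 1 := by
  rw [S, Fintype.sum_unique]
  simp [pw]

lemma sum_of_mem {n m : ℕ} (p : Nat.Partition n) (hm : m ∈ p.parts) :
    m + (p.parts.erase m).sum = n := by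
  rw [← Multiset.sum_cons, Multiset.cons_erase hm, p.parts_sum]

/-- Erase one part of size `m` from a partition of `n`. -/
@[simps]
def erasePart {n m : ℕ} (p : Nat.Partition n) (hm : m ∈ p.parts) :
    Nat.Partition (n - m) where
  parts := p.parts.erase m
  parts_pos := fun hi => p.parts_pos (Multiset.mem_of_mem_erase hi)
  parts_sum := by have := sum_of_mem p hm; omega

/-- Insert a part of size `m` into a partition of `n - m`. -/
@[simps]
def insertPart {n m : ℕ} (hm1 : 1 ≤ m) (hmn : m ≤ n) (q : Nat.Partition (n - m)) :
    Nat.Partition n where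
  parts := m ::ₘ q.parts
  parts_pos := fun hi => by
    rcases Multiset.mem_cons.mp hi with h | h
    · omega
    · exact q.parts_pos h
  parts_sum := by rw [Multiset.sum_cons, q.parts_sum]; omega

lemma pw_congr_parts {n₁ n₂ : ℕ} (p : Nat.Partition n₁) (q : Nat.Partition n₂)
    (h : p.parts = q.parts) : pw b p = pw b q := by
  unfold pw; rw [h]

/-- key weight relation -/
lemma weight_erase {n m : ℕ} (p : Nat.Partition n) (hm : m ∈ p.parts) :
    (p.parts.count m : ℝ) * pw b p = b m * pw b (erasePart p hm) := by
  have hmem : m ∈ p.parts.toFinset := Multiset.mem_toFinset.mpr hm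
  set a := p.parts.count m with ha
  have ha1 : 1 ≤ a := Multiset.one_le_count_iff_mem.mpr hm
  -- the erased multiset
  have hcount_self : (p.parts.erase m).count m = a - 1 := by
    rw [Multiset.count_erase_self]
  have hcount_ne : ∀ v ≠ m, (p.parts.erase m).count v = p.parts.count v := by
    intro v hv
    rw [Multiset.count_erase_of_ne hv]
  -- express pw of the erased partition as a product over p.parts.toFinset
  have hsub : (p.parts.erase m).toFinset ⊆ p.parts.toFinset := by
    intro v hv
    exact Multiset.mem_toFinset.mpr (Multiset.mem_of_mem_erase (Multiset.mem_toFinset.mp hv))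
  have hpw_erase : pw b (erasePart p hm) =
      ∏ v ∈ p.parts.toFinset,
        (b v) ^ ((p.parts.erase m).count v) /
          (Nat.factorial ((p.parts.erase m).count v) : ℝ) := by
    unfold pw
    simp only [erasePart_parts]
    apply Finset.prod_subset hsub
    intro v _ hv
    have : (p.parts.erase m).count v = 0 := by
      by_contra h
      exact hv (Multiset.mem_toFinset.mpr (Multiset.count_pos.mp (Nat.pos_of_ne_zero h)))
    simp [this]
  rw [hpw_erase]
  unfold pw
  rw [← Finset.mul_prod_erase _ _ hmem, ← Finset.mul_prod_erase _ _ hmem]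
  have hrest : ∀ v ∈ p.parts.toFinset.erase m,
      (b v) ^ ((p.parts.erase m).count v) / (Nat.factorial ((p.parts.erase m).count v) : ℝ)
      = (b v) ^ (p.parts.count v) / (Nat.factorial (p.parts.count v) : ℝ) := by
    intro v hv
    rw [hcount_ne v (Finset.ne_of_mem_erase hv)]
  rw [Finset.prod_congr rfl hrest, hcount_self]
  -- now the scalar identity
  have heq : a = (a - 1) + 1 := by omega
  have hfac : (Nat.factorial a : ℝ) = (a : ℝ) * (Nat.factorial (a - 1) : ℝ) := by
    conv_lhs => rw [heq, Nat.factorial_succ, ← heq]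
    push_cast; ring
  have hpow : (b m) ^ a = b m * (b m) ^ (a - 1) := by
    conv_lhs => rw [heq, pow_succ]
    ring
  have hfa : (Nat.factorial (a-1) : ℝ) ≠ 0 := Nat.cast_ne_zero.mpr (Nat.factorial_ne_zero _)
  have haR : (a : ℝ) ≠ 0 := Nat.cast_ne_zero.mpr (by omega)
  rw [← mul_assoc, ← mul_assoc]
  congr 1
  rw [hfac, hpow]
  field_simp


lemma insert_erase {n m : ℕ} (hm1 : 1 ≤ m) (hmn : m ≤ n) (p : Nat.Partition n)
    (hm : m ∈ p.parts) : insertPart hm1 hmn (erasePart p hm) = p := by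
  apply Nat.Partition.ext
  simp [insertPart, erasePart, Multiset.cons_erase hm]

lemma erase_insert {n m : ℕ} (hm1 : 1 ≤ m) (hmn : m ≤ n) (q : Nat.Partition (n - m))
    (hm : m ∈ (insertPart hm1 hmn q).parts) :
    erasePart (insertPart hm1 hmn q) hm = q := by
  apply Nat.Partition.ext
  simp [insertPart, erasePart]

lemma count_sum_eq {n m : ℕ} (hm1 : 1 ≤ m) (hmn : m ≤ n) :
    ∑ p : Nat.Partition n, (p.parts.count m : ℝ) * pw b p = b m * S b (n - m) := by
  classical
  have h1 : ∑ p : Nat.Partition n, (p.parts.count m : ℝ) * pw b p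
      = ∑ p ∈ Finset.univ.filter (fun p : Nat.Partition n => m ∈ p.parts),
          (p.parts.count m : ℝ) * pw b p := by
    symm
    apply Finset.sum_filter_of_ne
    intro p _ hp
    by_contra h
    have h0 : p.parts.count m = 0 := Multiset.count_eq_zero.mpr h
    rw [h0] at hp
    simp at hp
  rw [h1, S, Finset.mul_sum]
  refine Finset.sum_bij'
    (fun p hp => erasePart p ((Finset.mem_filter.mp hp).2))
    (fun q _ => insertPart hm1 hmn q) ?_ ?_ ?_ ?_ ?_
  · intro a ha; exact Finset.mem_univ _
  · intro q hq
    simp only [Finset.mem_filter, Finset.mem_univ, true_and, insertPart]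
    exact Multiset.mem_cons_self m _
  · intro p hp
    exact insert_erase hm1 hmn p _
  · intro q hq
    exact erase_insert hm1 hmn q _
  · intro p hp
    exact weight_erase b p (Finset.mem_filter.mp hp).2

lemma S_rec (n : ℕ) (hn : 1 ≤ n) :
    (n : ℝ) * S b n = ∑ m ∈ Finset.Icc 1 n, (m : ℝ) * b m * S b (n - m) := by
  classical
  have step1 : ∀ p : Nat.Partition n,
      (n : ℝ) * pw b p = ∑ m ∈ Finset.Icc 1 n, (m : ℝ) * (p.parts.count m : ℝ) * pw b p := by
    intro p
    have hsub : p.parts.toFinset ⊆ Finset.Icc 1 n := by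
      intro v hv
      have hv' := Multiset.mem_toFinset.mp hv
      have h1 : 0 < v := p.parts_pos hv'
      have h2 : v + (p.parts.erase v).sum = n := sum_of_mem p hv'
      exact Finset.mem_Icc.mpr ⟨h1, by omega⟩
    have hsum : (n : ℝ) = ∑ v ∈ p.parts.toFinset, (v : ℝ) * (p.parts.count v : ℝ) := by
      have h2 : n = ∑ v ∈ p.parts.toFinset, p.parts.count v * v := by
        conv_lhs => rw [← p.parts_sum, Finset.sum_multiset_count]
        simp [smul_eq_mul]
      have h3 : (n : ℝ) = ((∑ v ∈ p.parts.toFinset, p.parts.count v * v : ℕ) : ℝ) := by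
        exact_mod_cast congrArg (Nat.cast (R := ℝ)) h2
      rw [h3]
      push_cast
      exact Finset.sum_congr rfl (fun v _ => by ring)
    calc (n : ℝ) * pw b p
        = ∑ v ∈ p.parts.toFinset, (v : ℝ) * (p.parts.count v : ℝ) * pw b p := by
          rw [hsum, Finset.sum_mul]
      _ = ∑ m ∈ Finset.Icc 1 n, (m : ℝ) * (p.parts.count m : ℝ) * pw b p := by
          apply Finset.sum_subset hsub
          intro v _ hv
          have h0 : p.parts.count v = 0 :=
            Multiset.count_eq_zero.mpr (fun h => hv (Multiset.mem_toFinset.mpr h))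
          rw [h0]
          push_cast
          ring
  calc (n : ℝ) * S b n = ∑ p : Nat.Partition n, (n : ℝ) * pw b p := by
        rw [S, Finset.mul_sum]
    _ = ∑ p : Nat.Partition n, ∑ m ∈ Finset.Icc 1 n,
          (m : ℝ) * (p.parts.count m : ℝ) * pw b p := by
        exact Finset.sum_congr rfl (fun p _ => step1 p)
    _ = ∑ m ∈ Finset.Icc 1 n, ∑ p : Nat.Partition n,
          (m : ℝ) * (p.parts.count m : ℝ) * pw b p := Finset.sum_comm
    _ = ∑ m ∈ Finset.Icc 1 n, (m : ℝ) * b m * S b (n - m) := by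
        refine Finset.sum_congr rfl (fun m hm => ?_)
        obtain ⟨hm1, hmn⟩ := Finset.mem_Icc.mp hm
        calc ∑ p : Nat.Partition n, (m : ℝ) * (p.parts.count m : ℝ) * pw b p
            = (m : ℝ) * ∑ p : Nat.Partition n, (p.parts.count m : ℝ) * pw b p := by
              rw [Finset.mul_sum]
              exact Finset.sum_congr rfl (fun p _ => by ring)
          _ = (m : ℝ) * (b m * S b (n - m)) := by rw [count_sum_eq b hm1 hmn]
          _ = (m : ℝ) * b m * S b (n - m) := by ring

end EF

theorem exponential_formula_for_coefficients
    (b : ℕ → ℝ) (hb0 : b 0 = 0)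
    (c : ℕ → ℝ) (hc0 : c 0 = 1)
    (hc : ∀ n : ℕ, 1 ≤ n → (n : ℝ) * c n = ∑ m ∈ Finset.Icc 1 n, (m : ℝ) * b m * c (n - m))
    (n : ℕ) :
    c n = ∑ lam : Nat.Partition n,
      ∏ v ∈ lam.parts.toFinset,
        (b v) ^ (lam.parts.count v) / (Nat.factorial (lam.parts.count v) : ℝ) := by
  suffices h : ∀ k, c k = EF.S b k by
    rw [h n]; rfl
  intro k
  induction k using Nat.strong_induction_on with
  | _ k ih =>
    rcases Nat.eq_zero_or_pos k with rfl | hk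
    · rw [hc0, EF.S_zero]
    · have h1 := hc k hk
      have h2 := EF.S_rec b k hk
      have hk0 : (k : ℝ) ≠ 0 := Nat.cast_ne_zero.mpr (by omega)
      have heq : (k : ℝ) * c k = (k : ℝ) * EF.S b k := by
        rw [h1, h2]
        refine Finset.sum_congr rfl (fun m hm => ?_)
        obtain ⟨hm1, hm2⟩ := Finset.mem_Icc.mp hm
        rw [ih (k - m) (by omega)]
      exact mul_left_cancel₀ hk0 heq
end

section
/- Let Z : ℕ → ℝ and ζ ∈ ℝ, and for a genus assignment g : ℕ → ℕ and a finset s ⊆ ℕ define ZG g s := Real.exp ζ · ∑_p ∏_{B ∈ p.parts} Z(∑_{i ∈ B} g i), the sum running over all finpartitions p of s. Then the following are equivalent: (i) for every g : ℕ → ℕ and all nonempty disjoint finsets s, t ⊆ ℕ one has ZG g (s ∪ t) = (ZG g s)·(ZG g t); (ii) Z n = 0 for every n ∈ ℕ. -/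
open Finset

/-- The full gravitational partition function on a disjoint union of connected surfaces
indexed by a finset `s ⊆ ℕ` with genus function `g`, built from the connected contributions
`Z` (depending only on the total genus) and the closed-manifold sum `ζ`. -/
noncomputable def gravZ (Z : ℕ → ℝ) (ζ : ℝ) (g : ℕ → ℕ) (s : Finset ℕ) : ℝ :=
  Real.exp ζ * ∑ p : Finpartition s, ∏ B ∈ p.parts, Z (∑ i ∈ B, g i)

lemma sum_finpartition_parts (s : Finset ℕ) (f : Finset (Finset ℕ) → ℝ) :
    ∑ p : Finpartition s, f p.parts
      = ∑ q ∈ (Finset.univ : Finset (Finpartition s)).image Finpartition.parts, f q :=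
  (Finset.sum_image (fun _ _ _ _ h => Finpartition.ext h)).symm

lemma parts_image_pair :
    (Finset.univ : Finset (Finpartition ({0,1} : Finset ℕ))).image Finpartition.parts
      = {{{0,1}}, {{0},{1}}} := by decide

set_option maxRecDepth 10000 in
lemma parts_image_triple :
    (Finset.univ : Finset (Finpartition ({0,1,2} : Finset ℕ))).image Finpartition.parts
      = {{{0,1,2}}, {{0,1},{2}}, {{0,2},{1}}, {{1,2},{0}}, {{0},{1},{2}}} := by decide

lemma parts_image_single (a : ℕ) :
    (Finset.univ : Finset (Finpartition ({a} : Finset ℕ))).image Finpartition.parts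
      = {{{a}}} := by
  letI : Unique (Finpartition ({a} : Finset ℕ)) :=
    (Finset.isAtom_singleton a).uniqueFinpartition
      (P := Finpartition.indiscrete (by simp [Finset.singleton_ne_empty]))
  rw [Finset.univ_unique, Finset.image_singleton]
  rfl

lemma gravZ_single (Z : ℕ → ℝ) (ζ : ℝ) (g : ℕ → ℕ) (a : ℕ) :
    gravZ Z ζ g {a} = Real.exp ζ * Z (g a) := by
  unfold gravZ
  rw [sum_finpartition_parts _ (fun q => ∏ B ∈ q, Z (∑ i ∈ B, g i)), parts_image_single]
  simp

theorem factorization_iff_vanishing (Z : ℕ → ℝ) (ζ : ℝ) :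
    (∀ (g : ℕ → ℕ) (s t : Finset ℕ), s.Nonempty → t.Nonempty → Disjoint s t →
        gravZ Z ζ g (s ∪ t) = gravZ Z ζ g s * gravZ Z ζ g t) ↔
      ∀ n : ℕ, Z n = 0 := by
  constructor
  · intro h
    have hE0 : Real.exp ζ ≠ 0 := Real.exp_ne_zero ζ
    -- Two-point factorization
    have key2 : ∀ m n : ℕ, Z (m + n) + Z m * Z n = Real.exp ζ * (Z m * Z n) := by
      intro m n
      have hu : ({0} : Finset ℕ) ∪ {1} = {0,1} := by decide
      have H := h (fun i => if i = 0 then m else n) {0} {1} ⟨0, by simp⟩ ⟨1, by simp⟩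
        (by simp)
      rw [hu, gravZ_single, gravZ_single] at H
      unfold gravZ at H
      beta_reduce at H
      rw [sum_finpartition_parts ({0,1} : Finset ℕ)
          (fun q => ∏ B ∈ q, Z (∑ i ∈ B, if i = 0 then m else n)),
        parts_image_pair] at H
      simp +decide [Finset.sum_insert, Finset.prod_insert, Finset.sum_pair] at H
      refine mul_left_cancel₀ hE0 ?_
      linear_combination H
    -- Three-point factorization with zero genus
    have key3 : Z 0 + 3 * (Z 0 * Z 0) + Z 0 * Z 0 * Z 0
        = Real.exp ζ * ((Z 0 + Z 0 * Z 0) * Z 0) := by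
      have hu : ({0,1} : Finset ℕ) ∪ {2} = {0,1,2} := by decide
      have H := h (fun _ => 0) {0,1} {2} ⟨0, by simp⟩ ⟨2, by simp⟩ (by simp)
      rw [hu, gravZ_single] at H
      unfold gravZ at H
      beta_reduce at H
      rw [sum_finpartition_parts ({0,1,2} : Finset ℕ)
          (fun q => ∏ B ∈ q, Z (∑ _i ∈ B, 0)), parts_image_triple,
        sum_finpartition_parts ({0,1} : Finset ℕ)
          (fun q => ∏ B ∈ q, Z (∑ _i ∈ B, 0)), parts_image_pair] at H
      simp +decide [Finset.sum_insert, Finset.prod_insert] at H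
      refine mul_left_cancel₀ hE0 ?_
      linear_combination H
    have h00 := key2 0 0
    norm_num at h00
    have hx2 : Z 0 * Z 0 = 0 := by linear_combination key3 - h00 - Z 0 * h00
    have hx : Z 0 = 0 := mul_self_eq_zero.mp hx2
    intro n
    have hn := key2 n 0
    rw [hx] at hn
    simpa using hn
  · intro hZ g s t hs ht _
    have hzero : ∀ (u : Finset ℕ), u.Nonempty → gravZ Z ζ g u = 0 := by
      intro u hu
      unfold gravZ
      rw [Finset.sum_eq_zero, mul_zero]
      intro p _
      obtain ⟨B, hB⟩ := p.parts_nonempty (by simpa using hu.ne_empty)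
      exact Finset.prod_eq_zero hB (hZ _)
    rw [hzero _ (hs.mono Finset.subset_union_left), hzero _ hs, hzero _ ht, mul_zero]
end
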